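/- arXiv:2602.06461 — 7 statements merged into one kernel-verified Lean document; each statement's English description precedes it below -/
import Mathlib

section
/- Assume the abstract setting described in the context. Let μ > 0 satisfy M·c·μ^{ρ−1}·B ≤ 1/4, let τ ∈ (0,∞), and let g : (0,τ] → V be continuous with t^{αε}‖g(t)‖_V ≤ (3/4)μ for all t ∈ (0,τ]. Then there exists exactly one continuous u : (0,τ] → V such that sup_{t∈(0,τ]} t^{αε}‖u(t)‖_V ≤ μ and u is a mild solution with forcing g on (0,τ]. -/
open MeasureTheory Set Filter Topology intervalIntegral
open scoped ENNReal

/-- `u` is a mild solution with forcing `g` on the set `S ⊆ (0,∞)`: `u` is continuous on `S`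
and for every `t ∈ S` the Bochner integral `∫₀^t R(t-s) f(u(s)) ds` converges and
`u t = g t + ∫₀^t R(t-s) f(u(s)) ds`. -/
def IsMildSolutionOn {V W : Type*} [NormedAddCommGroup V] [NormedSpace ℝ V]
    [NormedAddCommGroup W] [NormedSpace ℝ W]
    (R : ℝ → W →L[ℝ] V) (f : V → W) (g u : ℝ → V) (S : Set ℝ) : Prop :=
  ContinuousOn u S ∧ ∀ t ∈ S,
    IntervalIntegrable (fun s => R (t - s) (f (u s))) volume 0 t ∧
    u t = g t + ∫ s in (0:ℝ)..t, R (t - s) (f (u s))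

/-- Auxiliary: pass from a bounded continuous function `w` on `(0,τ]` to the unweighted
function `t ↦ t^{-e} • w t`, extended by `0` off `(0,τ]`. -/
noncomputable def FPuu {V : Type*} [NormedAddCommGroup V] [NormedSpace ℝ V] (e τ : ℝ)
    (w : BoundedContinuousFunction (Set.Ioc (0:ℝ) τ) V) : ℝ → V :=
  fun s => if hs : s ∈ Set.Ioc (0:ℝ) τ then s ^ (-e) • w ⟨s, hs⟩ else 0

/-- Auxiliary: the (unweighted) fixed point map. -/
noncomputable def FPphi {V W : Type*} [NormedAddCommGroup V] [NormedSpace ℝ V]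
    [NormedAddCommGroup W] [NormedSpace ℝ W]
    (R : ℝ → W →L[ℝ] V) (f : V → W) (g : ℝ → V) (e τ : ℝ)
    (w : BoundedContinuousFunction (Set.Ioc (0:ℝ) τ) V) : ℝ → V :=
  fun t => g t + t • ∫ σ in (0:ℝ)..1, R (t*(1-σ)) (f (FPuu e τ w (t*σ)))

/-- **Part 1 of Theorem 1.1 (fixed-point core, local existence and uniqueness).**
Under the abstract setting, if `M c μ^{ρ-1} B ≤ 1/4` and `g : (0,τ] → V` is continuous with
`t^{αε} ‖g t‖ ≤ (3/4) μ`, there is exactly one continuous `u : (0,τ] → V` with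
`sup t^{αε} ‖u t‖ ≤ μ` which is a mild solution with forcing `g` on `(0,τ]`. -/
theorem local_fixed_point
    {V W : Type*} [NormedAddCommGroup V] [NormedSpace ℝ V] [CompleteSpace V]
    [NormedAddCommGroup W] [NormedSpace ℝ W] [CompleteSpace W]
    (ρ α ε M c B : ℝ)
    (hρ : 1 < ρ) (hα : 1 < α) (hε : 0 < ε) (hαρε : α * ρ * ε < 1)
    (hM : 0 < M) (hc : 0 < c)
    (R : ℝ → W →L[ℝ] V)
    (hRcont : ∀ w : W, ContinuousOn (fun t => R t w) (Ioi (0:ℝ)))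
    (hRbound : ∀ t > (0:ℝ), ∀ w : W, ‖R t w‖ ≤ M * t ^ (α * (ρ - 1) * ε - 1) * ‖w‖)
    (f : V → W) (hf0 : f 0 = 0)
    (hf : ∀ x y : V, ‖f x - f y‖ ≤ c * (‖x‖ ^ (ρ - 1) + ‖y‖ ^ (ρ - 1)) * ‖x - y‖)
    (hBint : IntervalIntegrable
      (fun s => (1 - s) ^ (α * (ρ - 1) * ε - 1) * s ^ (-(α * ρ * ε))) volume 0 1)
    (hB : B = ∫ s in (0:ℝ)..1, (1 - s) ^ (α * (ρ - 1) * ε - 1) * s ^ (-(α * ρ * ε)))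
    (μ : ℝ) (hμ : 0 < μ) (hsmall : M * c * μ ^ (ρ - 1) * B ≤ 1 / 4)
    (τ : ℝ) (hτ : 0 < τ)
    (g : ℝ → V) (hg : ContinuousOn g (Ioc 0 τ))
    (hgbdd : ∀ t ∈ Ioc (0:ℝ) τ, t ^ (α * ε) * ‖g t‖ ≤ 3 / 4 * μ) :
    ∃ u : ℝ → V,
      (IsMildSolutionOn R f g u (Ioc 0 τ) ∧
        ∀ t ∈ Ioc (0:ℝ) τ, t ^ (α * ε) * ‖u t‖ ≤ μ) ∧
      ∀ v : ℝ → V,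
        (IsMildSolutionOn R f g v (Ioc 0 τ) ∧
          ∀ t ∈ Ioc (0:ℝ) τ, t ^ (α * ε) * ‖v t‖ ≤ μ) →
        EqOn v u (Ioc 0 τ) := by
  classical
  have hα0 : (0:ℝ) < α := lt_trans one_pos hα
  have hρ1 : (0:ℝ) < ρ - 1 := by linarith
  have hB0 : 0 ≤ B := by
    rw [hB]
    apply intervalIntegral.integral_nonneg (by norm_num)
    intro s hs
    exact mul_nonneg (Real.rpow_nonneg (by linarith [hs.2]) _) (Real.rpow_nonneg hs.1 _)
  -- joint continuity of (t, w) ↦ R t w on (0,∞) × W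
  have hR2 : ContinuousOn (fun p : ℝ × W => R p.1 p.2) (Ioi (0:ℝ) ×ˢ (univ : Set W)) := by
    rintro ⟨t₀, w₀⟩ ⟨ht₀, -⟩
    have hfst : Tendsto (fun p : ℝ × W => p.1)
        (𝓝[Ioi (0:ℝ) ×ˢ (univ : Set W)] (t₀, w₀)) (𝓝[Ioi (0:ℝ)] t₀) := by
      apply tendsto_nhdsWithin_of_tendsto_nhds_of_eventually_within
      · exact (continuous_fst.tendsto _).mono_left nhdsWithin_le_nhds
      · exact eventually_mem_nhdsWithin.mono fun p hp => hp.1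
    have h1 : Tendsto (fun p : ℝ × W => R p.1 w₀)
        (𝓝[Ioi (0:ℝ) ×ˢ (univ : Set W)] (t₀, w₀)) (𝓝 (R t₀ w₀)) := by
      exact ((hRcont w₀ t₀ ht₀).tendsto).comp hfst
    have h2 : Tendsto (fun p : ℝ × W => R p.1 p.2 - R p.1 w₀)
        (𝓝[Ioi (0:ℝ) ×ˢ (univ : Set W)] (t₀, w₀)) (𝓝 0) := by
      apply squeeze_zero_norm'
        (a := fun p : ℝ × W => M * p.1 ^ (α*(ρ-1)*ε - 1) * ‖p.2 - w₀‖)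
      · refine eventually_mem_nhdsWithin.mono fun p hp => ?_
        rw [← map_sub]
        exact hRbound p.1 hp.1 (p.2 - w₀)
      · have hcont : Tendsto (fun p : ℝ × W => M * p.1 ^ (α*(ρ-1)*ε - 1) * ‖p.2 - w₀‖)
            (𝓝 (t₀, w₀)) (𝓝 (M * t₀ ^ (α*(ρ-1)*ε - 1) * ‖w₀ - w₀‖)) := by
          refine Tendsto.mul (Tendsto.mul tendsto_const_nhds ?_) ?_
          · exact (Real.continuousAt_rpow_const t₀ _ (Or.inl (ne_of_gt ht₀))).comp
              (x := (t₀, w₀)) continuousAt_fst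
          · exact ((continuous_snd.sub continuous_const).norm).continuousAt
        have := hcont.mono_left (nhdsWithin_le_nhds (s := Ioi (0:ℝ) ×ˢ (univ : Set W)))
        simpa using this
    have := h2.add h1
    simpa [ContinuousWithinAt] using this
  -- continuity of f
  have hfcont : Continuous f := by
    rw [continuous_iff_continuousAt]
    intro x₀
    have hb : Tendsto (fun y : V => c * (‖y‖ ^ (ρ-1) + ‖x₀‖ ^ (ρ-1)) * ‖y - x₀‖)
        (𝓝 x₀) (𝓝 0) := by
      have hcn : Continuous (fun y : V => c * (‖y‖ ^ (ρ-1) + ‖x₀‖ ^ (ρ-1)) * ‖y - x₀‖) :=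
        (continuous_const.mul ((continuous_norm.rpow_const
          (fun y => Or.inr hρ1.le)).add continuous_const)).mul
          ((continuous_id.sub continuous_const).norm)
      have h0 := (hcn.continuousAt (x := x₀)).tendsto
      simpa using h0
    have key : Tendsto (fun y => f y - f x₀) (𝓝 x₀) (𝓝 0) :=
      squeeze_zero_norm' (Eventually.of_forall fun y => hf y x₀) hb
    have h2 := (tendsto_const_nhds : Tendsto (fun _ : V => f x₀) (𝓝 x₀) (𝓝 (f x₀))).add key
    simpa [ContinuousAt] using h2
  have hfnorm : ∀ x : V, ‖f x‖ ≤ c * ‖x‖ ^ (ρ-1) * ‖x‖ := by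
    intro x
    have h0 := hf x 0
    simpa [hf0, Real.zero_rpow (ne_of_gt hρ1)] using h0
  -- bound on f ∘ u for weighted-bounded u
  have hfb : ∀ (u : ℝ → V) (m : ℝ), 0 ≤ m →
      (∀ s ∈ Ioc (0:ℝ) τ, ‖u s‖ ≤ m * s ^ (-(α*ε))) →
      ∀ s ∈ Ioc (0:ℝ) τ, ‖f (u s)‖ ≤ (c * m ^ (ρ-1) * m) * s ^ (-(α*ρ*ε)) := by
    intro u m hm hu s hs
    have hs0 : (0:ℝ) < s := hs.1
    have hsp : (0:ℝ) ≤ s ^ (-(α*ε)) := Real.rpow_nonneg hs0.le _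
    have hmx : 0 ≤ m * s ^ (-(α*ε)) := mul_nonneg hm hsp
    have h2 : ‖u s‖ ^ (ρ-1) ≤ (m * s ^ (-(α*ε))) ^ (ρ-1) :=
      Real.rpow_le_rpow (norm_nonneg _) (hu s hs) hρ1.le
    have h1 : ‖f (u s)‖ ≤ c * (m * s ^ (-(α*ε))) ^ (ρ-1) * (m * s ^ (-(α*ε))) := by
      refine (hfnorm _).trans ?_
      calc c * ‖u s‖ ^ (ρ-1) * ‖u s‖
          ≤ c * (m * s ^ (-(α*ε))) ^ (ρ-1) * ‖u s‖ :=
            mul_le_mul_of_nonneg_right (mul_le_mul_of_nonneg_left h2 hc.le) (norm_nonneg _)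
        _ ≤ c * (m * s ^ (-(α*ε))) ^ (ρ-1) * (m * s ^ (-(α*ε))) :=
            mul_le_mul_of_nonneg_left (hu s hs)
              (mul_nonneg hc.le (Real.rpow_nonneg hmx _))
    refine h1.trans_eq ?_
    rw [Real.mul_rpow hm hsp, ← Real.rpow_mul hs0.le]
    have h3 : s ^ (-(α*ε) * (ρ-1)) * s ^ (-(α*ε)) = s ^ (-(α*ρ*ε)) := by
      rw [← Real.rpow_add hs0]; congr 1; ring
    calc c * (m ^ (ρ-1) * s ^ (-(α*ε) * (ρ-1))) * (m * s ^ (-(α*ε)))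
        = (c * m ^ (ρ-1) * m) * (s ^ (-(α*ε) * (ρ-1)) * s ^ (-(α*ε))) := by ring
      _ = (c * m ^ (ρ-1) * m) * s ^ (-(α*ρ*ε)) := by rw [h3]
  -- difference bound
  have hfdiff : ∀ (u v : ℝ → V) (m d : ℝ), 0 ≤ m → 0 ≤ d →
      (∀ s ∈ Ioc (0:ℝ) τ, ‖u s‖ ≤ m * s ^ (-(α*ε))) →
      (∀ s ∈ Ioc (0:ℝ) τ, ‖v s‖ ≤ m * s ^ (-(α*ε))) →
      (∀ s ∈ Ioc (0:ℝ) τ, ‖u s - v s‖ ≤ d * s ^ (-(α*ε))) →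
      ∀ s ∈ Ioc (0:ℝ) τ, ‖f (u s) - f (v s)‖ ≤ (2 * c * m ^ (ρ-1) * d) * s ^ (-(α*ρ*ε)) := by
    intro u v m d hm hd hu hv huv s hs
    have hs0 : (0:ℝ) < s := hs.1
    have hsp : (0:ℝ) ≤ s ^ (-(α*ε)) := Real.rpow_nonneg hs0.le _
    have hmx : 0 ≤ m * s ^ (-(α*ε)) := mul_nonneg hm hsp
    have h2u : ‖u s‖ ^ (ρ-1) ≤ (m * s ^ (-(α*ε))) ^ (ρ-1) :=
      Real.rpow_le_rpow (norm_nonneg _) (hu s hs) hρ1.le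
    have h2v : ‖v s‖ ^ (ρ-1) ≤ (m * s ^ (-(α*ε))) ^ (ρ-1) :=
      Real.rpow_le_rpow (norm_nonneg _) (hv s hs) hρ1.le
    have h1 : ‖f (u s) - f (v s)‖
        ≤ c * (2 * (m * s ^ (-(α*ε))) ^ (ρ-1)) * (d * s ^ (-(α*ε))) := by
      refine (hf (u s) (v s)).trans ?_
      have hsum : ‖u s‖ ^ (ρ-1) + ‖v s‖ ^ (ρ-1) ≤ 2 * (m * s ^ (-(α*ε))) ^ (ρ-1) := by
        linarith
      calc c * (‖u s‖ ^ (ρ-1) + ‖v s‖ ^ (ρ-1)) * ‖u s - v s‖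
          ≤ c * (2 * (m * s ^ (-(α*ε))) ^ (ρ-1)) * ‖u s - v s‖ :=
            mul_le_mul_of_nonneg_right (mul_le_mul_of_nonneg_left hsum hc.le) (norm_nonneg _)
        _ ≤ c * (2 * (m * s ^ (-(α*ε))) ^ (ρ-1)) * (d * s ^ (-(α*ε))) := by
            refine mul_le_mul_of_nonneg_left (huv s hs) ?_
            have : (0:ℝ) ≤ (m * s ^ (-(α*ε))) ^ (ρ-1) := Real.rpow_nonneg hmx _
            nlinarith
    refine h1.trans_eq ?_
    rw [Real.mul_rpow hm hsp, ← Real.rpow_mul hs0.le]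
    have h3 : s ^ (-(α*ε) * (ρ-1)) * s ^ (-(α*ε)) = s ^ (-(α*ρ*ε)) := by
      rw [← Real.rpow_add hs0]; congr 1; ring
    calc c * (2 * (m ^ (ρ-1) * s ^ (-(α*ε) * (ρ-1)))) * (d * s ^ (-(α*ε)))
        = (2 * c * m ^ (ρ-1) * d) * (s ^ (-(α*ε) * (ρ-1)) * s ^ (-(α*ε))) := by ring
      _ = (2 * c * m ^ (ρ-1) * d) * s ^ (-(α*ρ*ε)) := by rw [h3]
  -- ae facts on the unit interval
  have aeIoo : ∀ᵐ σ ∂(volume.restrict (uIoc (0:ℝ) 1)), σ ∈ Ioo (0:ℝ) 1 := by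
    rw [uIoc_of_le (by norm_num : (0:ℝ) ≤ 1), ← Measure.restrict_congr_set Ioo_ae_eq_Ioc]
    exact ae_restrict_mem measurableSet_Ioo
  have hae1 : ∀ᵐ σ ∂(volume : Measure ℝ), σ ≠ 1 := by
    refine ae_iff.mpr ?_
    simp only [not_not, setOf_eq_eq_singleton]
    exact measure_singleton 1
  -- pointwise bound on the σ-integrand
  have keyPB : ∀ (h : ℝ → W) (D : ℝ),
      (∀ s ∈ Ioc (0:ℝ) τ, ‖h s‖ ≤ D * s ^ (-(α*ρ*ε))) →
      ∀ t ∈ Ioc (0:ℝ) τ, ∀ σ ∈ Ioo (0:ℝ) 1,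
      ‖R (t*(1-σ)) (h (t*σ))‖ ≤
        (M * D * t ^ (-(α*ε)-1)) * ((1-σ) ^ (α*(ρ-1)*ε-1) * σ ^ (-(α*ρ*ε))) := by
    intro h D hhb t ht σ hσ
    have ht0 : (0:ℝ) < t := ht.1
    have hσ0 : (0:ℝ) < σ := hσ.1
    have hσ1 : (0:ℝ) < 1 - σ := by linarith [hσ.2]
    have hpos : (0:ℝ) < t * (1 - σ) := mul_pos ht0 hσ1
    have hmem : t * σ ∈ Ioc (0:ℝ) τ :=
      ⟨mul_pos ht0 hσ0, le_trans (mul_le_of_le_one_right ht0.le hσ.2.le) ht.2⟩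
    have e1 := hRbound (t*(1-σ)) hpos (h (t*σ))
    have e2 := hhb (t*σ) hmem
    calc ‖R (t*(1-σ)) (h (t*σ))‖
        ≤ M * (t*(1-σ)) ^ (α*(ρ-1)*ε-1) * ‖h (t*σ)‖ := e1
      _ ≤ M * (t*(1-σ)) ^ (α*(ρ-1)*ε-1) * (D * (t*σ) ^ (-(α*ρ*ε))) :=
          mul_le_mul_of_nonneg_left e2 (mul_nonneg hM.le (Real.rpow_nonneg hpos.le _))
      _ = (M * D * t ^ (-(α*ε)-1)) * ((1-σ) ^ (α*(ρ-1)*ε-1) * σ ^ (-(α*ρ*ε))) := by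
          rw [Real.mul_rpow ht0.le hσ1.le, Real.mul_rpow ht0.le hσ0.le]
          have h3 : t ^ (α*(ρ-1)*ε-1) * t ^ (-(α*ρ*ε)) = t ^ (-(α*ε)-1) := by
            rw [← Real.rpow_add ht0]; congr 1; ring
          calc M * (t ^ (α*(ρ-1)*ε-1) * (1-σ) ^ (α*(ρ-1)*ε-1))
                * (D * (t ^ (-(α*ρ*ε)) * σ ^ (-(α*ρ*ε))))
              = M * D * (t ^ (α*(ρ-1)*ε-1) * t ^ (-(α*ρ*ε)))
                * ((1-σ) ^ (α*(ρ-1)*ε-1) * σ ^ (-(α*ρ*ε))) := by ring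
            _ = _ := by rw [h3]
  -- continuity in σ of the integrand
  have keyC : ∀ (h : ℝ → W), ContinuousOn h (Ioc 0 τ) → ∀ t ∈ Ioc (0:ℝ) τ,
      ContinuousOn (fun σ => R (t*(1-σ)) (h (t*σ))) (Ioo 0 1) := by
    intro h hh t ht
    have hmap : MapsTo (fun σ : ℝ => (t*(1-σ), h (t*σ))) (Ioo 0 1)
        (Ioi (0:ℝ) ×ˢ (univ : Set W)) := by
      intro σ hσ
      exact ⟨mul_pos ht.1 (by linarith [hσ.2] : (0:ℝ) < 1 - σ), mem_univ _⟩
    have hmap2 : MapsTo (fun σ : ℝ => t*σ) (Ioo 0 1) (Ioc 0 τ) := fun σ hσ =>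
      ⟨mul_pos ht.1 hσ.1, le_trans (mul_le_of_le_one_right ht.1.le hσ.2.le) ht.2⟩
    have hinner : ContinuousOn (fun σ : ℝ => (t*(1-σ), h (t*σ))) (Ioo 0 1) := by
      apply ContinuousOn.prodMk
      · exact (continuous_const.mul (continuous_const.sub continuous_id)).continuousOn
      · exact hh.comp (continuous_const.mul continuous_id).continuousOn hmap2
    exact hR2.comp hinner hmap
  have keyAESM : ∀ (h : ℝ → W), ContinuousOn h (Ioc 0 τ) → ∀ t ∈ Ioc (0:ℝ) τ,
      AEStronglyMeasurable (fun σ => R (t*(1-σ)) (h (t*σ)))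
        (volume.restrict (uIoc (0:ℝ) 1)) := by
    intro h hh t ht
    rw [uIoc_of_le (by norm_num : (0:ℝ) ≤ 1), ← Measure.restrict_congr_set Ioo_ae_eq_Ioc]
    exact (keyC h hh t ht).aestronglyMeasurable measurableSet_Ioo
  have keyInt : ∀ (h : ℝ → W) (D : ℝ), ContinuousOn h (Ioc 0 τ) →
      (∀ s ∈ Ioc (0:ℝ) τ, ‖h s‖ ≤ D * s ^ (-(α*ρ*ε))) →
      ∀ t ∈ Ioc (0:ℝ) τ,
      IntervalIntegrable (fun σ => R (t*(1-σ)) (h (t*σ))) volume 0 1 := by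
    intro h D hh hhb t ht
    refine (hBint.const_mul (M * D * t ^ (-(α*ε)-1))).mono_fun'
      (keyAESM h hh t ht) ?_
    exact aeIoo.mono fun σ hσ => keyPB h D hhb t ht σ hσ
  have keyNorm : ∀ (h : ℝ → W) (D : ℝ), 0 ≤ D → ContinuousOn h (Ioc 0 τ) →
      (∀ s ∈ Ioc (0:ℝ) τ, ‖h s‖ ≤ D * s ^ (-(α*ρ*ε))) →
      ∀ t ∈ Ioc (0:ℝ) τ,
      ‖∫ σ in (0:ℝ)..1, R (t*(1-σ)) (h (t*σ))‖ ≤ M * D * B * t ^ (-(α*ε)-1) := by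
    intro h D hD hh hhb t ht
    have hC : 0 ≤ M * D * t ^ (-(α*ε)-1) :=
      mul_nonneg (mul_nonneg hM.le hD) (Real.rpow_nonneg ht.1.le _)
    have h1 := intervalIntegral.norm_integral_le_abs_of_norm_le
      (μ := volume) (f := fun σ => R (t*(1-σ)) (h (t*σ)))
      (g := fun σ => (M * D * t ^ (-(α*ε)-1)) * ((1-σ) ^ (α*(ρ-1)*ε-1) * σ ^ (-(α*ρ*ε))))
      (aeIoo.mono fun σ hσ => keyPB h D hhb t ht σ hσ)
      (hBint.const_mul _)
    rw [intervalIntegral.integral_const_mul, ← hB,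
      abs_of_nonneg (mul_nonneg hC hB0)] at h1
    exact h1.trans_eq (by ring)
  -- change of variables s = tσ
  have keyCV : ∀ (h : ℝ → W) (D : ℝ), ContinuousOn h (Ioc 0 τ) →
      (∀ s ∈ Ioc (0:ℝ) τ, ‖h s‖ ≤ D * s ^ (-(α*ρ*ε))) →
      ∀ t ∈ Ioc (0:ℝ) τ,
      IntervalIntegrable (fun s => R (t-s) (h s)) volume 0 t ∧
      (∫ s in (0:ℝ)..t, R (t-s) (h s)) = t • ∫ σ in (0:ℝ)..1, R (t*(1-σ)) (h (t*σ)) := by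
    intro h D hh hhb t ht
    have ht0 : (0:ℝ) < t := ht.1
    have hFt : (fun σ : ℝ => R (t*(1-σ)) (h (t*σ)))
        = fun σ : ℝ => R (t - t*σ) (h (t*σ)) := by
      funext σ; rw [mul_one_sub]
    have hI : IntervalIntegrable (fun σ : ℝ => R (t - t*σ) (h (t*σ))) volume 0 1 := by
      rw [← hFt]; exact keyInt h D hh hhb t ht
    constructor
    · have h2 := hI.comp_mul_left (c := t⁻¹)
      simp only [mul_inv_cancel_left₀ ht0.ne', zero_div, one_div, inv_inv] at h2
      exact h2
    · rw [hFt]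
      show _ = t • ∫ σ in (0:ℝ)..1, (fun s => R (t-s) (h s)) (t*σ)
      rw [intervalIntegral.smul_integral_comp_mul_left (fun s => R (t-s) (h s)) t,
        mul_zero, mul_one]
  -- continuity in t of the σ-integral
  have keyCont : ∀ (h : ℝ → W) (D : ℝ), 0 ≤ D → ContinuousOn h (Ioc 0 τ) →
      (∀ s ∈ Ioc (0:ℝ) τ, ‖h s‖ ≤ D * s ^ (-(α*ρ*ε))) →
      ContinuousOn (fun t => ∫ σ in (0:ℝ)..1, R (t*(1-σ)) (h (t*σ))) (Ioc 0 τ) := by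
    intro h D hD hh hhb t₀ ht₀
    have ht₀0 : (0:ℝ) < t₀ := ht₀.1
    apply intervalIntegral.continuousWithinAt_of_dominated_interval
      (bound := fun σ => (M * D * (t₀/2) ^ (-(α*ε)-1))
        * ((1-σ) ^ (α*(ρ-1)*ε-1) * σ ^ (-(α*ρ*ε))))
    · exact eventually_mem_nhdsWithin.mono fun t ht => keyAESM h hh t ht
    · have hev : ∀ᶠ t in 𝓝[Ioc (0:ℝ) τ] t₀, t ∈ Ioc (0:ℝ) τ ∧ t₀/2 < t :=
        eventually_mem_nhdsWithin.and
          ((eventually_gt_nhds (by linarith)).filter_mono nhdsWithin_le_nhds)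
      refine hev.mono ?_
      rintro t ⟨ht, ht2⟩
      refine hae1.mono ?_
      intro σ hσ1 hσΙ
      have hσ' : σ ∈ Ioc (0:ℝ) 1 := by
        rwa [uIoc_of_le (by norm_num : (0:ℝ) ≤ 1)] at hσΙ
      have hσ : σ ∈ Ioo (0:ℝ) 1 := ⟨hσ'.1, lt_of_le_of_ne hσ'.2 hσ1⟩
      refine (keyPB h D hhb t ht σ hσ).trans ?_
      have hmono : t ^ (-(α*ε)-1) ≤ (t₀/2) ^ (-(α*ε)-1) := by
        apply Real.rpow_le_rpow_of_nonpos (by linarith) ht2.le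
        nlinarith [mul_pos hα0 hε]
      apply mul_le_mul_of_nonneg_right
      · exact mul_le_mul_of_nonneg_left hmono (mul_nonneg hM.le hD)
      · exact mul_nonneg (Real.rpow_nonneg (by linarith [hσ.2]) _)
          (Real.rpow_nonneg hσ.1.le _)
    · exact hBint.const_mul _
    · refine hae1.mono ?_
      intro σ hσ1 hσΙ
      have hσ' : σ ∈ Ioc (0:ℝ) 1 := by
        rwa [uIoc_of_le (by norm_num : (0:ℝ) ≤ 1)] at hσΙ
      have hσ : σ ∈ Ioo (0:ℝ) 1 := ⟨hσ'.1, lt_of_le_of_ne hσ'.2 hσ1⟩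
      have h1σ : (0:ℝ) < 1 - σ := by linarith [hσ.2]
      have hpt : t₀ * σ ∈ Ioc (0:ℝ) τ :=
        ⟨mul_pos ht₀0 hσ.1, le_trans (mul_le_of_le_one_right ht₀0.le hσ.2.le) ht₀.2⟩
      have hmap2 : MapsTo (fun t : ℝ => t*σ) (Ioc (0:ℝ) τ) (Ioc (0:ℝ) τ) := fun t ht =>
        ⟨mul_pos ht.1 hσ.1, le_trans (mul_le_of_le_one_right ht.1.le hσ.2.le) ht.2⟩
      have hφ : ContinuousWithinAt (fun t : ℝ => (t*(1-σ), h (t*σ))) (Ioc (0:ℝ) τ) t₀ := by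
        apply ContinuousWithinAt.prodMk
        · exact (continuous_mul_right (1-σ)).continuousWithinAt
        · exact ContinuousWithinAt.comp (hh (t₀*σ) hpt)
            (continuous_mul_right σ).continuousWithinAt hmap2
      have hmem : (t₀*(1-σ), h (t₀*σ)) ∈ Ioi (0:ℝ) ×ˢ (univ : Set W) :=
        ⟨mul_pos ht₀0 h1σ, mem_univ _⟩
      have hmapS : MapsTo (fun t : ℝ => (t*(1-σ), h (t*σ))) (Ioc (0:ℝ) τ)
          (Ioi (0:ℝ) ×ˢ (univ : Set W)) := fun t ht => ⟨mul_pos ht.1 h1σ, mem_univ _⟩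
      exact ContinuousWithinAt.comp (f := fun t : ℝ => (t*(1-σ), h (t*σ)))
        (g := fun p : ℝ × W => R p.1 p.2) (hR2 _ hmem) hφ hmapS
  -- properties of FPuu
  have huu_apply : ∀ (w : BoundedContinuousFunction (Ioc (0:ℝ) τ) V) (s : ℝ)
      (hs : s ∈ Ioc (0:ℝ) τ), FPuu (α*ε) τ w s = s ^ (-(α*ε)) • w ⟨s, hs⟩ := by
    intro w s hs
    simp only [FPuu, dif_pos hs]
  have huuc : ∀ w : BoundedContinuousFunction (Ioc (0:ℝ) τ) V,
      ContinuousOn (FPuu (α*ε) τ w) (Ioc 0 τ) := by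
    intro w
    rw [continuousOn_iff_continuous_restrict]
    have hre : (Ioc (0:ℝ) τ).domRestrict (FPuu (α*ε) τ w)
        = fun s : Ioc (0:ℝ) τ => ((s:ℝ)) ^ (-(α*ε)) • w s := by
      funext s
      simp only [domRestrict_apply, FPuu, dif_pos s.2]
    rw [hre]
    exact (continuous_subtype_val.rpow_const (fun s => Or.inl (ne_of_gt s.2.1))).smul
      w.continuous
  have huub : ∀ w : BoundedContinuousFunction (Ioc (0:ℝ) τ) V, ∀ s ∈ Ioc (0:ℝ) τ,
      ‖FPuu (α*ε) τ w s‖ ≤ ‖w‖ * s ^ (-(α*ε)) := by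
    intro w s hs
    rw [huu_apply w s hs]
    calc ‖s ^ (-(α*ε)) • w ⟨s, hs⟩‖ = s ^ (-(α*ε)) * ‖w ⟨s, hs⟩‖ := by
          rw [norm_smul, Real.norm_eq_abs, abs_of_nonneg (Real.rpow_nonneg hs.1.le _)]
      _ ≤ s ^ (-(α*ε)) * ‖w‖ :=
          mul_le_mul_of_nonneg_left (w.norm_coe_le_norm _) (Real.rpow_nonneg hs.1.le _)
      _ = ‖w‖ * s ^ (-(α*ε)) := mul_comm _ _
  have huud : ∀ w v : BoundedContinuousFunction (Ioc (0:ℝ) τ) V, ∀ s ∈ Ioc (0:ℝ) τ,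
      ‖FPuu (α*ε) τ w s - FPuu (α*ε) τ v s‖ ≤ dist w v * s ^ (-(α*ε)) := by
    intro w v s hs
    rw [huu_apply w s hs, huu_apply v s hs, ← smul_sub]
    calc ‖s ^ (-(α*ε)) • (w ⟨s, hs⟩ - v ⟨s, hs⟩)‖
        = s ^ (-(α*ε)) * ‖w ⟨s, hs⟩ - v ⟨s, hs⟩‖ := by
          rw [norm_smul, Real.norm_eq_abs, abs_of_nonneg (Real.rpow_nonneg hs.1.le _)]
      _ ≤ s ^ (-(α*ε)) * dist w v := by
          apply mul_le_mul_of_nonneg_left _ (Real.rpow_nonneg hs.1.le _)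
          rw [← dist_eq_norm]
          exact BoundedContinuousFunction.dist_coe_le_dist _
      _ = dist w v * s ^ (-(α*ε)) := mul_comm _ _
  have hfw : ∀ w : BoundedContinuousFunction (Ioc (0:ℝ) τ) V, ∀ s ∈ Ioc (0:ℝ) τ,
      ‖f (FPuu (α*ε) τ w s)‖ ≤ (c * ‖w‖ ^ (ρ-1) * ‖w‖) * s ^ (-(α*ρ*ε)) :=
    fun w => hfb (FPuu (α*ε) τ w) ‖w‖ (norm_nonneg w) (huub w)
  have hfwc : ∀ w : BoundedContinuousFunction (Ioc (0:ℝ) τ) V,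
      ContinuousOn (fun s => f (FPuu (α*ε) τ w s)) (Ioc 0 τ) :=
    fun w => hfcont.comp_continuousOn (huuc w)
  have hDw : ∀ w : BoundedContinuousFunction (Ioc (0:ℝ) τ) V,
      0 ≤ c * ‖w‖ ^ (ρ-1) * ‖w‖ := fun w =>
    mul_nonneg (mul_nonneg hc.le (Real.rpow_nonneg (norm_nonneg _) _)) (norm_nonneg _)
  have hΦc : ∀ w : BoundedContinuousFunction (Ioc (0:ℝ) τ) V,
      ContinuousOn (FPphi R f g (α*ε) τ w) (Ioc 0 τ) := by
    intro w
    show ContinuousOn (fun t => g t + t • ∫ σ in (0:ℝ)..1,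
      R (t*(1-σ)) (f (FPuu (α*ε) τ w (t*σ)))) (Ioc 0 τ)
    exact hg.add (continuous_id.continuousOn.smul
      (keyCont (fun s => f (FPuu (α*ε) τ w s)) _ (hDw w) (hfwc w) (hfw w)))
  have hone : ∀ t : ℝ, 0 < t → t ^ (α*ε) * t * t ^ (-(α*ε)-1) = 1 := by
    intro t ht0
    rw [← Real.rpow_add_one ht0.ne', ← Real.rpow_add ht0,
      show α*ε+1+(-(α*ε)-1) = 0 by ring, Real.rpow_zero]
  have hSbnd : ∀ w : BoundedContinuousFunction (Ioc (0:ℝ) τ) V, ∀ t : Ioc (0:ℝ) τ,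
      ‖((t:ℝ) ^ (α*ε)) • FPphi R f g (α*ε) τ w t‖
        ≤ 3/4*μ + M * (c * ‖w‖ ^ (ρ-1) * ‖w‖) * B := by
    intro w t
    have htm : (t:ℝ) ∈ Ioc (0:ℝ) τ := t.2
    have ht0 : (0:ℝ) < (t:ℝ) := htm.1
    have hJ := keyNorm (fun s => f (FPuu (α*ε) τ w s)) _ (hDw w) (hfwc w) (hfw w)
      (t:ℝ) htm
    have hpow : (0:ℝ) ≤ (t:ℝ) ^ (α*ε) := Real.rpow_nonneg ht0.le _
    rw [norm_smul, Real.norm_eq_abs, abs_of_nonneg hpow]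
    show (t:ℝ)^(α*ε) * ‖g t + (t:ℝ) • ∫ σ in (0:ℝ)..1,
      R ((t:ℝ)*(1-σ)) (f (FPuu (α*ε) τ w ((t:ℝ)*σ)))‖ ≤ _
    calc (t:ℝ)^(α*ε) * ‖g t + (t:ℝ) • ∫ σ in (0:ℝ)..1,
        R ((t:ℝ)*(1-σ)) (f (FPuu (α*ε) τ w ((t:ℝ)*σ)))‖
        ≤ (t:ℝ)^(α*ε) * (‖g (t:ℝ)‖ + ‖(t:ℝ) • ∫ σ in (0:ℝ)..1,
          R ((t:ℝ)*(1-σ)) (f (FPuu (α*ε) τ w ((t:ℝ)*σ)))‖) :=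
          mul_le_mul_of_nonneg_left (norm_add_le _ _) hpow
      _ = (t:ℝ)^(α*ε) * ‖g (t:ℝ)‖ + (t:ℝ)^(α*ε) * ((t:ℝ) * ‖∫ σ in (0:ℝ)..1,
          R ((t:ℝ)*(1-σ)) (f (FPuu (α*ε) τ w ((t:ℝ)*σ)))‖) := by
          rw [norm_smul, Real.norm_eq_abs, abs_of_nonneg ht0.le]; ring
      _ ≤ 3/4*μ + (t:ℝ)^(α*ε) * ((t:ℝ) * (M * (c * ‖w‖ ^ (ρ-1) * ‖w‖) * B
          * (t:ℝ) ^ (-(α*ε)-1))) := by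
          refine add_le_add (hgbdd (t:ℝ) htm) ?_
          exact mul_le_mul_of_nonneg_left (mul_le_mul_of_nonneg_left hJ ht0.le) hpow
      _ = 3/4*μ + M * (c * ‖w‖ ^ (ρ-1) * ‖w‖) * B := by
          rw [show (t:ℝ)^(α*ε) * ((t:ℝ) * (M * (c * ‖w‖ ^ (ρ-1) * ‖w‖) * B
              * (t:ℝ) ^ (-(α*ε)-1)))
            = M * (c * ‖w‖ ^ (ρ-1) * ‖w‖) * B
              * ((t:ℝ)^(α*ε) * (t:ℝ) * (t:ℝ) ^ (-(α*ε)-1)) from by ring,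
            hone (t:ℝ) ht0, mul_one]
  have hScont : ∀ w : BoundedContinuousFunction (Ioc (0:ℝ) τ) V,
      Continuous (fun t : Ioc (0:ℝ) τ => ((t:ℝ) ^ (α*ε)) • FPphi R f g (α*ε) τ w t) := by
    intro w
    exact (continuous_subtype_val.rpow_const (fun t => Or.inl (ne_of_gt t.2.1))).smul
      (continuousOn_iff_continuous_restrict.mp (hΦc w))
  -- the weighted fixed point map
  let S : BoundedContinuousFunction (Ioc (0:ℝ) τ) V
      → BoundedContinuousFunction (Ioc (0:ℝ) τ) V :=
    fun w => BoundedContinuousFunction.ofNormedAddCommGroup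
      (fun t : Ioc (0:ℝ) τ => ((t:ℝ) ^ (α*ε)) • FPphi R f g (α*ε) τ w t)
      (hScont w) (3/4*μ + M * (c * ‖w‖ ^ (ρ-1) * ‖w‖) * B) (hSbnd w)
  have hSapp : ∀ (w : BoundedContinuousFunction (Ioc (0:ℝ) τ) V) (t : Ioc (0:ℝ) τ),
      S w t = ((t:ℝ) ^ (α*ε)) • FPphi R f g (α*ε) τ w t := fun w t => rfl
  have hball : ∀ w : BoundedContinuousFunction (Ioc (0:ℝ) τ) V, ‖w‖ ≤ μ → ‖S w‖ ≤ μ := by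
    intro w hw
    rw [BoundedContinuousFunction.norm_le hμ.le]
    intro t
    rw [hSapp]
    refine (hSbnd w t).trans ?_
    have h1 : c * ‖w‖ ^ (ρ-1) * ‖w‖ ≤ c * μ ^ (ρ-1) * μ := by
      apply mul_le_mul
        (mul_le_mul_of_nonneg_left (Real.rpow_le_rpow (norm_nonneg _) hw hρ1.le) hc.le)
        hw (norm_nonneg _)
      exact mul_nonneg hc.le (Real.rpow_nonneg hμ.le _)
    have h2 : M * (c * ‖w‖ ^ (ρ-1) * ‖w‖) * B ≤ M * (c * μ ^ (ρ-1) * μ) * B :=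
      mul_le_mul_of_nonneg_right (mul_le_mul_of_nonneg_left h1 hM.le) hB0
    have h3 : M * (c * μ ^ (ρ-1) * μ) * B ≤ 1/4 * μ := by
      calc M * (c * μ ^ (ρ-1) * μ) * B = (M * c * μ ^ (ρ-1) * B) * μ := by ring
        _ ≤ 1/4 * μ := mul_le_mul_of_nonneg_right hsmall hμ.le
    linarith
  have hcontr : ∀ w v : BoundedContinuousFunction (Ioc (0:ℝ) τ) V,
      ‖w‖ ≤ μ → ‖v‖ ≤ μ → dist (S w) (S v) ≤ 1/2 * dist w v := by
    intro w v hw hv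
    rw [BoundedContinuousFunction.dist_le (mul_nonneg (by norm_num) dist_nonneg)]
    intro t
    have htm : (t:ℝ) ∈ Ioc (0:ℝ) τ := t.2
    have ht0 : (0:ℝ) < (t:ℝ) := htm.1
    have hpow : (0:ℝ) ≤ (t:ℝ) ^ (α*ε) := Real.rpow_nonneg ht0.le _
    have hIw : IntervalIntegrable
        (fun σ => R ((t:ℝ)*(1-σ)) (f (FPuu (α*ε) τ w ((t:ℝ)*σ)))) volume 0 1 :=
      keyInt (fun s => f (FPuu (α*ε) τ w s)) _ (hfwc w) (hfw w) (t:ℝ) htm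
    have hIv : IntervalIntegrable
        (fun σ => R ((t:ℝ)*(1-σ)) (f (FPuu (α*ε) τ v ((t:ℝ)*σ)))) volume 0 1 :=
      keyInt (fun s => f (FPuu (α*ε) τ v s)) _ (hfwc v) (hfw v) (t:ℝ) htm
    have hsub : (∫ σ in (0:ℝ)..1, R ((t:ℝ)*(1-σ)) (f (FPuu (α*ε) τ w ((t:ℝ)*σ))))
        - (∫ σ in (0:ℝ)..1, R ((t:ℝ)*(1-σ)) (f (FPuu (α*ε) τ v ((t:ℝ)*σ))))
        = ∫ σ in (0:ℝ)..1, R ((t:ℝ)*(1-σ))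
            (f (FPuu (α*ε) τ w ((t:ℝ)*σ)) - f (FPuu (α*ε) τ v ((t:ℝ)*σ))) := by
      rw [← intervalIntegral.integral_sub hIw hIv]
      apply intervalIntegral.integral_congr
      intro σ _
      exact ((R ((t:ℝ)*(1-σ))).map_sub _ _).symm
    have hΦsub : FPphi R f g (α*ε) τ w (t:ℝ) - FPphi R f g (α*ε) τ v (t:ℝ)
        = (t:ℝ) • ∫ σ in (0:ℝ)..1, R ((t:ℝ)*(1-σ))
            (f (FPuu (α*ε) τ w ((t:ℝ)*σ)) - f (FPuu (α*ε) τ v ((t:ℝ)*σ))) := by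
      show g (t:ℝ) + (t:ℝ) • _ - (g (t:ℝ) + (t:ℝ) • _) = _
      rw [add_sub_add_left_eq_sub, ← smul_sub, hsub]
    have hDd : 0 ≤ 2 * c * μ ^ (ρ-1) * dist w v :=
      mul_nonneg (mul_nonneg (by linarith) (Real.rpow_nonneg hμ.le _)) dist_nonneg
    have hbw : ∀ s ∈ Ioc (0:ℝ) τ, ‖FPuu (α*ε) τ w s‖ ≤ μ * s ^ (-(α*ε)) := fun s hs =>
      (huub w s hs).trans (mul_le_mul_of_nonneg_right hw (Real.rpow_nonneg hs.1.le _))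
    have hbv : ∀ s ∈ Ioc (0:ℝ) τ, ‖FPuu (α*ε) τ v s‖ ≤ μ * s ^ (-(α*ε)) := fun s hs =>
      (huub v s hs).trans (mul_le_mul_of_nonneg_right hv (Real.rpow_nonneg hs.1.le _))
    have hN := keyNorm (fun s => f (FPuu (α*ε) τ w s) - f (FPuu (α*ε) τ v s))
      (2 * c * μ ^ (ρ-1) * dist w v) hDd
      ((hfwc w).sub (hfwc v))
      (hfdiff (FPuu (α*ε) τ w) (FPuu (α*ε) τ v) μ (dist w v) hμ.le dist_nonneg
        hbw hbv (huud w v))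
      (t:ℝ) htm
    rw [hSapp, hSapp, dist_eq_norm, ← smul_sub]
    calc ‖((t:ℝ) ^ (α*ε)) • (FPphi R f g (α*ε) τ w (t:ℝ) - FPphi R f g (α*ε) τ v (t:ℝ))‖
        = (t:ℝ)^(α*ε) * ((t:ℝ) * ‖∫ σ in (0:ℝ)..1, R ((t:ℝ)*(1-σ))
            (f (FPuu (α*ε) τ w ((t:ℝ)*σ)) - f (FPuu (α*ε) τ v ((t:ℝ)*σ)))‖) := by
          rw [hΦsub, norm_smul, norm_smul, Real.norm_eq_abs, Real.norm_eq_abs,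
            abs_of_nonneg hpow, abs_of_nonneg ht0.le]
      _ ≤ (t:ℝ)^(α*ε) * ((t:ℝ) * (M * (2 * c * μ ^ (ρ-1) * dist w v) * B
            * (t:ℝ) ^ (-(α*ε)-1))) :=
          mul_le_mul_of_nonneg_left (mul_le_mul_of_nonneg_left hN ht0.le) hpow
      _ = M * (2 * c * μ ^ (ρ-1) * dist w v) * B
            * ((t:ℝ)^(α*ε) * (t:ℝ) * (t:ℝ) ^ (-(α*ε)-1)) := by ring
      _ = 2*((M * c * μ ^ (ρ-1) * B) * dist w v) := by
          rw [hone (t:ℝ) ht0, mul_one]; ring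
      _ ≤ 2*((1/4) * dist w v) := by
          apply mul_le_mul_of_nonneg_left
            (mul_le_mul_of_nonneg_right hsmall dist_nonneg) (by norm_num)
      _ = 1/2 * dist w v := by ring
  -- Banach fixed point on the closed ball
  haveI hcompl : CompleteSpace
      ↥(Metric.closedBall (0 : BoundedContinuousFunction (↥(Ioc (0:ℝ) τ)) V) μ) :=
    IsClosed.completeSpace_coe (hs := Metric.isClosed_closedBall)
  haveI hne : Nonempty
      ↥(Metric.closedBall (0 : BoundedContinuousFunction (↥(Ioc (0:ℝ) τ)) V) μ) :=
    ⟨⟨0, Metric.mem_closedBall_self hμ.le⟩⟩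
  let F : ↥(Metric.closedBall (0 : BoundedContinuousFunction (↥(Ioc (0:ℝ) τ)) V) μ)
      → ↥(Metric.closedBall (0 : BoundedContinuousFunction (↥(Ioc (0:ℝ) τ)) V) μ) :=
    fun w => ⟨S w.1, mem_closedBall_zero_iff.mpr
      (hball w.1 (mem_closedBall_zero_iff.mp w.2))⟩
  have hF : ContractingWith (1/2 : NNReal) F := by
    constructor
    · rw [← NNReal.coe_lt_coe]; norm_num
    · apply LipschitzWith.of_dist_le_mul
      intro x y
      have hxy := hcontr x.1 y.1 (mem_closedBall_zero_iff.mp x.2)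
        (mem_closedBall_zero_iff.mp y.2)
      calc dist (F x) (F y) = dist (S x.1) (S y.1) := rfl
        _ ≤ 1/2 * dist x.1 y.1 := hxy
        _ = ((1/2 : NNReal) : ℝ) * dist x y := by
            rw [Subtype.dist_eq]; norm_num
  set wfix := ContractingWith.fixedPoint F hF with hwfix_def
  have hfix : F wfix = wfix := hF.fixedPoint_isFixedPt
  have hSfix : S wfix.1 = wfix.1 := congrArg Subtype.val hfix
  have hwμ : ‖wfix.1‖ ≤ μ := mem_closedBall_zero_iff.mp wfix.2
  have hueq : ∀ t : ℝ, ∀ ht : t ∈ Ioc (0:ℝ) τ,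
      FPuu (α*ε) τ wfix.1 t = FPphi R f g (α*ε) τ wfix.1 t := by
    intro t ht
    have h1 : wfix.1 ⟨t, ht⟩ = (t ^ (α*ε)) • FPphi R f g (α*ε) τ wfix.1 t := by
      conv_lhs => rw [← hSfix]
      exact hSapp _ _
    rw [huu_apply _ t ht, h1, smul_smul, ← Real.rpow_add ht.1, neg_add_cancel,
      Real.rpow_zero, one_smul]
  refine ⟨FPuu (α*ε) τ wfix.1, ⟨⟨huuc wfix.1, ?_⟩, ?_⟩, ?_⟩
  · -- mild solution equation
    intro t ht
    have hcv := keyCV (fun s => f (FPuu (α*ε) τ wfix.1 s)) _ (hfwc _) (hfw _) t ht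
    refine ⟨hcv.1, ?_⟩
    rw [hueq t ht]
    show g t + t • _ = g t + _
    rw [hcv.2]
  · -- the weighted bound
    intro t ht
    rw [huu_apply _ t ht]
    rw [norm_smul, Real.norm_eq_abs, abs_of_nonneg (Real.rpow_nonneg ht.1.le _),
      ← mul_assoc, ← Real.rpow_add ht.1, add_neg_cancel, Real.rpow_zero, one_mul]
    exact (wfix.1.norm_coe_le_norm _).trans hwμ
  · -- uniqueness
    rintro v ⟨⟨hvc, hvsol⟩, hvb⟩
    have hvb' : ∀ s ∈ Ioc (0:ℝ) τ, ‖v s‖ ≤ μ * s ^ (-(α*ε)) := by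
      intro s hs
      have h0 := hvb s hs
      have hrw : ‖v s‖ = s ^ (-(α*ε)) * (s ^ (α*ε) * ‖v s‖) := by
        rw [← mul_assoc, ← Real.rpow_add hs.1, neg_add_cancel, Real.rpow_zero, one_mul]
      rw [hrw]
      calc s ^ (-(α*ε)) * (s ^ (α*ε) * ‖v s‖) ≤ s ^ (-(α*ε)) * μ :=
            mul_le_mul_of_nonneg_left h0 (Real.rpow_nonneg hs.1.le _)
        _ = μ * s ^ (-(α*ε)) := mul_comm _ _
    have hvcr : Continuous (fun t : Ioc (0:ℝ) τ => ((t:ℝ) ^ (α*ε)) • v t) :=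
      (continuous_subtype_val.rpow_const (fun t => Or.inl (ne_of_gt t.2.1))).smul
        (continuousOn_iff_continuous_restrict.mp hvc)
    have hvbd : ∀ t : Ioc (0:ℝ) τ, ‖((t:ℝ) ^ (α*ε)) • v t‖ ≤ μ := by
      intro t
      rw [norm_smul, Real.norm_eq_abs, abs_of_nonneg (Real.rpow_nonneg t.2.1.le _)]
      exact hvb t t.2
    set wv := BoundedContinuousFunction.ofNormedAddCommGroup
      (fun t : Ioc (0:ℝ) τ => ((t:ℝ) ^ (α*ε)) • v t) hvcr μ hvbd with hwv_def
    have hwvμ : ‖wv‖ ≤ μ :=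
      BoundedContinuousFunction.norm_ofNormedAddCommGroup_le hvcr hμ.le hvbd
    have hwv_app : ∀ t : Ioc (0:ℝ) τ, wv t = ((t:ℝ) ^ (α*ε)) • v t := fun t => rfl
    have huuwv : ∀ s : ℝ, ∀ hs : s ∈ Ioc (0:ℝ) τ, FPuu (α*ε) τ wv s = v s := by
      intro s hs
      rw [huu_apply _ s hs, hwv_app, smul_smul, ← Real.rpow_add hs.1, neg_add_cancel,
        Real.rpow_zero, one_smul]
    have hSwv : S wv = wv := by
      ext t
      rw [hSapp, hwv_app]
      have htm : (t:ℝ) ∈ Ioc (0:ℝ) τ := t.2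
      have ht0 : (0:ℝ) < (t:ℝ) := htm.1
      congr 1
      have hJeq : (∫ σ in (0:ℝ)..1, R ((t:ℝ)*(1-σ)) (f (FPuu (α*ε) τ wv ((t:ℝ)*σ))))
          = ∫ σ in (0:ℝ)..1, R ((t:ℝ)*(1-σ)) (f (v ((t:ℝ)*σ))) := by
        apply intervalIntegral.integral_congr_ae
        apply Eventually.of_forall
        intro σ hσ
        have hσ' : σ ∈ Ioc (0:ℝ) 1 := by
          rwa [uIoc_of_le (by norm_num : (0:ℝ) ≤ 1)] at hσ
        have hmem : (t:ℝ)*σ ∈ Ioc (0:ℝ) τ :=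
          ⟨mul_pos ht0 hσ'.1, le_trans (mul_le_of_le_one_right ht0.le hσ'.2) htm.2⟩
        rw [huuwv _ hmem]
      have hcvv := keyCV (fun s => f (v s)) (c * μ ^ (ρ-1) * μ)
        (hfcont.comp_continuousOn hvc) (hfb v μ hμ.le hvb') (t:ℝ) htm
      have hveq := (hvsol (t:ℝ) htm).2
      show g (t:ℝ) + (t:ℝ) • _ = v (t:ℝ)
      rw [hJeq, ← hcvv.2]
      exact hveq.symm
    have hfixv : F ⟨wv, mem_closedBall_zero_iff.mpr hwvμ⟩
        = ⟨wv, mem_closedBall_zero_iff.mpr hwvμ⟩ := Subtype.ext hSwv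
    have heq : (⟨wv, mem_closedBall_zero_iff.mpr hwvμ⟩ :
        ↥(Metric.closedBall (0 : BoundedContinuousFunction (↥(Ioc (0:ℝ) τ)) V) μ)) = wfix :=
      hF.fixedPoint_unique' hfixv hfix
    have hwv_eq : wv = wfix.1 := congrArg Subtype.val heq
    intro t ht
    have h1 : wv ⟨t, ht⟩ = wfix.1 ⟨t, ht⟩ := by rw [hwv_eq]
    rw [hwv_app] at h1
    show v t = FPuu (α*ε) τ wfix.1 t
    rw [huu_apply _ t ht, ← h1, smul_smul, ← Real.rpow_add ht.1, neg_add_cancel,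
      Real.rpow_zero, one_smul]
end

section
/- Assume the abstract setting described in the context. Let μ > 0 satisfy M·c·μ^{ρ−1}·B ≤ 1/4, let τ ∈ (0,∞), let g : (0,τ] → V be continuous with t^{αε}‖g(t)‖_V ≤ (3/4)μ for all t ∈ (0,τ], and let u : (0,τ] → V be a mild solution with forcing g on (0,τ] satisfying sup_{t∈(0,τ]} t^{αε}‖u(t)‖_V ≤ μ. Then sup_{0<s≤t} s^{αε}‖u(s)‖_V ≤ (4/3) · sup_{0<s≤t} s^{αε}‖g(s)‖_V for every t ∈ (0,τ]; in particular, if lim_{t→0⁺} t^{αε}‖g(t)‖_V = 0, then lim_{t→0⁺} t^{αε}‖u(t)‖_V = 0. -/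
open MeasureTheory Set Filter Topology intervalIntegral
open scoped ENNReal

/-- **Weighted smallness estimate of Theorem 1.1(A).**
If `u` is a mild solution with forcing `g` on `(0,τ]` with `t^{αε}‖g t‖ ≤ (3/4)μ` and
`sup t^{αε}‖u t‖ ≤ μ`, then for every `t ∈ (0,τ]`,
`sup_{0<s≤t} s^{αε}‖u s‖ ≤ (4/3) sup_{0<s≤t} s^{αε}‖g s‖`; in particular if
`t^{αε}‖g t‖ → 0` as `t → 0⁺` then `t^{αε}‖u t‖ → 0` as `t → 0⁺`. -/
theorem weighted_smallness
    {V W : Type*} [NormedAddCommGroup V] [NormedSpace ℝ V] [CompleteSpace V]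
    [NormedAddCommGroup W] [NormedSpace ℝ W] [CompleteSpace W]
    (ρ α ε M c B : ℝ)
    (hρ : 1 < ρ) (hα : 1 < α) (hε : 0 < ε) (hαρε : α * ρ * ε < 1)
    (hM : 0 < M) (hc : 0 < c)
    (R : ℝ → W →L[ℝ] V)
    (hRcont : ∀ w : W, ContinuousOn (fun t => R t w) (Ioi (0:ℝ)))
    (hRbound : ∀ t > (0:ℝ), ∀ w : W, ‖R t w‖ ≤ M * t ^ (α * (ρ - 1) * ε - 1) * ‖w‖)
    (f : V → W) (hf0 : f 0 = 0)
    (hf : ∀ x y : V, ‖f x - f y‖ ≤ c * (‖x‖ ^ (ρ - 1) + ‖y‖ ^ (ρ - 1)) * ‖x - y‖)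
    (hBint : IntervalIntegrable
      (fun s => (1 - s) ^ (α * (ρ - 1) * ε - 1) * s ^ (-(α * ρ * ε))) volume 0 1)
    (hB : B = ∫ s in (0:ℝ)..1, (1 - s) ^ (α * (ρ - 1) * ε - 1) * s ^ (-(α * ρ * ε)))
    (μ : ℝ) (hμ : 0 < μ) (hsmall : M * c * μ ^ (ρ - 1) * B ≤ 1 / 4)
    (τ : ℝ) (hτ : 0 < τ)
    (g : ℝ → V) (hg : ContinuousOn g (Ioc 0 τ))
    (hgbdd : ∀ t ∈ Ioc (0:ℝ) τ, t ^ (α * ε) * ‖g t‖ ≤ 3 / 4 * μ)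
    (u : ℝ → V) (hu : IsMildSolutionOn R f g u (Ioc 0 τ))
    (hubdd : ∀ t ∈ Ioc (0:ℝ) τ, t ^ (α * ε) * ‖u t‖ ≤ μ) :
    (∀ t ∈ Ioc (0:ℝ) τ,
      sSup ((fun s => s ^ (α * ε) * ‖u s‖) '' Ioc 0 t) ≤
        4 / 3 * sSup ((fun s => s ^ (α * ε) * ‖g s‖) '' Ioc 0 t)) ∧
    (Tendsto (fun t => t ^ (α * ε) * ‖g t‖) (𝓝[>] 0) (𝓝 0) →
      Tendsto (fun t => t ^ (α * ε) * ‖u t‖) (𝓝[>] 0) (𝓝 0)) := by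
  obtain ⟨hucont, hmild⟩ := hu
  set a : ℝ := α * (ρ - 1) * ε - 1 with ha_def
  set b : ℝ := α * ρ * ε with hb_def
  have hρ1 : 0 < ρ - 1 := by linarith
  have hα0 : 0 < α := by linarith
  have haε : 0 < α * ε := by positivity
  have hB0 : 0 ≤ B := by
    rw [hB]
    refine intervalIntegral.integral_nonneg (by norm_num) (fun s hs => ?_)
    exact mul_nonneg (Real.rpow_nonneg (by linarith [hs.2]) _) (Real.rpow_nonneg hs.1 _)
  -- boundedness of the image sets
  have hKbdd : ∀ t : ℝ, t ≤ τ → BddAbove ((fun s => s ^ (α * ε) * ‖u s‖) '' Ioc 0 t) := by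
    intro t htτ
    exact ⟨μ, by rintro x ⟨s, hs, rfl⟩; exact hubdd s ⟨hs.1, hs.2.trans htτ⟩⟩
  have hGbdd : ∀ t : ℝ, t ≤ τ → BddAbove ((fun s => s ^ (α * ε) * ‖g s‖) '' Ioc 0 t) := by
    intro t htτ
    exact ⟨3 / 4 * μ, by rintro x ⟨s, hs, rfl⟩; exact hgbdd s ⟨hs.1, hs.2.trans htτ⟩⟩
  have hK0 : ∀ t ∈ Ioc (0:ℝ) τ, 0 ≤ sSup ((fun s => s ^ (α * ε) * ‖u s‖) '' Ioc 0 t) := by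
    intro t ht
    have h1 : (0:ℝ) ≤ t ^ (α * ε) * ‖u t‖ :=
      mul_nonneg (Real.rpow_nonneg ht.1.le _) (norm_nonneg _)
    exact h1.trans (le_csSup (hKbdd t ht.2) ⟨t, ⟨ht.1, le_refl t⟩, rfl⟩)
  have hG0 : ∀ t ∈ Ioc (0:ℝ) τ, 0 ≤ sSup ((fun s => s ^ (α * ε) * ‖g s‖) '' Ioc 0 t) := by
    intro t ht
    have h1 : (0:ℝ) ≤ t ^ (α * ε) * ‖g t‖ :=
      mul_nonneg (Real.rpow_nonneg ht.1.le _) (norm_nonneg _)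
    exact h1.trans (le_csSup (hGbdd t ht.2) ⟨t, ⟨ht.1, le_refl t⟩, rfl⟩)
  -- the central pointwise estimate
  have hest : ∀ t ∈ Ioc (0:ℝ) τ, t ^ (α * ε) * ‖u t‖ ≤
      t ^ (α * ε) * ‖g t‖ + 1 / 4 * sSup ((fun s => s ^ (α * ε) * ‖u s‖) '' Ioc 0 t) := by
    intro t ht
    obtain ⟨hint, hueq⟩ := hmild t ht
    have ht0 : 0 < t := ht.1
    set K := sSup ((fun s => s ^ (α * ε) * ‖u s‖) '' Ioc 0 t) with hK_def
    have hK0' : 0 ≤ K := hK0 t ht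
    set C : ℝ := M * c * μ ^ (ρ - 1) * K * t ^ (a - b) with hC_def
    have hC0 : 0 ≤ C := by
      have := Real.rpow_nonneg ht0.le (a - b)
      positivity
    -- pointwise bound on (0, t)
    have hptwise : ∀ s ∈ Ioo (0:ℝ) t, ‖R (t - s) (f (u s))‖ ≤
        C * ((1 - t⁻¹ * s) ^ a * (t⁻¹ * s) ^ (-b)) := by
      intro s hs
      obtain ⟨hs0, hst⟩ := hs
      have hts : 0 < t - s := by linarith
      have hsτ : s ∈ Ioc (0:ℝ) τ := ⟨hs0, by linarith [ht.2]⟩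
      have hspow : (0:ℝ) < s ^ (α * ε) := Real.rpow_pos_of_pos hs0 _
      have hfb : ‖f (u s)‖ ≤ c * ‖u s‖ ^ (ρ - 1) * ‖u s‖ := by
        have h := hf (u s) 0
        simpa [hf0, Real.zero_rpow (ne_of_gt hρ1)] using h
      have hus1 : ‖u s‖ ≤ μ * s ^ (-(α * ε)) := by
        rw [Real.rpow_neg hs0.le, ← div_eq_mul_inv, le_div_iff₀ hspow]
        have := hubdd s hsτ; linarith [hubdd s hsτ]
      have hus2 : ‖u s‖ ≤ K * s ^ (-(α * ε)) := by
        rw [Real.rpow_neg hs0.le, ← div_eq_mul_inv, le_div_iff₀ hspow]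
        have hmem : s ^ (α * ε) * ‖u s‖ ≤ K :=
          le_csSup (hKbdd t ht.2) ⟨s, ⟨hs0, hst.le⟩, rfl⟩
        linarith
      have hnn : (0:ℝ) ≤ 1 - t⁻¹ * s := by
        have : t⁻¹ * s < 1 := by
          rw [← div_eq_inv_mul]; exact (div_lt_one ht0).mpr hst
        linarith
      -- rpow algebra
      have h1 : t ^ a * (1 - t⁻¹ * s) ^ a = (t - s) ^ a := by
        rw [← Real.mul_rpow ht0.le hnn]; congr 1; field_simp
      have h2 : t ^ (-b) * (t⁻¹ * s) ^ (-b) = s ^ (-b) := by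
        rw [← Real.mul_rpow ht0.le (by positivity)]; congr 1; field_simp
      have h5 : t ^ a * t ^ (-b) = t ^ (a - b) := by
        rw [← Real.rpow_add ht0]; congr 1
      have hmain : (t - s) ^ a * s ^ (-b) =
          t ^ (a - b) * ((1 - t⁻¹ * s) ^ a * (t⁻¹ * s) ^ (-b)) := by
        rw [← h1, ← h2, ← h5]; ring
      have h3 : s ^ (-(α * ε) * (ρ - 1)) * s ^ (-(α * ε)) = s ^ (-b) := by
        rw [← Real.rpow_add hs0]; congr 1; rw [hb_def]; ring
      have h4 : (s ^ (-(α * ε))) ^ (ρ - 1) = s ^ (-(α * ε) * (ρ - 1)) :=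
        (Real.rpow_mul hs0.le _ _).symm
      calc ‖R (t - s) (f (u s))‖
          ≤ M * (t - s) ^ a * ‖f (u s)‖ := hRbound (t - s) hts (f (u s))
        _ ≤ M * (t - s) ^ a * (c * (μ * s ^ (-(α * ε))) ^ (ρ - 1) * (K * s ^ (-(α * ε)))) := by
            have hb1 : ‖u s‖ ^ (ρ - 1) ≤ (μ * s ^ (-(α * ε))) ^ (ρ - 1) :=
              Real.rpow_le_rpow (norm_nonneg _) hus1 (by linarith)
            have hnn2 : (0:ℝ) ≤ M * (t - s) ^ a :=
              mul_nonneg hM.le (Real.rpow_nonneg hts.le _)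
            refine mul_le_mul_of_nonneg_left ?_ hnn2
            calc ‖f (u s)‖ ≤ c * ‖u s‖ ^ (ρ - 1) * ‖u s‖ := hfb
              _ ≤ c * (μ * s ^ (-(α * ε))) ^ (ρ - 1) * (K * s ^ (-(α * ε))) := by
                  have h0 : (0:ℝ) ≤ ‖u s‖ ^ (ρ - 1) := Real.rpow_nonneg (norm_nonneg _) _
                  apply mul_le_mul
                  · exact mul_le_mul_of_nonneg_left hb1 hc.le
                  · exact hus2
                  · exact norm_nonneg _
                  · positivity
        _ = C * ((1 - t⁻¹ * s) ^ a * (t⁻¹ * s) ^ (-b)) := by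
            rw [Real.mul_rpow hμ.le (Real.rpow_nonneg hs0.le _), h4]
            calc M * (t - s) ^ a *
                (c * (μ ^ (ρ - 1) * s ^ (-(α * ε) * (ρ - 1))) * (K * s ^ (-(α * ε))))
                = M * c * μ ^ (ρ - 1) * K *
                    ((t - s) ^ a * (s ^ (-(α * ε) * (ρ - 1)) * s ^ (-(α * ε)))) := by ring
              _ = M * c * μ ^ (ρ - 1) * K * ((t - s) ^ a * s ^ (-b)) := by rw [h3]
              _ = M * c * μ ^ (ρ - 1) * K *
                    (t ^ (a - b) * ((1 - t⁻¹ * s) ^ a * (t⁻¹ * s) ^ (-b))) := by rw [hmain]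
              _ = C * ((1 - t⁻¹ * s) ^ a * (t⁻¹ * s) ^ (-b)) := by rw [hC_def]; ring
    -- integrability of the dominating function
    have hφint : IntervalIntegrable
        (fun s => C * ((1 - t⁻¹ * s) ^ a * (t⁻¹ * s) ^ (-b))) volume 0 t := by
      have h := (hBint.comp_mul_left (c := t⁻¹)).const_mul C
      simpa [one_div, ht0.ne'] using h
    -- a.e. bound
    have hae : ∀ᵐ s ∂volume.restrict (Set.uIoc (0:ℝ) t),
        ‖R (t - s) (f (u s))‖ ≤ C * ((1 - t⁻¹ * s) ^ a * (t⁻¹ * s) ^ (-b)) := by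
      have hIoc : Set.uIoc (0:ℝ) t = Ioc 0 t := uIoc_of_le ht0.le
      have hne : ∀ᵐ s : ℝ ∂volume.restrict (Set.uIoc (0:ℝ) t), s ≠ t := by
        refine ae_restrict_of_ae ?_
        have h0 : {s : ℝ | ¬ s ≠ t} = {t} := by ext x; simp
        rw [ae_iff, h0]; exact measure_singleton t
      have hmem : ∀ᵐ s : ℝ ∂volume.restrict (Set.uIoc (0:ℝ) t), s ∈ Set.uIoc (0:ℝ) t :=
        ae_restrict_mem measurableSet_uIoc
      filter_upwards [hmem, hne] with s hsmem hsne
      rw [hIoc] at hsmem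
      exact hptwise s ⟨hsmem.1, lt_of_le_of_ne hsmem.2 hsne⟩
    have hnorm : ‖∫ s in (0:ℝ)..t, R (t - s) (f (u s))‖ ≤
        |∫ s in (0:ℝ)..t, C * ((1 - t⁻¹ * s) ^ a * (t⁻¹ * s) ^ (-b))| :=
      intervalIntegral.norm_integral_le_abs_of_norm_le hae hφint
    -- value of the dominating integral
    have hval : ∫ s in (0:ℝ)..t, C * ((1 - t⁻¹ * s) ^ a * (t⁻¹ * s) ^ (-b)) = C * (t * B) := by
      rw [intervalIntegral.integral_const_mul]
      congr 1
      have h := intervalIntegral.integral_comp_mul_left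
        (fun s => (1 - s) ^ a * s ^ (-b)) (inv_ne_zero ht0.ne') (a := (0:ℝ)) (b := t)
      rw [h, inv_inv, mul_zero, inv_mul_cancel₀ ht0.ne', smul_eq_mul, hB]
    have hI : ‖∫ s in (0:ℝ)..t, R (t - s) (f (u s))‖ ≤ C * (t * B) := by
      refine hnorm.trans ?_
      rw [hval, abs_of_nonneg (by positivity)]
    -- power bookkeeping
    have hpow : t ^ (α * ε) * t ^ (a - b) * t = 1 := by
      rw [← Real.rpow_add ht0, ← Real.rpow_add_one ht0.ne',
        show α * ε + (a - b) + 1 = 0 by rw [ha_def, hb_def]; ring, Real.rpow_zero]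
    have hC1 : t ^ (α * ε) * (C * (t * B)) = M * c * μ ^ (ρ - 1) * B * K := by
      rw [hC_def]
      calc t ^ (α * ε) * (M * c * μ ^ (ρ - 1) * K * t ^ (a - b) * (t * B))
          = M * c * μ ^ (ρ - 1) * B * K * (t ^ (α * ε) * t ^ (a - b) * t) := by ring
        _ = M * c * μ ^ (ρ - 1) * B * K := by rw [hpow, mul_one]
    have htε : (0:ℝ) ≤ t ^ (α * ε) := Real.rpow_nonneg ht0.le _
    calc t ^ (α * ε) * ‖u t‖
        = t ^ (α * ε) * ‖g t + ∫ s in (0:ℝ)..t, R (t - s) (f (u s))‖ := by rw [← hueq]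
      _ ≤ t ^ (α * ε) * (‖g t‖ + ‖∫ s in (0:ℝ)..t, R (t - s) (f (u s))‖) :=
          mul_le_mul_of_nonneg_left (norm_add_le _ _) htε
      _ ≤ t ^ (α * ε) * (‖g t‖ + C * (t * B)) :=
          mul_le_mul_of_nonneg_left (by linarith) htε
      _ = t ^ (α * ε) * ‖g t‖ + t ^ (α * ε) * (C * (t * B)) := by ring
      _ = t ^ (α * ε) * ‖g t‖ + M * c * μ ^ (ρ - 1) * B * K := by rw [hC1]
      _ ≤ t ^ (α * ε) * ‖g t‖ + 1 / 4 * K := by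
          have := mul_le_mul_of_nonneg_right hsmall hK0'
          linarith
  -- the sup inequality
  have hsup : ∀ t ∈ Ioc (0:ℝ) τ,
      sSup ((fun s => s ^ (α * ε) * ‖u s‖) '' Ioc 0 t) ≤
        4 / 3 * sSup ((fun s => s ^ (α * ε) * ‖g s‖) '' Ioc 0 t) := by
    intro t ht
    set K := sSup ((fun s => s ^ (α * ε) * ‖u s‖) '' Ioc 0 t) with hK_def
    set G := sSup ((fun s => s ^ (α * ε) * ‖g s‖) '' Ioc 0 t) with hG_def
    have hG0' : 0 ≤ G := hG0 t ht
    have hK0' : 0 ≤ K := hK0 t ht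
    have hKG : K ≤ G + 1 / 4 * K := by
      rw [hK_def]
      refine Real.sSup_le ?_ (by linarith)
      rintro x ⟨s, hs, rfl⟩
      have hsτ : s ∈ Ioc (0:ℝ) τ := ⟨hs.1, hs.2.trans ht.2⟩
      have h1 := hest s hsτ
      have h2 : s ^ (α * ε) * ‖g s‖ ≤ G := le_csSup (hGbdd t ht.2) ⟨s, hs, rfl⟩
      have h3 : sSup ((fun s' => s' ^ (α * ε) * ‖u s'‖) '' Ioc 0 s) ≤ K := by
        refine csSup_le_csSup (hKbdd t ht.2) ⟨s ^ (α * ε) * ‖u s‖, ⟨s, ⟨hs.1, le_refl s⟩, rfl⟩⟩ ?_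
        exact image_mono (Ioc_subset_Ioc_right hs.2)
      linarith
    linarith
  refine ⟨hsup, ?_⟩
  -- the limit statement
  intro hgl
  rw [Metric.tendsto_nhdsWithin_nhds] at hgl ⊢
  intro ε' hε'
  obtain ⟨δ, hδ0, hδ⟩ := hgl (3 / 8 * ε') (by linarith)
  refine ⟨min δ τ, lt_min hδ0 hτ, fun t htmem htd => ?_⟩
  have ht0 : 0 < t := htmem
  rw [Real.dist_eq, sub_zero, abs_of_pos ht0, lt_min_iff] at htd
  have htδ : t < δ := htd.1
  have htτ' : t ≤ τ := htd.2.le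
  have htIoc : t ∈ Ioc (0:ℝ) τ := ⟨ht0, htτ'⟩
  have hGsmall : sSup ((fun s => s ^ (α * ε) * ‖g s‖) '' Ioc 0 t) ≤ 3 / 8 * ε' := by
    refine Real.sSup_le ?_ (by linarith)
    rintro x ⟨s, hs, rfl⟩
    have hsδ : dist s 0 < δ := by
      rw [Real.dist_eq, sub_zero, abs_of_pos hs.1]; linarith [hs.2]
    have := hδ hs.1 hsδ
    rw [Real.dist_eq, sub_zero, abs_of_nonneg
      (mul_nonneg (Real.rpow_nonneg hs.1.le _) (norm_nonneg _))] at this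
    linarith
  have hwt : t ^ (α * ε) * ‖u t‖ ≤ sSup ((fun s => s ^ (α * ε) * ‖u s‖) '' Ioc 0 t) :=
    le_csSup (hKbdd t htτ') ⟨t, ⟨ht0, le_refl t⟩, rfl⟩
  have := hsup t htIoc
  rw [Real.dist_eq, sub_zero, abs_of_nonneg
    (mul_nonneg (Real.rpow_nonneg ht0.le _) (norm_nonneg _))]
  linarith
end

section
/- Assume the abstract setting described in the context. Let μ > 0 satisfy M·c·μ^{ρ−1}·B ≤ 1/4 and let τ ∈ (0,∞). Suppose g₁, g₂ : (0,τ] → V are continuous and u₁, u₂ : (0,τ] → V are mild solutions with forcings g₁ and g₂ respectively on (0,τ], with sup_{t∈(0,τ]} t^{αε}‖u₁(t)‖_V ≤ μ and sup_{t∈(0,τ]} t^{αε}‖u₂(t)‖_V ≤ μ. Then sup_{t∈(0,τ]} t^{αε}‖u₁(t) − u₂(t)‖_V ≤ 2 · sup_{t∈(0,τ]} t^{αε}‖g₁(t) − g₂(t)‖_V. -/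
open MeasureTheory Set Filter Topology intervalIntegral
open scoped ENNReal

lemma beta_scaled {a b : ℝ} {t : ℝ} (ht : 0 < t)
    (hBint : IntervalIntegrable (fun s => (1 - s) ^ a * s ^ (-b)) volume 0 1) :
    IntervalIntegrable (fun s => (t - s) ^ a * s ^ (-b)) volume 0 t ∧
    ∫ s in (0:ℝ)..t, (t - s) ^ a * s ^ (-b)
      = t ^ (a - b + 1) * ∫ s in (0:ℝ)..1, (1 - s) ^ a * s ^ (-b) := by
  have hta : (0:ℝ) < t ^ a := Real.rpow_pos_of_pos ht a
  have htb : (0:ℝ) < t ^ b := Real.rpow_pos_of_pos ht b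
  have key : ∀ s ∈ Icc (0:ℝ) t,
      t ^ (a - b) * ((1 - s / t) ^ a * (s / t) ^ (-b)) = (t - s) ^ a * s ^ (-b) := by
    intro s hs
    have h1 : (1 : ℝ) - s / t = (t - s) / t := by field_simp
    rw [h1, Real.div_rpow (by linarith [hs.2]) ht.le, Real.div_rpow hs.1 ht.le,
      Real.rpow_sub ht, Real.rpow_neg ht.le]
    field_simp
  have hcomp : IntervalIntegrable (fun s => t ^ (a - b) * ((1 - s / t) ^ a * (s / t) ^ (-b)))
      volume 0 t := by
    have := (hBint.comp_mul_right (c := t⁻¹)).const_mul (t ^ (a - b))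
    simpa [div_eq_mul_inv, ht.ne', mul_assoc] using this
  have huIcc : uIcc (0:ℝ) t = Icc 0 t := uIcc_of_le ht.le
  have huIoc : uIoc (0:ℝ) t = Ioc 0 t := uIoc_of_le ht.le
  constructor
  · refine hcomp.congr ?_
    intro s hs
    exact key s (Ioc_subset_Icc_self (huIoc ▸ hs))
  · rw [← intervalIntegral.integral_congr (fun s hs => key s (huIcc ▸ hs))]
    rw [intervalIntegral.integral_const_mul,
      intervalIntegral.integral_comp_div (f := fun s => (1 - s) ^ a * s ^ (-b)) ht.ne']
    simp only [zero_div, div_self ht.ne', smul_eq_mul]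
    rw [Real.rpow_add_one ht.ne' (a - b)]
    ring

/-- **Continuous-dependence estimate of Theorem 1.1(B).**
If `u₁, u₂` are mild solutions on `(0,τ]` with forcings `g₁, g₂` and weighted norms `≤ μ`,
where `M c μ^{ρ-1} B ≤ 1/4`, then
`sup_{t∈(0,τ]} t^{αε}‖u₁ t - u₂ t‖ ≤ 2 sup_{t∈(0,τ]} t^{αε}‖g₁ t - g₂ t‖`. -/
theorem continuous_dependence_local
    {V W : Type*} [NormedAddCommGroup V] [NormedSpace ℝ V] [CompleteSpace V]
    [NormedAddCommGroup W] [NormedSpace ℝ W] [CompleteSpace W]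
    (ρ α ε M c B : ℝ)
    (hρ : 1 < ρ) (hα : 1 < α) (hε : 0 < ε) (hαρε : α * ρ * ε < 1)
    (hM : 0 < M) (hc : 0 < c)
    (R : ℝ → W →L[ℝ] V)
    (hRcont : ∀ w : W, ContinuousOn (fun t => R t w) (Ioi (0:ℝ)))
    (hRbound : ∀ t > (0:ℝ), ∀ w : W, ‖R t w‖ ≤ M * t ^ (α * (ρ - 1) * ε - 1) * ‖w‖)
    (f : V → W) (hf0 : f 0 = 0)
    (hf : ∀ x y : V, ‖f x - f y‖ ≤ c * (‖x‖ ^ (ρ - 1) + ‖y‖ ^ (ρ - 1)) * ‖x - y‖)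
    (hBint : IntervalIntegrable
      (fun s => (1 - s) ^ (α * (ρ - 1) * ε - 1) * s ^ (-(α * ρ * ε))) volume 0 1)
    (hB : B = ∫ s in (0:ℝ)..1, (1 - s) ^ (α * (ρ - 1) * ε - 1) * s ^ (-(α * ρ * ε)))
    (μ : ℝ) (hμ : 0 < μ) (hsmall : M * c * μ ^ (ρ - 1) * B ≤ 1 / 4)
    (τ : ℝ) (hτ : 0 < τ)
    (g₁ g₂ : ℝ → V) (hg₁ : ContinuousOn g₁ (Ioc 0 τ)) (hg₂ : ContinuousOn g₂ (Ioc 0 τ))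
    (u₁ u₂ : ℝ → V)
    (hu₁ : IsMildSolutionOn R f g₁ u₁ (Ioc 0 τ))
    (hu₂ : IsMildSolutionOn R f g₂ u₂ (Ioc 0 τ))
    (hu₁bdd : ∀ t ∈ Ioc (0:ℝ) τ, t ^ (α * ε) * ‖u₁ t‖ ≤ μ)
    (hu₂bdd : ∀ t ∈ Ioc (0:ℝ) τ, t ^ (α * ε) * ‖u₂ t‖ ≤ μ) :
    sSup ((fun t => t ^ (α * ε) * ‖u₁ t - u₂ t‖) '' Ioc 0 τ) ≤
      2 * sSup ((fun t => t ^ (α * ε) * ‖g₁ t - g₂ t‖) '' Ioc 0 τ) := by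
  have hρ1 : (0:ℝ) < ρ - 1 := by linarith
  have hαε : (0:ℝ) < α * ε := by nlinarith
  -- basic positivity of B
  have hB0 : 0 ≤ B := by
    rw [hB]
    apply intervalIntegral.integral_nonneg (by norm_num)
    intro u hu
    exact mul_nonneg (Real.rpow_nonneg (by linarith [hu.2]) _) (Real.rpow_nonneg hu.1 _)
  set S₁ := (fun t => t ^ (α * ε) * ‖u₁ t - u₂ t‖) '' Ioc 0 τ with hS₁def
  set S₂ := (fun t => t ^ (α * ε) * ‖g₁ t - g₂ t‖) '' Ioc 0 τ with hS₂def
  have hS₁ne : S₁.Nonempty := ⟨_, ⟨τ, ⟨hτ, le_refl τ⟩, rfl⟩⟩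
  have hS₂ne : S₂.Nonempty := ⟨_, ⟨τ, ⟨hτ, le_refl τ⟩, rfl⟩⟩
  have hS₁bdd : BddAbove S₁ := by
    refine ⟨2 * μ, ?_⟩
    rintro x ⟨t, ht, rfl⟩
    have h1 := hu₁bdd t ht
    have h2 := hu₂bdd t ht
    have htp : (0:ℝ) < t ^ (α * ε) := Real.rpow_pos_of_pos ht.1 _
    calc t ^ (α * ε) * ‖u₁ t - u₂ t‖
        ≤ t ^ (α * ε) * (‖u₁ t‖ + ‖u₂ t‖) := by
          gcongr; exact norm_sub_le _ _
      _ = t ^ (α * ε) * ‖u₁ t‖ + t ^ (α * ε) * ‖u₂ t‖ := by ring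
      _ ≤ 2 * μ := by linarith
  set K := sSup S₁ with hKdef
  have hK0 : 0 ≤ K := by
    refine le_trans ?_ (le_csSup hS₁bdd ⟨τ, ⟨hτ, le_refl τ⟩, rfl⟩)
    positivity
  have hKdiff : ∀ s ∈ Ioc (0:ℝ) τ, ‖u₁ s - u₂ s‖ ≤ K * s ^ (-(α * ε)) := by
    intro s hs
    have hsp : (0:ℝ) < s ^ (α * ε) := Real.rpow_pos_of_pos hs.1 _
    have hle : s ^ (α * ε) * ‖u₁ s - u₂ s‖ ≤ K := le_csSup hS₁bdd ⟨s, hs, rfl⟩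
    rw [Real.rpow_neg hs.1.le, ← div_eq_mul_inv, le_div_iff₀ hsp]
    linarith [hle]
  have hub : ∀ (u : ℝ → V), (∀ t ∈ Ioc (0:ℝ) τ, t ^ (α * ε) * ‖u t‖ ≤ μ) →
      ∀ s ∈ Ioc (0:ℝ) τ, ‖u s‖ ≤ μ * s ^ (-(α * ε)) := by
    intro u hu s hs
    have hsp : (0:ℝ) < s ^ (α * ε) := Real.rpow_pos_of_pos hs.1 _
    rw [Real.rpow_neg hs.1.le, ← div_eq_mul_inv, le_div_iff₀ hsp]
    linarith [hu s hs]
  set C := 2 * M * c * μ ^ (ρ - 1) * K with hCdef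
  have hC0 : 0 ≤ C := by positivity
  have hCB : C * B ≤ K / 2 := by
    have h := mul_le_mul_of_nonneg_left hsmall (by positivity : (0:ℝ) ≤ 2 * K)
    calc C * B = 2 * K * (M * c * μ ^ (ρ - 1) * B) := by ring
      _ ≤ 2 * K * (1 / 4) := h
      _ = K / 2 := by ring
  -- the core integral bound
  have hIbound : ∀ t ∈ Ioc (0:ℝ) τ,
      ‖∫ s in (0:ℝ)..t, (R (t - s) (f (u₁ s)) - R (t - s) (f (u₂ s)))‖
        ≤ C * B * t ^ (-(α * ε)) := by
    intro t ht
    obtain ⟨hint, hval⟩ := beta_scaled (a := α * (ρ - 1) * ε - 1) (b := α * ρ * ε) ht.1 hBint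
    have hexp : α * (ρ - 1) * ε - 1 - α * ρ * ε + 1 = -(α * ε) := by ring
    have hDint : IntervalIntegrable
        (fun s => C * ((t - s) ^ (α * (ρ - 1) * ε - 1) * s ^ (-(α * ρ * ε)))) volume 0 t :=
      hint.const_mul C
    have hDval : ∫ s in (0:ℝ)..t, C * ((t - s) ^ (α * (ρ - 1) * ε - 1) * s ^ (-(α * ρ * ε)))
        = C * B * t ^ (-(α * ε)) := by
      rw [intervalIntegral.integral_const_mul, hval, hexp, ← hB]
      ring
    have hDnn : 0 ≤ C * B * t ^ (-(α * ε)) :=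
      mul_nonneg (mul_nonneg hC0 hB0) (Real.rpow_nonneg ht.1.le _)
    have hne : ∀ᵐ s ∂(volume.restrict (uIoc (0:ℝ) t)), s ≠ t := by
      refine ae_restrict_of_ae ?_
      have hset : {s : ℝ | ¬s ≠ t} = {t} := by ext s; simp
      rw [ae_iff, hset]
      exact measure_singleton t
    have hbd : ∀ᵐ s ∂(volume.restrict (uIoc (0:ℝ) t)),
        ‖R (t - s) (f (u₁ s)) - R (t - s) (f (u₂ s))‖
          ≤ C * ((t - s) ^ (α * (ρ - 1) * ε - 1) * s ^ (-(α * ρ * ε))) := by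
      filter_upwards [ae_restrict_mem measurableSet_uIoc, hne] with s hs hst
      rw [uIoc_of_le ht.1.le] at hs
      have hs0 : (0:ℝ) < s := hs.1
      have hst' : s < t := lt_of_le_of_ne hs.2 hst
      have hsτ : s ∈ Ioc (0:ℝ) τ := ⟨hs0, le_trans hs.2 ht.2⟩
      have hts : (0:ℝ) < t - s := by linarith
      have h1 : ‖u₁ s‖ ≤ μ * s ^ (-(α * ε)) := hub u₁ hu₁bdd s hsτ
      have h2 : ‖u₂ s‖ ≤ μ * s ^ (-(α * ε)) := hub u₂ hu₂bdd s hsτ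
      have h3 : ‖u₁ s - u₂ s‖ ≤ K * s ^ (-(α * ε)) := hKdiff s hsτ
      have step1 : ‖R (t - s) (f (u₁ s)) - R (t - s) (f (u₂ s))‖
          ≤ M * (t - s) ^ (α * (ρ - 1) * ε - 1) * ‖f (u₁ s) - f (u₂ s)‖ := by
        rw [← map_sub]
        exact hRbound _ hts _
      have step2 : ‖f (u₁ s) - f (u₂ s)‖
          ≤ c * ((μ * s ^ (-(α * ε))) ^ (ρ - 1) + (μ * s ^ (-(α * ε))) ^ (ρ - 1))
            * (K * s ^ (-(α * ε))) := by
        refine le_trans (hf _ _) ?_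
        have e1 : ‖u₁ s‖ ^ (ρ - 1) ≤ (μ * s ^ (-(α * ε))) ^ (ρ - 1) :=
          Real.rpow_le_rpow (norm_nonneg _) h1 hρ1.le
        have e2 : ‖u₂ s‖ ^ (ρ - 1) ≤ (μ * s ^ (-(α * ε))) ^ (ρ - 1) :=
          Real.rpow_le_rpow (norm_nonneg _) h2 hρ1.le
        have hnn : (0:ℝ) ≤ c * (‖u₁ s‖ ^ (ρ - 1) + ‖u₂ s‖ ^ (ρ - 1)) :=
          mul_nonneg hc.le (add_nonneg (Real.rpow_nonneg (norm_nonneg _) _)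
            (Real.rpow_nonneg (norm_nonneg _) _))
        have hKs : (0:ℝ) ≤ K * s ^ (-(α * ε)) :=
          mul_nonneg hK0 (Real.rpow_nonneg hs0.le _)
        exact mul_le_mul (by gcongr) h3 (norm_nonneg _)
          (le_trans hnn (by gcongr))
      have hX : (μ * s ^ (-(α * ε))) ^ (ρ - 1) = μ ^ (ρ - 1) * s ^ (-(α * ε) * (ρ - 1)) := by
        rw [Real.mul_rpow hμ.le (Real.rpow_nonneg hs0.le _), ← Real.rpow_mul hs0.le]
      have hsplit : s ^ (-(α * ε) * (ρ - 1)) * s ^ (-(α * ε)) = s ^ (-(α * ρ * ε)) := by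
        rw [← Real.rpow_add hs0]
        congr 1
        ring
      calc ‖R (t - s) (f (u₁ s)) - R (t - s) (f (u₂ s))‖
          ≤ M * (t - s) ^ (α * (ρ - 1) * ε - 1)
            * (c * ((μ * s ^ (-(α * ε))) ^ (ρ - 1) + (μ * s ^ (-(α * ε))) ^ (ρ - 1))
              * (K * s ^ (-(α * ε)))) := by
            refine le_trans step1 ?_
            have hnn : (0:ℝ) ≤ M * (t - s) ^ (α * (ρ - 1) * ε - 1) := by positivity
            exact mul_le_mul_of_nonneg_left step2 hnn
        _ = C * ((t - s) ^ (α * (ρ - 1) * ε - 1)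
              * (s ^ (-(α * ε) * (ρ - 1)) * s ^ (-(α * ε)))) := by
            rw [hX]; ring
        _ = C * ((t - s) ^ (α * (ρ - 1) * ε - 1) * s ^ (-(α * ρ * ε))) := by rw [hsplit]
    calc ‖∫ s in (0:ℝ)..t, (R (t - s) (f (u₁ s)) - R (t - s) (f (u₂ s)))‖
        ≤ |∫ s in (0:ℝ)..t, C * ((t - s) ^ (α * (ρ - 1) * ε - 1) * s ^ (-(α * ρ * ε)))| :=
          intervalIntegral.norm_integral_le_abs_of_norm_le hbd hDint
      _ = C * B * t ^ (-(α * ε)) := by rw [hDval, abs_of_nonneg hDnn]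
  -- decomposition of the difference
  have hdecomp : ∀ t ∈ Ioc (0:ℝ) τ,
      u₁ t - u₂ t = (g₁ t - g₂ t)
        + ∫ s in (0:ℝ)..t, (R (t - s) (f (u₁ s)) - R (t - s) (f (u₂ s))) := by
    intro t ht
    obtain ⟨hi1, he1⟩ := hu₁.2 t ht
    obtain ⟨hi2, he2⟩ := hu₂.2 t ht
    rw [he1, he2, intervalIntegral.integral_sub hi1 hi2]
    abel
  have http : ∀ t ∈ Ioc (0:ℝ) τ, t ^ (α * ε) * t ^ (-(α * ε)) = 1 := by
    intro t ht
    rw [← Real.rpow_add ht.1, add_neg_cancel, Real.rpow_zero]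
  -- the main pointwise estimate
  have hmain : ∀ t ∈ Ioc (0:ℝ) τ,
      t ^ (α * ε) * ‖u₁ t - u₂ t‖ ≤ t ^ (α * ε) * ‖g₁ t - g₂ t‖ + K / 2 := by
    intro t ht
    have htp : (0:ℝ) < t ^ (α * ε) := Real.rpow_pos_of_pos ht.1 _
    have h := hIbound t ht
    calc t ^ (α * ε) * ‖u₁ t - u₂ t‖
        ≤ t ^ (α * ε) * (‖g₁ t - g₂ t‖
            + ‖∫ s in (0:ℝ)..t, (R (t - s) (f (u₁ s)) - R (t - s) (f (u₂ s)))‖) := by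
          gcongr
          rw [hdecomp t ht]
          exact norm_add_le _ _
      _ ≤ t ^ (α * ε) * ‖g₁ t - g₂ t‖ + t ^ (α * ε) * (C * B * t ^ (-(α * ε))) := by
          rw [mul_add]
          gcongr
      _ = t ^ (α * ε) * ‖g₁ t - g₂ t‖ + C * B * (t ^ (α * ε) * t ^ (-(α * ε))) := by ring
      _ = t ^ (α * ε) * ‖g₁ t - g₂ t‖ + C * B := by rw [http t ht, mul_one]
      _ ≤ t ^ (α * ε) * ‖g₁ t - g₂ t‖ + K / 2 := by linarith [hCB]
  -- S₂ is bounded above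
  have hS₂bdd : BddAbove S₂ := by
    refine ⟨K + K / 2, ?_⟩
    rintro x ⟨t, ht, rfl⟩
    have htp : (0:ℝ) < t ^ (α * ε) := Real.rpow_pos_of_pos ht.1 _
    have hK' : t ^ (α * ε) * ‖u₁ t - u₂ t‖ ≤ K := le_csSup hS₁bdd ⟨t, ht, rfl⟩
    have h := hIbound t ht
    have hg : g₁ t - g₂ t = (u₁ t - u₂ t)
        - ∫ s in (0:ℝ)..t, (R (t - s) (f (u₁ s)) - R (t - s) (f (u₂ s))) := by
      rw [hdecomp t ht]; abel
    calc t ^ (α * ε) * ‖g₁ t - g₂ t‖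
        ≤ t ^ (α * ε) * (‖u₁ t - u₂ t‖
            + ‖∫ s in (0:ℝ)..t, (R (t - s) (f (u₁ s)) - R (t - s) (f (u₂ s)))‖) := by
          gcongr
          rw [hg]
          exact norm_sub_le _ _
      _ = t ^ (α * ε) * ‖u₁ t - u₂ t‖
            + t ^ (α * ε) * ‖∫ s in (0:ℝ)..t, (R (t - s) (f (u₁ s)) - R (t - s) (f (u₂ s)))‖ := by
          ring
      _ ≤ K + t ^ (α * ε) * (C * B * t ^ (-(α * ε))) := by gcongr
      _ = K + C * B * (t ^ (α * ε) * t ^ (-(α * ε))) := by ring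
      _ = K + C * B := by rw [http t ht, mul_one]
      _ ≤ K + K / 2 := by linarith [hCB]
  set G := sSup S₂ with hGdef
  have hG0 : 0 ≤ G := by
    refine le_trans ?_ (le_csSup hS₂bdd ⟨τ, ⟨hτ, le_refl τ⟩, rfl⟩)
    positivity
  have hKG : K ≤ G + K / 2 := by
    refine csSup_le hS₁ne ?_
    rintro x ⟨t, ht, rfl⟩
    refine le_trans (hmain t ht) ?_
    have : t ^ (α * ε) * ‖g₁ t - g₂ t‖ ≤ G := le_csSup hS₂bdd ⟨t, ht, rfl⟩
    linarith
  linarith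
end

section
/- Assume the abstract setting described in the context. Let τ₁ ∈ (0,∞), let g : (0,τ₁] → V be continuous, and let u, v : (0,τ₁] → V both be mild solutions with forcing g on (0,τ₁] satisfying lim_{t→0⁺} t^{αε}‖u(t)‖_V = 0 and lim_{t→0⁺} t^{αε}‖v(t)‖_V = 0. Then u(t) = v(t) for all t ∈ (0,τ₁]. -/
open MeasureTheory Set Filter Topology intervalIntegral
open scoped ENNReal
open scoped Interval

private lemma ae_ne_restrict (s : Set ℝ) (t : ℝ) : ∀ᵐ x ∂(volume.restrict s), x ≠ t := by
  refine ae_iff.mpr (le_antisymm ?_ zero_le)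
  have hsub : {x : ℝ | ¬ x ≠ t} ⊆ {t} := fun x hx => by simpa using not_not.mp hx
  calc volume.restrict s {x : ℝ | ¬ x ≠ t} ≤ volume.restrict s {t} := measure_mono hsub
    _ ≤ volume {t} := Measure.restrict_apply_le _ _
    _ = 0 := measure_singleton t

set_option maxHeartbeats 2000000 in
/-- **Theorem 1.1(C): uniqueness of ε-regular mild solutions with vanishing weighted norm.**
If `u` and `v` are both mild solutions with the same forcing `g` on `(0,τ₁]` and both satisfy
`lim_{t→0⁺} t^{αε}‖·(t)‖ = 0`, then `u = v` on `(0,τ₁]`. -/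
theorem uniqueness_vanishing_class
    {V W : Type*} [NormedAddCommGroup V] [NormedSpace ℝ V] [CompleteSpace V]
    [NormedAddCommGroup W] [NormedSpace ℝ W] [CompleteSpace W]
    (ρ α ε M c B : ℝ)
    (hρ : 1 < ρ) (hα : 1 < α) (hε : 0 < ε) (hαρε : α * ρ * ε < 1)
    (hM : 0 < M) (hc : 0 < c)
    (R : ℝ → W →L[ℝ] V)
    (hRcont : ∀ w : W, ContinuousOn (fun t => R t w) (Ioi (0:ℝ)))
    (hRbound : ∀ t > (0:ℝ), ∀ w : W, ‖R t w‖ ≤ M * t ^ (α * (ρ - 1) * ε - 1) * ‖w‖)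
    (f : V → W) (hf0 : f 0 = 0)
    (hf : ∀ x y : V, ‖f x - f y‖ ≤ c * (‖x‖ ^ (ρ - 1) + ‖y‖ ^ (ρ - 1)) * ‖x - y‖)
    (hBint : IntervalIntegrable
      (fun s => (1 - s) ^ (α * (ρ - 1) * ε - 1) * s ^ (-(α * ρ * ε))) volume 0 1)
    (hB : B = ∫ s in (0:ℝ)..1, (1 - s) ^ (α * (ρ - 1) * ε - 1) * s ^ (-(α * ρ * ε)))
    (τ₁ : ℝ) (hτ₁ : 0 < τ₁)
    (g : ℝ → V) (hg : ContinuousOn g (Ioc 0 τ₁))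
    (u v : ℝ → V)
    (hu : IsMildSolutionOn R f g u (Ioc 0 τ₁))
    (hv : IsMildSolutionOn R f g v (Ioc 0 τ₁))
    (hu0 : Tendsto (fun t => t ^ (α * ε) * ‖u t‖) (𝓝[>] 0) (𝓝 0))
    (hv0 : Tendsto (fun t => t ^ (α * ε) * ‖v t‖) (𝓝[>] 0) (𝓝 0)) :
    EqOn u v (Ioc 0 τ₁) := by
  obtain ⟨hucont, huI⟩ := hu
  obtain ⟨hvcont, hvI⟩ := hv
  set γ := α * (ρ - 1) * ε with hγdef
  have hρ1 : (0:ℝ) < ρ - 1 := by linarith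
  have hαε : (0:ℝ) < α * ε := by nlinarith
  have hαρε0 : (0:ℝ) < α * ρ * ε := by nlinarith
  have hγαρε : γ = α * ρ * ε - α * ε := by rw [hγdef]; ring
  have hγ0 : 0 < γ := by rw [hγαρε]; nlinarith
  have hγ1 : γ < 1 := by rw [hγαρε]; linarith
  have hB0 : 0 ≤ B := by
    rw [hB]
    apply intervalIntegral.integral_nonneg zero_le_one
    intro s hs
    exact mul_nonneg (Real.rpow_nonneg (by linarith [hs.2]) _) (Real.rpow_nonneg hs.1 _)
  -- difference equation
  have hw_eq : ∀ t ∈ Ioc (0:ℝ) τ₁,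
      u t - v t = ∫ s in (0:ℝ)..t, (R (t - s) (f (u s)) - R (t - s) (f (v s))) := by
    intro t ht
    obtain ⟨hiu, hequ⟩ := huI t ht
    obtain ⟨hiv, heqv⟩ := hvI t ht
    rw [intervalIntegral.integral_sub hiu hiv, hequ, heqv]
    abel
  -- pointwise operator bound
  have hbound : ∀ t s : ℝ, 0 < s → s < t →
      ‖R (t - s) (f (u s)) - R (t - s) (f (v s))‖ ≤
        M * (t - s) ^ (γ - 1) * (c * (‖u s‖ ^ (ρ - 1) + ‖v s‖ ^ (ρ - 1)) * ‖u s - v s‖) := by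
    intro t s hs0 hst
    have hts : 0 < t - s := by linarith
    rw [← map_sub]
    calc ‖R (t - s) (f (u s) - f (v s))‖
        ≤ M * (t - s) ^ (γ - 1) * ‖f (u s) - f (v s)‖ := hRbound _ hts _
      _ ≤ M * (t - s) ^ (γ - 1) *
          (c * (‖u s‖ ^ (ρ - 1) + ‖v s‖ ^ (ρ - 1)) * ‖u s - v s‖) := by
          exact mul_le_mul_of_nonneg_left (hf _ _)
            (mul_nonneg hM.le (Real.rpow_nonneg hts.le _))
  -- algebraic identity
  have hFid : ∀ t s : ℝ, 0 < s → s < t →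
      (1 - s * t⁻¹) ^ (γ - 1) * (s * t⁻¹) ^ (-(α * ρ * ε)) =
        (t - s) ^ (γ - 1) * s ^ (-(α * ρ * ε)) * t ^ (1 + α * ε) := by
    intro t s hs0 hst
    have ht0 : 0 < t := hs0.trans hst
    have hts : 0 < t - s := by linarith
    have e1 : 1 - s * t⁻¹ = (t - s) * t⁻¹ := by field_simp
    rw [e1, Real.mul_rpow hts.le (inv_nonneg.mpr ht0.le),
      Real.mul_rpow hs0.le (inv_nonneg.mpr ht0.le),
      Real.inv_rpow ht0.le, Real.inv_rpow ht0.le,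
      ← Real.rpow_neg ht0.le, ← Real.rpow_neg ht0.le]
    have e2 : t ^ (-(γ - 1)) * t ^ (-(-(α * ρ * ε))) = t ^ (1 + α * ε) := by
      rw [← Real.rpow_add ht0]
      congr 1
      rw [hγαρε]; ring
    rw [mul_mul_mul_comm, e2]

  -- choice of smallness parameter
  have hdenpos : (0:ℝ) < 4 * M * c * B + 1 := by nlinarith [mul_nonneg (mul_nonneg hM.le hc.le) hB0]
  set η := ((4 * M * c * B + 1)⁻¹) ^ (ρ - 1)⁻¹ with hηdef
  have hη : 0 < η := Real.rpow_pos_of_pos (inv_pos.mpr hdenpos) _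
  have hηpow : η ^ (ρ - 1) = (4 * M * c * B + 1)⁻¹ :=
    Real.rpow_inv_rpow (inv_pos.mpr hdenpos).le (by linarith)
  have hev : ∀ᶠ s in 𝓝[>] (0:ℝ), s ^ (α * ε) * ‖u s‖ ≤ η ∧ s ^ (α * ε) * ‖v s‖ ≤ η :=
    (hu0.eventually_le_const hη).and (hv0.eventually_le_const hη)
  obtain ⟨δ₂, hδ₂, hδ₂sub⟩ := mem_nhdsGT_iff_exists_Ioc_subset.mp hev
  set δ₀ := min δ₂ τ₁ with hδ₀def
  have hδ₀0 : 0 < δ₀ := lt_min hδ₂ hτ₁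
  have hδ₀τ : δ₀ ≤ τ₁ := min_le_right _ _
  have hδ₀P : ∀ s ∈ Ioc (0:ℝ) δ₀, s ^ (α * ε) * ‖u s‖ ≤ η ∧ s ^ (α * ε) * ‖v s‖ ≤ η :=
    fun s hs => hδ₂sub ⟨hs.1, hs.2.trans (min_le_left _ _)⟩
  set A := (fun s => s ^ (α * ε) * ‖u s - v s‖) '' (Ioc 0 δ₀) with hAdef
  have hAmem : ∀ s ∈ Ioc (0:ℝ) δ₀, s ^ (α * ε) * ‖u s - v s‖ ∈ A := fun s hs => ⟨s, hs, rfl⟩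
  have hAne : A.Nonempty := ⟨_, hAmem δ₀ ⟨hδ₀0, le_refl _⟩⟩
  have hAbdd : BddAbove A := by
    refine ⟨2 * η, ?_⟩
    rintro x ⟨s, hs, rfl⟩
    have h1 := (hδ₀P s hs).1
    have h2 := (hδ₀P s hs).2
    have h3 : s ^ (α * ε) * ‖u s - v s‖ ≤ s ^ (α * ε) * ‖u s‖ + s ^ (α * ε) * ‖v s‖ := by
      rw [← mul_add]
      exact mul_le_mul_of_nonneg_left (norm_sub_le _ _) (Real.rpow_nonneg hs.1.le _)
    show s ^ (α * ε) * ‖u s - v s‖ ≤ 2 * η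
    linarith
  set N := sSup A with hNdef
  have hN0 : 0 ≤ N := by
    refine le_trans ?_ (le_csSup hAbdd (hAmem δ₀ ⟨hδ₀0, le_refl _⟩))
    exact mul_nonneg (Real.rpow_nonneg hδ₀0.le _) (norm_nonneg _)
  have hNel : ∀ s ∈ Ioc (0:ℝ) δ₀, s ^ (α * ε) * ‖u s - v s‖ ≤ N :=
    fun s hs => le_csSup hAbdd (hAmem s hs)
  -- master estimate on (0, δ₀]
  have hkey : ∀ t ∈ Ioc (0:ℝ) δ₀, t ^ (α * ε) * ‖u t - v t‖ ≤ (1/2) * N := by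
    intro t ht
    have ht0 : (0:ℝ) < t := ht.1
    have htτ : t ∈ Ioc (0:ℝ) τ₁ := ⟨ht.1, ht.2.trans hδ₀τ⟩
    set C' := 2 * M * c * η ^ (ρ - 1) * N with hC'def
    have hC'0 : 0 ≤ C' := by
      refine mul_nonneg (mul_nonneg (mul_nonneg (by linarith) hc.le) ?_) hN0
      exact Real.rpow_nonneg hη.le _
    set G := fun s : ℝ => C' * t ^ (-(1 + α * ε)) *
      ((1 - s * t⁻¹) ^ (γ - 1) * (s * t⁻¹) ^ (-(α * ρ * ε))) with hGdef
    have hGint : IntervalIntegrable G volume 0 t := by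
      have h0 := hBint.comp_mul_right (c := t⁻¹)
      rw [zero_div, one_div, inv_inv] at h0
      exact h0.const_mul _
    have hGval : ∫ s in (0:ℝ)..t, G s = C' * B * t ^ (-(α * ε)) := by
      rw [hGdef]
      rw [intervalIntegral.integral_const_mul]
      have h1 := intervalIntegral.integral_comp_mul_right
        (a := 0) (b := t) (fun s => (1 - s) ^ (γ - 1) * s ^ (-(α * ρ * ε)))
        (inv_ne_zero ht0.ne')
      beta_reduce at h1
      rw [h1, inv_inv, zero_mul, mul_inv_cancel₀ ht0.ne', ← hB, smul_eq_mul]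
      rw [show C' * t ^ (-(1 + α * ε)) * (t * B) = C' * B * (t ^ (-(1 + α * ε)) * t ^ (1:ℝ))
        from by rw [Real.rpow_one]; ring]
      rw [← Real.rpow_add ht0, show -(1 + α * ε) + 1 = -(α * ε) from by ring]
    have hnorm : ‖u t - v t‖ ≤ C' * B * t ^ (-(α * ε)) := by
      rw [hw_eq t htτ]
      have hae : ∀ᵐ s ∂(volume.restrict (Ι (0:ℝ) t)),
          ‖R (t - s) (f (u s)) - R (t - s) (f (v s))‖ ≤ G s := by
        have h1 : ∀ᵐ s ∂(volume.restrict (Ι (0:ℝ) t)), s ∈ Ι (0:ℝ) t :=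
          ae_restrict_mem measurableSet_uIoc
        filter_upwards [h1, ae_ne_restrict (Ι (0:ℝ) t) t] with s hsI hst
        rw [uIoc_of_le ht0.le] at hsI
        have hs : s ∈ Ioo (0:ℝ) t := ⟨hsI.1, lt_of_le_of_ne hsI.2 hst⟩
        have hsδ : s ∈ Ioc (0:ℝ) δ₀ := ⟨hs.1, hs.2.le.trans ht.2⟩
        have hcanc : s ^ (-(α * ε)) * s ^ (α * ε) = 1 := by
          rw [← Real.rpow_add hs.1]; simp
        have hub : ‖u s‖ ≤ η * s ^ (-(α * ε)) := by
          calc ‖u s‖ = s ^ (-(α * ε)) * (s ^ (α * ε) * ‖u s‖) := by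
                rw [← mul_assoc, hcanc, one_mul]
            _ ≤ s ^ (-(α * ε)) * η :=
                mul_le_mul_of_nonneg_left (hδ₀P s hsδ).1 (Real.rpow_nonneg hs.1.le _)
            _ = η * s ^ (-(α * ε)) := mul_comm _ _
        have hvb : ‖v s‖ ≤ η * s ^ (-(α * ε)) := by
          calc ‖v s‖ = s ^ (-(α * ε)) * (s ^ (α * ε) * ‖v s‖) := by
                rw [← mul_assoc, hcanc, one_mul]
            _ ≤ s ^ (-(α * ε)) * η :=
                mul_le_mul_of_nonneg_left (hδ₀P s hsδ).2 (Real.rpow_nonneg hs.1.le _)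
            _ = η * s ^ (-(α * ε)) := mul_comm _ _
        have hwb : ‖u s - v s‖ ≤ N * s ^ (-(α * ε)) := by
          calc ‖u s - v s‖ = s ^ (-(α * ε)) * (s ^ (α * ε) * ‖u s - v s‖) := by
                rw [← mul_assoc, hcanc, one_mul]
            _ ≤ s ^ (-(α * ε)) * N :=
                mul_le_mul_of_nonneg_left (hNel s hsδ) (Real.rpow_nonneg hs.1.le _)
            _ = N * s ^ (-(α * ε)) := mul_comm _ _
        have hup : ‖u s‖ ^ (ρ - 1) ≤ η ^ (ρ - 1) * s ^ (-(α * ε) * (ρ - 1)) := by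
          calc ‖u s‖ ^ (ρ - 1) ≤ (η * s ^ (-(α * ε))) ^ (ρ - 1) :=
                Real.rpow_le_rpow (norm_nonneg _) hub hρ1.le
            _ = η ^ (ρ - 1) * s ^ (-(α * ε) * (ρ - 1)) := by
                rw [Real.mul_rpow hη.le (Real.rpow_nonneg hs.1.le _), ← Real.rpow_mul hs.1.le]
        have hvp : ‖v s‖ ^ (ρ - 1) ≤ η ^ (ρ - 1) * s ^ (-(α * ε) * (ρ - 1)) := by
          calc ‖v s‖ ^ (ρ - 1) ≤ (η * s ^ (-(α * ε))) ^ (ρ - 1) :=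
                Real.rpow_le_rpow (norm_nonneg _) hvb hρ1.le
            _ = η ^ (ρ - 1) * s ^ (-(α * ε) * (ρ - 1)) := by
                rw [Real.mul_rpow hη.le (Real.rpow_nonneg hs.1.le _), ← Real.rpow_mul hs.1.le]
        have hs12 : s ^ (-(α * ε) * (ρ - 1)) * s ^ (-(α * ε)) = s ^ (-(α * ρ * ε)) := by
          rw [← Real.rpow_add hs.1]; congr 1; ring
        have htc : t ^ (-(1 + α * ε)) * t ^ (1 + α * ε) = 1 := by
          rw [← Real.rpow_add ht0, show -(1 + α * ε) + (1 + α * ε) = 0 from by ring,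
            Real.rpow_zero]
        have hM1 : 0 ≤ M * (t - s) ^ (γ - 1) :=
          mul_nonneg hM.le (Real.rpow_nonneg (by linarith [hs.2]) _)
        calc ‖R (t - s) (f (u s)) - R (t - s) (f (v s))‖
            ≤ M * (t - s) ^ (γ - 1) *
              (c * (‖u s‖ ^ (ρ - 1) + ‖v s‖ ^ (ρ - 1)) * ‖u s - v s‖) :=
              hbound t s hs.1 hs.2
          _ ≤ M * (t - s) ^ (γ - 1) *
              (c * (2 * (η ^ (ρ - 1) * s ^ (-(α * ε) * (ρ - 1)))) * (N * s ^ (-(α * ε)))) := by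
              refine mul_le_mul_of_nonneg_left ?_ hM1
              refine mul_le_mul (mul_le_mul_of_nonneg_left (by linarith) hc.le) hwb
                (norm_nonneg _) ?_
              refine mul_nonneg hc.le ?_
              refine mul_nonneg (by norm_num) ?_
              exact mul_nonneg (Real.rpow_nonneg hη.le _) (Real.rpow_nonneg hs.1.le _)
          _ = G s := by
              have hid := hFid t s hs.1 hs.2
              show _ = C' * t ^ (-(1 + α * ε)) *
                ((1 - s * t⁻¹) ^ (γ - 1) * (s * t⁻¹) ^ (-(α * ρ * ε)))
              rw [hid]
              calc M * (t - s) ^ (γ - 1) *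
                  (c * (2 * (η ^ (ρ - 1) * s ^ (-(α * ε) * (ρ - 1)))) * (N * s ^ (-(α * ε))))
                  = 2 * M * c * η ^ (ρ - 1) * N * (t - s) ^ (γ - 1) *
                    (s ^ (-(α * ε) * (ρ - 1)) * s ^ (-(α * ε))) := by ring
                _ = C' * (t - s) ^ (γ - 1) * s ^ (-(α * ρ * ε)) := by
                    rw [hs12, hC'def]
                _ = C' * t ^ (-(1 + α * ε)) *
                    ((t - s) ^ (γ - 1) * s ^ (-(α * ρ * ε)) * t ^ (1 + α * ε)) := by
                    rw [show C' * t ^ (-(1 + α * ε)) *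
                        ((t - s) ^ (γ - 1) * s ^ (-(α * ρ * ε)) * t ^ (1 + α * ε)) =
                        C' * (t - s) ^ (γ - 1) * s ^ (-(α * ρ * ε)) *
                        (t ^ (-(1 + α * ε)) * t ^ (1 + α * ε)) from by ring, htc, mul_one]
      calc ‖∫ s in (0:ℝ)..t, (R (t - s) (f (u s)) - R (t - s) (f (v s)))‖
          ≤ |∫ s in (0:ℝ)..t, G s| := intervalIntegral.norm_integral_le_abs_of_norm_le hae hGint
        _ = |C' * B * t ^ (-(α * ε))| := by rw [hGval]
        _ = C' * B * t ^ (-(α * ε)) := abs_of_nonneg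
            (mul_nonneg (mul_nonneg hC'0 hB0) (Real.rpow_nonneg ht0.le _))
    calc t ^ (α * ε) * ‖u t - v t‖
        ≤ t ^ (α * ε) * (C' * B * t ^ (-(α * ε))) :=
          mul_le_mul_of_nonneg_left hnorm (Real.rpow_nonneg ht0.le _)
      _ = C' * B * (t ^ (α * ε) * t ^ (-(α * ε))) := by ring
      _ = C' * B := by rw [← Real.rpow_add ht0]; simp
      _ ≤ (1/2) * N := by
          rw [hC'def, hηpow]
          have h1 : 2 * M * c * B * (4 * M * c * B + 1)⁻¹ ≤ 1/2 := by
            rw [← div_eq_mul_inv, div_le_iff₀ hdenpos]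
            nlinarith [mul_nonneg (mul_nonneg hM.le hc.le) hB0]
          calc 2 * M * c * (4 * M * c * B + 1)⁻¹ * N * B
              = (2 * M * c * B * (4 * M * c * B + 1)⁻¹) * N := by ring
            _ ≤ (1/2) * N := mul_le_mul_of_nonneg_right h1 hN0
  have hN_half : N ≤ (1/2) * N := by
    apply csSup_le hAne
    rintro x ⟨s, hs, rfl⟩
    exact hkey s hs
  have hNzero : N = 0 := by linarith
  have heq0 : EqOn u v (Ioc 0 δ₀) := by
    intro s hs
    have h1 := hkey s hs
    rw [hNzero] at h1
    have h2 : 0 ≤ s ^ (α * ε) * ‖u s - v s‖ :=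
      mul_nonneg (Real.rpow_nonneg hs.1.le _) (norm_nonneg _)
    have h3 : s ^ (α * ε) * ‖u s - v s‖ = 0 := le_antisymm (by linarith) h2
    have h4 : ‖u s - v s‖ = 0 := by
      rcases mul_eq_zero.mp h3 with h | h
      · exact absurd h (ne_of_gt (Real.rpow_pos_of_pos hs.1 _))
      · exact h
    exact sub_eq_zero.mp (norm_eq_zero.mp h4)

  -- step 2: continuation beyond δ₀
  have hIccsub : Icc δ₀ τ₁ ⊆ Ioc (0:ℝ) τ₁ := fun x hx => ⟨lt_of_lt_of_le hδ₀0 hx.1, hx.2⟩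
  obtain ⟨Lu, hLu⟩ := (isCompact_Icc : IsCompact (Icc δ₀ τ₁)).exists_bound_of_continuousOn
    (hucont.mono hIccsub)
  obtain ⟨Lv, hLv⟩ := (isCompact_Icc : IsCompact (Icc δ₀ τ₁)).exists_bound_of_continuousOn
    (hvcont.mono hIccsub)
  set L := max Lu Lv with hLdef
  have hL0 : 0 ≤ L :=
    le_trans (norm_nonneg (u τ₁)) ((hLu τ₁ ⟨hδ₀τ, le_refl _⟩).trans (le_max_left _ _))
  have hLu' : ∀ s ∈ Icc δ₀ τ₁, ‖u s‖ ≤ L := fun s hs => (hLu s hs).trans (le_max_left _ _)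
  have hLv' : ∀ s ∈ Icc δ₀ τ₁, ‖v s‖ ≤ L := fun s hs => (hLv s hs).trans (le_max_right _ _)
  set C₀ := 2 * M * c * L ^ (ρ - 1) / γ with hC₀def
  have hC₀0 : 0 ≤ C₀ := div_nonneg
    (mul_nonneg (mul_nonneg (by linarith) hc.le) (Real.rpow_nonneg hL0 _)) hγ0.le
  set δ' := ((2 * C₀ + 1)⁻¹) ^ γ⁻¹ with hδ'def
  have hδ'0 : 0 < δ' := Real.rpow_pos_of_pos (inv_pos.mpr (by linarith)) _
  have hδ'pow : δ' ^ γ = (2 * C₀ + 1)⁻¹ :=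
    Real.rpow_inv_rpow (inv_pos.mpr (by linarith)).le hγ0.ne'
  -- the extension step
  have hstep : ∀ a, δ₀ ≤ a → a ≤ τ₁ → EqOn u v (Ioc 0 a) →
      EqOn u v (Ioc 0 (min (a + δ') τ₁)) := by
    intro a ha0 haτ heqa
    set b := min (a + δ') τ₁ with hbdef
    have hab : a ≤ b := le_min (by linarith) haτ
    have hbτ : b ≤ τ₁ := min_le_right _ _
    have hba : b - a ≤ δ' := by
      have := min_le_left (a + δ') τ₁
      linarith
    have ha0' : (0:ℝ) < a := lt_of_lt_of_le hδ₀0 ha0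
    have hIccb : Icc a b ⊆ Icc δ₀ τ₁ := fun x hx => ⟨ha0.trans hx.1, hx.2.trans hbτ⟩
    have hwcont : ContinuousOn (fun s => ‖u s - v s‖) (Icc a b) :=
      ((hucont.sub hvcont).norm).mono fun x hx => hIccsub (hIccb hx)
    have hPbdd : BddAbove ((fun s => ‖u s - v s‖) '' Icc a b) :=
      (isCompact_Icc.image_of_continuousOn hwcont).bddAbove
    have hPmem : ∀ s ∈ Icc a b, ‖u s - v s‖ ∈ (fun s => ‖u s - v s‖) '' Icc a b :=
      fun s hs => ⟨s, hs, rfl⟩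
    have hPne : ((fun s => ‖u s - v s‖) '' Icc a b).Nonempty :=
      ⟨_, hPmem a ⟨le_refl _, hab⟩⟩
    set P := sSup ((fun s => ‖u s - v s‖) '' Icc a b) with hPdef
    have hP0 : 0 ≤ P := le_trans (norm_nonneg _) (le_csSup hPbdd (hPmem a ⟨le_refl _, hab⟩))
    have hPel : ∀ s ∈ Icc a b, ‖u s - v s‖ ≤ P := fun s hs => le_csSup hPbdd (hPmem s hs)
    have hmain : ∀ t ∈ Ioc a b, ‖u t - v t‖ ≤ (1/2) * P := by
      intro t ht
      have hat : a < t := ht.1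
      have ht0 : (0:ℝ) < t := ha0'.trans hat
      have htτ : t ∈ Ioc (0:ℝ) τ₁ := ⟨ht0, ht.2.trans hbτ⟩
      obtain ⟨hiu, _⟩ := huI t htτ
      obtain ⟨hiv, _⟩ := hvI t htτ
      have hidiff : IntervalIntegrable
          (fun s => R (t - s) (f (u s)) - R (t - s) (f (v s))) volume 0 t := hiu.sub hiv
      have hsub1 : uIcc (0:ℝ) a ⊆ uIcc (0:ℝ) t := by
        rw [uIcc_of_le ha0'.le, uIcc_of_le ht0.le]
        exact Icc_subset_Icc (le_refl _) hat.le
      have hsub2 : uIcc a t ⊆ uIcc (0:ℝ) t := by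
        rw [uIcc_of_le hat.le, uIcc_of_le ht0.le]
        exact Icc_subset_Icc ha0'.le (le_refl _)
      have hi1 := hidiff.mono_set hsub1
      have hi2 := hidiff.mono_set hsub2
      have hsplit : (∫ s in (0:ℝ)..t, (R (t - s) (f (u s)) - R (t - s) (f (v s)))) =
          (∫ s in (0:ℝ)..a, (R (t - s) (f (u s)) - R (t - s) (f (v s)))) +
            ∫ s in a..t, (R (t - s) (f (u s)) - R (t - s) (f (v s))) :=
        (intervalIntegral.integral_add_adjacent_intervals hi1 hi2).symm
      have hzero : (∫ s in (0:ℝ)..a, (R (t - s) (f (u s)) - R (t - s) (f (v s)))) = 0 := by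
        rw [intervalIntegral.integral_of_le ha0'.le,
          setIntegral_congr_fun (g := fun _ => (0:V)) measurableSet_Ioc
            (fun s hs => by simp [heqa hs])]
        simp
      have hweq : u t - v t = ∫ s in a..t, (R (t - s) (f (u s)) - R (t - s) (f (v s))) := by
        rw [hw_eq t htτ, hsplit, hzero, zero_add]
      set C₁ := 2 * M * c * L ^ (ρ - 1) * P with hC₁def
      have hC₁0 : 0 ≤ C₁ :=
        mul_nonneg (mul_nonneg (mul_nonneg (by linarith) hc.le) (Real.rpow_nonneg hL0 _)) hP0
      have hmint : IntervalIntegrable (fun s => C₁ * (t - s) ^ (γ - 1)) volume a t := by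
        have h0 : IntervalIntegrable (fun x : ℝ => x ^ (γ - 1)) volume 0 (t - a) :=
          intervalIntegrable_rpow' (by linarith)
        have h1 := h0.comp_sub_left t
        rw [sub_zero, sub_sub_cancel] at h1
        exact h1.symm.const_mul _
      have hmaj : ∀ᵐ s ∂(volume.restrict (Ι a t)),
          ‖R (t - s) (f (u s)) - R (t - s) (f (v s))‖ ≤ C₁ * (t - s) ^ (γ - 1) := by
        have h1 : ∀ᵐ s ∂(volume.restrict (Ι a t)), s ∈ Ι a t :=
          ae_restrict_mem measurableSet_uIoc
        filter_upwards [h1, ae_ne_restrict (Ι a t) t] with s hsI hst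
        rw [uIoc_of_le hat.le] at hsI
        have hs : s ∈ Ioo a t := ⟨hsI.1, lt_of_le_of_ne hsI.2 hst⟩
        have hs0 : (0:ℝ) < s := ha0'.trans hs.1
        have hsL : s ∈ Icc δ₀ τ₁ := ⟨ha0.trans hs.1.le, hs.2.le.trans (ht.2.trans hbτ)⟩
        have hsP : s ∈ Icc a b := ⟨hs.1.le, hs.2.le.trans ht.2⟩
        have h3 : ‖u s‖ ^ (ρ - 1) ≤ L ^ (ρ - 1) :=
          Real.rpow_le_rpow (norm_nonneg _) (hLu' s hsL) hρ1.le
        have h4 : ‖v s‖ ^ (ρ - 1) ≤ L ^ (ρ - 1) :=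
          Real.rpow_le_rpow (norm_nonneg _) (hLv' s hsL) hρ1.le
        have h5 := hPel s hsP
        have hM1 : 0 ≤ M * (t - s) ^ (γ - 1) :=
          mul_nonneg hM.le (Real.rpow_nonneg (by linarith [hs.2]) _)
        calc ‖R (t - s) (f (u s)) - R (t - s) (f (v s))‖
            ≤ M * (t - s) ^ (γ - 1) *
              (c * (‖u s‖ ^ (ρ - 1) + ‖v s‖ ^ (ρ - 1)) * ‖u s - v s‖) :=
              hbound t s hs0 hs.2
          _ ≤ M * (t - s) ^ (γ - 1) * (c * (L ^ (ρ - 1) + L ^ (ρ - 1)) * P) := by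
              refine mul_le_mul_of_nonneg_left ?_ hM1
              refine mul_le_mul (mul_le_mul_of_nonneg_left (add_le_add h3 h4) hc.le) h5
                (norm_nonneg _) ?_
              refine mul_nonneg hc.le (add_nonneg (Real.rpow_nonneg hL0 _)
                (Real.rpow_nonneg hL0 _))
          _ = C₁ * (t - s) ^ (γ - 1) := by rw [hC₁def]; ring
      have hmval : (∫ s in a..t, C₁ * (t - s) ^ (γ - 1)) = C₁ * ((t - a) ^ γ / γ) := by
        rw [intervalIntegral.integral_const_mul]
        congr 1
        have h1 := intervalIntegral.integral_comp_sub_left (a := a) (b := t)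
          (fun x : ℝ => x ^ (γ - 1)) t
        beta_reduce at h1
        rw [h1, sub_self, integral_rpow (Or.inl (by linarith : (-1:ℝ) < γ - 1)),
          show γ - 1 + 1 = γ from by ring, Real.zero_rpow hγ0.ne', sub_zero]
      have habs : |∫ s in a..t, C₁ * (t - s) ^ (γ - 1)| = C₁ * ((t - a) ^ γ / γ) := by
        rw [hmval]
        exact abs_of_nonneg (mul_nonneg hC₁0
          (div_nonneg (Real.rpow_nonneg (by linarith) _) hγ0.le))
      rw [hweq]
      calc ‖∫ s in a..t, (R (t - s) (f (u s)) - R (t - s) (f (v s)))‖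
          ≤ |∫ s in a..t, C₁ * (t - s) ^ (γ - 1)| :=
            intervalIntegral.norm_integral_le_abs_of_norm_le hmaj hmint
        _ = C₁ * ((t - a) ^ γ / γ) := habs
        _ ≤ C₁ * (δ' ^ γ / γ) := by
            refine mul_le_mul_of_nonneg_left ?_ hC₁0
            exact (div_le_div_iff_of_pos_right hγ0).mpr
              (Real.rpow_le_rpow (by linarith) (by linarith [ht.2]) hγ0.le)
        _ ≤ (1/2) * P := by
            rw [hδ'pow, hC₁def]
            have key : 2 * M * c * L ^ (ρ - 1) / γ * (2 * C₀ + 1)⁻¹ ≤ 1/2 := by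
              rw [← hC₀def, ← div_eq_mul_inv, div_le_iff₀ (by linarith : (0:ℝ) < 2 * C₀ + 1)]
              linarith
            calc 2 * M * c * L ^ (ρ - 1) * P * ((2 * C₀ + 1)⁻¹ / γ)
                = (2 * M * c * L ^ (ρ - 1) / γ * (2 * C₀ + 1)⁻¹) * P := by ring
              _ ≤ (1/2) * P := mul_le_mul_of_nonneg_right key hP0
    have hP_half : P ≤ (1/2) * P := by
      apply csSup_le hPne
      rintro x ⟨s, hs, rfl⟩
      show ‖u s - v s‖ ≤ (1/2) * P
      rcases eq_or_lt_of_le hs.1 with h | h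
      · have heqs : u s = v s := heqa ⟨by linarith [ha0'], h ▸ le_refl a⟩
        rw [heqs, sub_self, norm_zero]
        linarith
      · exact hmain s ⟨h, hs.2⟩
    have hPzero : P = 0 := by linarith
    intro x hx
    rcases le_or_gt x a with h | h
    · exact heqa ⟨hx.1, h⟩
    · have h6 := hmain x ⟨h, hx.2⟩
      rw [hPzero] at h6
      have h7 : ‖u x - v x‖ = 0 := le_antisymm (by linarith) (norm_nonneg _)
      exact sub_eq_zero.mp (norm_eq_zero.mp h7)
  -- conclude by a supremum argument
  set S := {x : ℝ | x ∈ Icc δ₀ τ₁ ∧ EqOn u v (Ioc 0 x)} with hSdef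
  have hδS : δ₀ ∈ S := ⟨⟨le_refl _, hδ₀τ⟩, heq0⟩
  have hSne : S.Nonempty := ⟨δ₀, hδS⟩
  have hSbdd : BddAbove S := ⟨τ₁, fun x hx => hx.1.2⟩
  set t₀ := sSup S with ht₀def
  have hδt₀ : δ₀ ≤ t₀ := le_csSup hSbdd hδS
  have ht₀τ : t₀ ≤ τ₁ := csSup_le hSne fun x hx => hx.1.2
  have ht₀eq : EqOn u v (Ioc 0 t₀) := by
    intro s hs
    rcases le_or_gt s δ₀ with h | h
    · exact heq0 ⟨hs.1, h⟩
    · have hy : max (s - δ') δ₀ < t₀ := by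
        apply max_lt
        · linarith [hs.2, hδ'0]
        · linarith [hs.2]
      obtain ⟨a, haS, hya⟩ := exists_lt_of_lt_csSup hSne hy
      have h1 := hstep a haS.1.1 haS.1.2 haS.2
      refine h1 ⟨hs.1, le_min ?_ (hs.2.trans ht₀τ)⟩
      have h2 := (le_max_left (s - δ') δ₀).trans_lt hya
      linarith
  rcases eq_or_lt_of_le ht₀τ with h | h
  · exact h ▸ ht₀eq
  · exfalso
    have hb : min (t₀ + δ') τ₁ ∈ S := by
      refine ⟨⟨le_min (by linarith) (by linarith), min_le_right _ _⟩, ?_⟩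
      exact hstep t₀ hδt₀ ht₀τ ht₀eq
    have h2 : min (t₀ + δ') τ₁ ≤ t₀ := le_csSup hSbdd hb
    have h3 : t₀ < min (t₀ + δ') τ₁ := lt_min (by linarith) h
    linarith
end

section
/- Assume the abstract setting described in the context. Let 0 < τ₀ < τ', let g : (0,τ'] → V be continuous, and let u, v : (0,τ'] → V both be mild solutions with forcing g on (0,τ'] such that u(t) = v(t) for all t ∈ (0,τ₀]. Then u(t) = v(t) for all t ∈ (0,τ']. -/
open MeasureTheory Set Filter Topology intervalIntegral
open scoped ENNReal

/-- **Uniqueness of continuation (Part 3 of the proof of Theorem 1.1(D)).**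
If `u` and `v` are mild solutions with the same forcing `g` on `(0,τ']` which agree on
`(0,τ₀]` for some `0 < τ₀ < τ'`, then they agree on all of `(0,τ']`. -/
theorem uniqueness_of_continuation
    {V W : Type*} [NormedAddCommGroup V] [NormedSpace ℝ V] [CompleteSpace V]
    [NormedAddCommGroup W] [NormedSpace ℝ W] [CompleteSpace W]
    (ρ α ε M c B : ℝ)
    (hρ : 1 < ρ) (hα : 1 < α) (hε : 0 < ε) (hαρε : α * ρ * ε < 1)
    (hM : 0 < M) (hc : 0 < c)
    (R : ℝ → W →L[ℝ] V)
    (hRcont : ∀ w : W, ContinuousOn (fun t => R t w) (Ioi (0:ℝ)))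
    (hRbound : ∀ t > (0:ℝ), ∀ w : W, ‖R t w‖ ≤ M * t ^ (α * (ρ - 1) * ε - 1) * ‖w‖)
    (f : V → W) (hf0 : f 0 = 0)
    (hf : ∀ x y : V, ‖f x - f y‖ ≤ c * (‖x‖ ^ (ρ - 1) + ‖y‖ ^ (ρ - 1)) * ‖x - y‖)
    (hBint : IntervalIntegrable
      (fun s => (1 - s) ^ (α * (ρ - 1) * ε - 1) * s ^ (-(α * ρ * ε))) volume 0 1)
    (hB : B = ∫ s in (0:ℝ)..1, (1 - s) ^ (α * (ρ - 1) * ε - 1) * s ^ (-(α * ρ * ε)))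
    (τ₀ τ' : ℝ) (hτ₀ : 0 < τ₀) (hττ : τ₀ < τ')
    (g : ℝ → V) (hg : ContinuousOn g (Ioc 0 τ'))
    (u v : ℝ → V)
    (hu : IsMildSolutionOn R f g u (Ioc 0 τ'))
    (hv : IsMildSolutionOn R f g v (Ioc 0 τ'))
    (hagree : EqOn u v (Ioc 0 τ₀)) :
    EqOn u v (Ioc 0 τ') := by
  set β := α * (ρ - 1) * ε with hβdef
  have hρ1 : (0:ℝ) < ρ - 1 := by linarith
  have hβ : 0 < β := by
    have : (0:ℝ) < α := by linarith
    positivity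
  have hβ1 : (-1:ℝ) < β - 1 := by linarith
  -- bounds for u and v on [τ₀, τ']
  have hsub : Icc τ₀ τ' ⊆ Ioc (0:ℝ) τ' := fun x hx => ⟨lt_of_lt_of_le hτ₀ hx.1, hx.2⟩
  obtain ⟨Cu, hCu⟩ := isCompact_Icc.exists_bound_of_continuousOn (hu.1.mono hsub)
  obtain ⟨Cv, hCv⟩ := isCompact_Icc.exists_bound_of_continuousOn (hv.1.mono hsub)
  set C := max (max Cu Cv) 1 with hCdef
  have hC1 : (1:ℝ) ≤ C := le_max_right _ _
  have hC0 : (0:ℝ) < C := lt_of_lt_of_le one_pos hC1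
  have hCu' : ∀ s ∈ Icc τ₀ τ', ‖u s‖ ≤ C := fun s hs =>
    (hCu s hs).trans ((le_max_left Cu Cv).trans (le_max_left _ _))
  have hCv' : ∀ s ∈ Icc τ₀ τ', ‖v s‖ ≤ C := fun s hs =>
    (hCv s hs).trans ((le_max_right Cu Cv).trans (le_max_left _ _))
  set K := M * (c * (C ^ (ρ - 1) + C ^ (ρ - 1))) with hKdef
  have hK : 0 < K := by positivity
  set δ₀ := (β / (2 * K)) ^ β⁻¹ with hδ₀def
  have hδ₀ : 0 < δ₀ := Real.rpow_pos_of_pos (by positivity) _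
  have hδ₀β : K * (δ₀ ^ β) / β = 1 / 2 := by
    rw [hδ₀def, Real.rpow_inv_rpow (by positivity) (ne_of_gt hβ)]
    field_simp
  -- (A) the difference identity
  have hA : ∀ t ∈ Ioc (0:ℝ) τ',
      IntervalIntegrable (fun s => R (t - s) (f (u s) - f (v s))) volume 0 t ∧
      u t - v t = ∫ s in (0:ℝ)..t, R (t - s) (f (u s) - f (v s)) := by
    intro t ht
    obtain ⟨hiu, hequ⟩ := hu.2 t ht
    obtain ⟨hiv, heqv⟩ := hv.2 t ht
    have hfun : (fun s => R (t - s) (f (u s) - f (v s)))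
        = fun s => R (t - s) (f (u s)) - R (t - s) (f (v s)) := by
      funext s; rw [map_sub]
    refine ⟨by rw [hfun]; exact hiu.sub hiv, ?_⟩
    rw [hfun, intervalIntegral.integral_sub hiu hiv, hequ, heqv]
    abel
  -- the one-step extension lemma
  have hstep : ∀ a, τ₀ ≤ a → a ≤ τ' → EqOn u v (Ioc 0 a) →
      EqOn u v (Ioc 0 (min (a + δ₀) τ')) := by
    intro a ha1 ha2 hEq
    set b := min (a + δ₀) τ' with hbdef
    rcases le_or_gt b a with hab | hab
    · exact fun s hs => hEq ⟨hs.1, hs.2.trans hab⟩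
    have hb2 : b ≤ τ' := min_le_right _ _
    have hba : b - a ≤ δ₀ := by
      have : b ≤ a + δ₀ := min_le_left _ _
      linarith
    have ha0 : 0 < a := lt_of_lt_of_le hτ₀ ha1
    have hIccsub : Icc a b ⊆ Ioc (0:ℝ) τ' := fun x hx =>
      ⟨lt_of_lt_of_le ha0 hx.1, hx.2.trans hb2⟩
    have hφcont : ContinuousOn (fun s => ‖u s - v s‖) (Icc a b) :=
      ((hu.1.mono hIccsub).sub (hv.1.mono hIccsub)).norm
    obtain ⟨s₀, hs₀mem, hs₀max⟩ :=
      isCompact_Icc.exists_isMaxOn (nonempty_Icc.2 hab.le) hφcont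
    set Wm := ‖u s₀ - v s₀‖ with hWdef
    have hWnn : 0 ≤ Wm := norm_nonneg _
    have hWb : ∀ s ∈ Icc a b, ‖u s - v s‖ ≤ Wm := fun s hs => hs₀max hs
    -- key estimate
    have hkey : ∀ t ∈ Ioc a b, ‖u t - v t‖ ≤ Wm / 2 := by
      intro t ht
      have hat : a < t := ht.1
      have htb : t ≤ b := ht.2
      have ht' : t ∈ Ioc (0:ℝ) τ' := ⟨lt_trans ha0 hat, htb.trans hb2⟩
      obtain ⟨hint, heq⟩ := hA t ht'
      have h0t : (0:ℝ) ≤ t := ht'.1.le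
      have hsub1 : Set.uIcc (0:ℝ) a ⊆ Set.uIcc (0:ℝ) t := by
        rw [Set.uIcc_of_le ha0.le, Set.uIcc_of_le h0t]
        exact Icc_subset_Icc le_rfl (le_of_lt hat)
      have hsub2 : Set.uIcc a t ⊆ Set.uIcc (0:ℝ) t := by
        rw [Set.uIcc_of_le hat.le, Set.uIcc_of_le h0t]
        exact Icc_subset_Icc ha0.le le_rfl
      have hint1 := hint.mono_set hsub1
      have hint2 := hint.mono_set hsub2
      have hzero : (∫ s in (0:ℝ)..a, R (t - s) (f (u s) - f (v s))) = 0 := by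
        rw [intervalIntegral.integral_congr_ae (g := fun _ => (0:V))
          (Filter.Eventually.of_forall fun s hs => ?_), intervalIntegral.integral_zero]
        rw [Set.uIoc_of_le ha0.le] at hs
        rw [hEq hs, sub_self, map_zero]
      have heq2 : u t - v t = ∫ s in a..t, R (t - s) (f (u s) - f (v s)) := by
        rw [heq, ← intervalIntegral.integral_add_adjacent_intervals hint1 hint2, hzero,
          zero_add]
      have hrint : IntervalIntegrable (fun s => K * Wm * (t - s) ^ (β - 1)) volume a t := by
        have h1 := (intervalIntegral.intervalIntegrable_rpow' (a := t - a) (b := t - t)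
          hβ1).comp_sub_left t
        have h2 : IntervalIntegrable (fun s => (t - s) ^ (β - 1)) volume a t := by
          simpa using h1
        simpa [mul_assoc] using h2.const_mul (K * Wm)
      have hne : ∀ᵐ s ∂(volume.restrict (Set.uIoc a t)), s ≠ t := by
        refine ae_restrict_of_ae ?_
        rw [ae_iff]
        simpa [not_not, setOf_eq_eq_singleton] using (Real.volume_singleton (a := t))
      have hbound : ∀ᵐ s ∂(volume.restrict (Set.uIoc a t)),
          ‖R (t - s) (f (u s) - f (v s))‖ ≤ K * Wm * (t - s) ^ (β - 1) := by
        filter_upwards [ae_restrict_mem measurableSet_uIoc, hne] with s hs hsne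
        rw [Set.uIoc_of_le hat.le] at hs
        have hst : s < t := lt_of_le_of_ne hs.2 hsne
        have hts : 0 < t - s := sub_pos.2 hst
        have hsmem : s ∈ Icc τ₀ τ' := ⟨ha1.trans hs.1.le, hs.2.trans (htb.trans hb2)⟩
        have h1 := hRbound (t - s) hts (f (u s) - f (v s))
        have h2 := hf (u s) (v s)
        have h3 : ‖u s‖ ^ (ρ - 1) ≤ C ^ (ρ - 1) :=
          Real.rpow_le_rpow (norm_nonneg _) (hCu' s hsmem) (le_of_lt hρ1)
        have h4 : ‖v s‖ ^ (ρ - 1) ≤ C ^ (ρ - 1) :=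
          Real.rpow_le_rpow (norm_nonneg _) (hCv' s hsmem) (le_of_lt hρ1)
        have h5 : ‖u s - v s‖ ≤ Wm := hWb s ⟨hs.1.le, hs.2.trans htb⟩
        have hpow : (0:ℝ) < (t - s) ^ (β - 1) := Real.rpow_pos_of_pos hts _
        calc ‖R (t - s) (f (u s) - f (v s))‖
            ≤ M * (t - s) ^ (β - 1) * ‖f (u s) - f (v s)‖ := h1
          _ ≤ M * (t - s) ^ (β - 1) *
              (c * (C ^ (ρ - 1) + C ^ (ρ - 1)) * Wm) := by
              refine mul_le_mul_of_nonneg_left ?_ (by positivity)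
              calc ‖f (u s) - f (v s)‖
                  ≤ c * (‖u s‖ ^ (ρ - 1) + ‖v s‖ ^ (ρ - 1)) * ‖u s - v s‖ := h2
                _ ≤ c * (C ^ (ρ - 1) + C ^ (ρ - 1)) * Wm := by
                    apply mul_le_mul
                    · apply mul_le_mul_of_nonneg_left (by linarith) hc.le
                    · exact h5
                    · exact norm_nonneg _
                    · positivity
          _ = K * Wm * (t - s) ^ (β - 1) := by rw [hKdef]; ring
      have hnorm := intervalIntegral.norm_integral_le_abs_of_norm_le hbound hrint
      have hval : (∫ s in a..t, K * Wm * (t - s) ^ (β - 1))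
          = K * Wm * ((t - a) ^ β / β) := by
        rw [intervalIntegral.integral_const_mul]
        congr 1
        have hc1 := intervalIntegral.integral_comp_sub_left (a := a) (b := t)
          (fun x => x ^ (β - 1)) t
        rw [hc1, sub_self, integral_rpow (Or.inl hβ1), sub_add_cancel,
          Real.zero_rpow (ne_of_gt hβ)]
        ring
      have hintnn : (0:ℝ) ≤ K * Wm * ((t - a) ^ β / β) :=
        mul_nonneg (mul_nonneg hK.le hWnn)
          (div_nonneg (Real.rpow_nonneg (by linarith) _) hβ.le)
      rw [heq2]
      calc ‖∫ s in a..t, R (t - s) (f (u s) - f (v s))‖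
          ≤ |∫ s in a..t, K * Wm * (t - s) ^ (β - 1)| := hnorm
        _ = K * Wm * ((t - a) ^ β / β) := by rw [hval, abs_of_nonneg hintnn]
        _ ≤ K * Wm * (δ₀ ^ β / β) := by
            refine mul_le_mul_of_nonneg_left ?_ (mul_nonneg hK.le hWnn)
            have h6 : (t - a) ^ β ≤ δ₀ ^ β :=
              Real.rpow_le_rpow (by linarith) (by linarith) hβ.le
            exact div_le_div_of_nonneg_right h6 hβ.le
        _ = Wm * (K * δ₀ ^ β / β) := by ring
        _ = Wm / 2 := by rw [hδ₀β]; ring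
    -- the max is zero
    have hW0 : Wm = 0 := by
      rcases eq_or_lt_of_le hs₀mem.1 with h | h
      · have huva : u a = v a := hEq ⟨ha0, le_rfl⟩
        rw [hWdef, ← h, huva, sub_self, norm_zero]
      · have h1 := hkey s₀ ⟨h, hs₀mem.2⟩
        have : Wm ≤ Wm / 2 := h1
        linarith [le_antisymm (by linarith) hWnn]
    intro s hs
    rcases le_or_gt s a with h | h
    · exact hEq ⟨hs.1, h⟩
    · have h1 : ‖u s - v s‖ ≤ 0 := hW0 ▸ hWb s ⟨h.le, hs.2⟩
      have h2 : u s - v s = 0 := by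
        simpa using le_antisymm h1 (norm_nonneg _)
      exact sub_eq_zero.mp h2
  -- induction
  have hind : ∀ n : ℕ, EqOn u v (Ioc 0 (min (τ₀ + n * δ₀) τ')) := by
    intro n
    induction n with
    | zero =>
      simpa [min_eq_left hττ.le] using hagree
    | succ n ih =>
      rcases le_or_gt (τ₀ + n * δ₀) τ' with h | h
      · rw [min_eq_left h] at ih
        have hτ₀a : τ₀ ≤ τ₀ + n * δ₀ := le_add_of_nonneg_right (by positivity)
        have h2 := hstep (τ₀ + n * δ₀) hτ₀a h ih
        have hmineq : min (τ₀ + n * δ₀ + δ₀) τ' = min (τ₀ + (n + 1 : ℕ) * δ₀) τ' := by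
          congr 1
          push_cast
          ring
        rw [hmineq] at h2
        exact h2
      · intro s hs
        apply ih
        refine ⟨hs.1, ?_⟩
        have h1 : min (τ₀ + n * δ₀) τ' = τ' := min_eq_right h.le
        rw [h1]
        exact hs.2.trans (min_le_right _ _)
  obtain ⟨n, hn⟩ := exists_nat_ge ((τ' - τ₀) / δ₀)
  have hfin : τ' ≤ τ₀ + n * δ₀ := by
    rw [div_le_iff₀ hδ₀] at hn
    linarith
  intro s hs
  exact hind n ⟨hs.1, by rw [min_eq_right hfin]; exact hs.2⟩
end

section
/- Assume the abstract setting described in the context. Let τ* ∈ (0,∞), let g : (0,τ*] → V be continuous, and let u : (0,τ*) → V be continuous such that for every t ∈ (0,τ*) the Bochner integral ∫₀^t R(t−s) f(u(s)) ds converges and u(t) = g(t) + ∫₀^t R(t−s) f(u(s)) ds. If sup_{t∈(0,τ*)} t^{αε}‖u(t)‖_V < ∞, then the limit ū := lim_{t→τ*⁻} u(t) exists in V, and the function equal to u on (0,τ*) and to ū at τ* is a mild solution with forcing g on (0,τ*]. -/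
open MeasureTheory Set Filter Topology intervalIntegral
open scoped ENNReal

lemma Rjoint {V W : Type*} [NormedAddCommGroup V] [NormedSpace ℝ V]
    [NormedAddCommGroup W] [NormedSpace ℝ W]
    (M θ : ℝ) (R : ℝ → W →L[ℝ] V)
    (hRcont : ∀ w : W, ContinuousOn (fun t => R t w) (Ioi (0:ℝ)))
    (hRb : ∀ t > (0:ℝ), ∀ w : W, ‖R t w‖ ≤ M * t ^ θ * ‖w‖)
    {ι : Type*} {l : Filter ι} {s : ι → ℝ} {w : ι → W} {s₀ : ℝ} {w₀ : W}
    (hs : Tendsto s l (𝓝 s₀)) (hs₀ : 0 < s₀) (hw : Tendsto w l (𝓝 w₀)) :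
    Tendsto (fun i => R (s i) (w i)) l (𝓝 (R s₀ w₀)) := by
  have h1 : Tendsto (fun i => R (s i) w₀) l (𝓝 (R s₀ w₀)) :=
    (((hRcont w₀).continuousAt (Ioi_mem_nhds hs₀)).tendsto).comp hs
  have hwn : Tendsto (fun i => ‖w i - w₀‖) l (𝓝 0) := by
    have h : Tendsto (fun i => w i - w₀) l (𝓝 (w₀ - w₀)) := hw.sub tendsto_const_nhds
    rw [sub_self] at h
    simpa using h.norm
  have hrp : Tendsto (fun i => (s i) ^ θ) l (𝓝 (s₀ ^ θ)) :=
    ((Real.continuousAt_rpow_const s₀ θ (Or.inl hs₀.ne')).tendsto).comp hs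
  have h2 : Tendsto (fun i => R (s i) (w i) - R (s i) w₀) l (𝓝 0) := by
    have hev : ∀ᶠ i in l, ‖R (s i) (w i) - R (s i) w₀‖ ≤ M * (s i) ^ θ * ‖w i - w₀‖ := by
      filter_upwards [hs.eventually (eventually_gt_nhds hs₀)] with i hi
      rw [← map_sub]
      exact hRb _ hi _
    have hR : Tendsto (fun i => M * (s i) ^ θ * ‖w i - w₀‖) l (𝓝 0) := by
      have h : Tendsto (fun i => M * (s i) ^ θ * ‖w i - w₀‖) l (𝓝 (M * s₀ ^ θ * 0)) :=
        ((tendsto_const_nhds (x := M)).mul hrp).mul hwn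
      simpa using h
    exact squeeze_zero_norm' hev hR
  have := h2.add h1
  simpa using this

lemma fcont {V W : Type*} [NormedAddCommGroup V] [NormedSpace ℝ V]
    [NormedAddCommGroup W] [NormedSpace ℝ W]
    (ρ c : ℝ) (hρ : 1 < ρ) (f : V → W)
    (hf : ∀ x y : V, ‖f x - f y‖ ≤ c * (‖x‖ ^ (ρ - 1) + ‖y‖ ^ (ρ - 1)) * ‖x - y‖) :
    Continuous f := by
  rw [continuous_iff_continuousAt]
  intro x
  rw [ContinuousAt, tendsto_iff_norm_sub_tendsto_zero]
  have hnc : Tendsto (fun y : V => ‖y‖ ^ (ρ - 1)) (𝓝 x) (𝓝 (‖x‖ ^ (ρ - 1))) :=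
    ((Real.continuousAt_rpow_const ‖x‖ (ρ - 1) (Or.inr (by linarith))).tendsto).comp
      (continuous_norm.tendsto x)
  have hsub : Tendsto (fun y : V => ‖y - x‖) (𝓝 x) (𝓝 0) := by
    have h : Tendsto (fun y : V => y - x) (𝓝 x) (𝓝 (x - x)) :=
      (tendsto_id (α := V) (x := 𝓝 x)).sub tendsto_const_nhds
    rw [sub_self] at h
    simpa using h.norm
  have hR : Tendsto (fun y : V => c * (‖y‖ ^ (ρ - 1) + ‖x‖ ^ (ρ - 1)) * ‖y - x‖)
      (𝓝 x) (𝓝 0) := by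
    have h : Tendsto (fun y : V => c * (‖y‖ ^ (ρ - 1) + ‖x‖ ^ (ρ - 1)) * ‖y - x‖)
        (𝓝 x) (𝓝 (c * (‖x‖ ^ (ρ - 1) + ‖x‖ ^ (ρ - 1)) * 0)) :=
      ((tendsto_const_nhds (x := c)).mul (hnc.add (tendsto_const_nhds (x := ‖x‖ ^ (ρ - 1))))).mul hsub
    simpa using h
  exact squeeze_zero_norm' (Eventually.of_forall fun y => by simpa using hf y x) hR

lemma fnormbound {V W : Type*} [NormedAddCommGroup V] [NormedSpace ℝ V]
    [NormedAddCommGroup W] [NormedSpace ℝ W]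
    (ρ c : ℝ) (hρ : 1 < ρ) (f : V → W) (hf0 : f 0 = 0)
    (hf : ∀ x y : V, ‖f x - f y‖ ≤ c * (‖x‖ ^ (ρ - 1) + ‖y‖ ^ (ρ - 1)) * ‖x - y‖)
    (v : V) : ‖f v‖ ≤ c * ‖v‖ ^ ρ := by
  have h := hf v 0
  rw [hf0, sub_zero, sub_zero, norm_zero, Real.zero_rpow (by linarith : ρ - 1 ≠ 0),
    add_zero] at h
  rcases eq_or_lt_of_le (norm_nonneg v) with hv | hv
  · rw [← hv, Real.zero_rpow (by linarith : ρ ≠ 0)]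
    simpa [← hv] using h
  · calc ‖f v‖ ≤ c * ‖v‖ ^ (ρ - 1) * ‖v‖ := h
      _ = c * ‖v‖ ^ ρ := by
          rw [mul_assoc, ← Real.rpow_add_one hv.ne']
          ring_nf

lemma IntervalIntegrable.congr_ae_global {E : Type*} [NormedAddCommGroup E]
    {f g : ℝ → E} {a b : ℝ}
    (hf : IntervalIntegrable f volume a b) (h : g =ᵐ[volume] f) :
    IntervalIntegrable g volume a b :=
  ⟨hf.1.congr (ae_restrict_of_ae h.symm), hf.2.congr (ae_restrict_of_ae h.symm)⟩

/-- **Extension to the endpoint (core of the blow-up alternative, Theorem 1.1(D)).**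
If `u` is a mild solution with forcing `g` on the open interval `(0,τ⋆)` whose weighted norm
`t^{αε}‖u t‖` is bounded, then `u` has a limit `ū` as `t → τ⋆⁻` and the function equal to `u`
on `(0,τ⋆)` and to `ū` at `τ⋆` is a mild solution with forcing `g` on `(0,τ⋆]`. -/
theorem extension_to_endpoint
    {V W : Type*} [NormedAddCommGroup V] [NormedSpace ℝ V] [CompleteSpace V]
    [NormedAddCommGroup W] [NormedSpace ℝ W] [CompleteSpace W]
    (ρ α ε M c B : ℝ)
    (hρ : 1 < ρ) (hα : 1 < α) (hε : 0 < ε) (hαρε : α * ρ * ε < 1)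
    (hM : 0 < M) (hc : 0 < c)
    (R : ℝ → W →L[ℝ] V)
    (hRcont : ∀ w : W, ContinuousOn (fun t => R t w) (Ioi (0:ℝ)))
    (hRbound : ∀ t > (0:ℝ), ∀ w : W, ‖R t w‖ ≤ M * t ^ (α * (ρ - 1) * ε - 1) * ‖w‖)
    (f : V → W) (hf0 : f 0 = 0)
    (hf : ∀ x y : V, ‖f x - f y‖ ≤ c * (‖x‖ ^ (ρ - 1) + ‖y‖ ^ (ρ - 1)) * ‖x - y‖)
    (hBint : IntervalIntegrable
      (fun s => (1 - s) ^ (α * (ρ - 1) * ε - 1) * s ^ (-(α * ρ * ε))) volume 0 1)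
    (hB : B = ∫ s in (0:ℝ)..1, (1 - s) ^ (α * (ρ - 1) * ε - 1) * s ^ (-(α * ρ * ε)))
    (τs : ℝ) (hτs : 0 < τs)
    (g : ℝ → V) (hg : ContinuousOn g (Ioc 0 τs))
    (u : ℝ → V) (hu : IsMildSolutionOn R f g u (Ioo 0 τs))
    (hubdd : ∃ C : ℝ, ∀ t ∈ Ioo (0:ℝ) τs, t ^ (α * ε) * ‖u t‖ ≤ C) :
    ∃ ubar : V, Tendsto u (𝓝[Ioo (0:ℝ) τs] τs) (𝓝 ubar) ∧
      IsMildSolutionOn R f g (fun t => if t = τs then ubar else u t) (Ioc 0 τs) := by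
  obtain ⟨huc, humild⟩ := hu
  have hαpos : 0 < α := lt_trans zero_lt_one hα
  have hαε : 0 < α * ε := mul_pos hαpos hε
  have hexp : α * (ρ - 1) * ε = α * ρ * ε - α * ε := by ring
  have hθ : α * (ρ - 1) * ε - 1 < 0 := by rw [hexp]; linarith
  have hβ : 0 < α * ρ * ε := by nlinarith
  obtain ⟨C, hC⟩ := hubdd
  have hC0 : 0 ≤ C :=
    le_trans (by positivity) (hC (τs/2) ⟨half_pos hτs, half_lt_self hτs⟩)
  have hCρ : 0 ≤ C ^ ρ := Real.rpow_nonneg hC0 _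
  have hCnorm : ∀ t ∈ Ioo (0:ℝ) τs, ‖u t‖ ≤ C * t ^ (-(α * ε)) := by
    intro t ht
    have htp : (0:ℝ) < t ^ (α * ε) := Real.rpow_pos_of_pos ht.1 _
    rw [Real.rpow_neg ht.1.le, mul_comm C, inv_mul_eq_div, le_div_iff₀ htp]
    have := hC t ht
    linarith [hC t ht, mul_comm (‖u t‖) (t ^ (α * ε))]
  have hfu : ∀ t ∈ Ioo (0:ℝ) τs, ‖f (u t)‖ ≤ c * C ^ ρ * t ^ (-(α * ρ * ε)) := by
    intro t ht
    have h1 : ‖f (u t)‖ ≤ c * ‖u t‖ ^ ρ := fnormbound ρ c hρ f hf0 hf (u t)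
    have h2 : ‖u t‖ ^ ρ ≤ (C * t ^ (-(α * ε))) ^ ρ :=
      Real.rpow_le_rpow (norm_nonneg _) (hCnorm t ht) (by linarith)
    have h3 : (C * t ^ (-(α * ε))) ^ ρ = C ^ ρ * t ^ (-(α * ρ * ε)) := by
      rw [Real.mul_rpow hC0 (Real.rpow_nonneg ht.1.le _), ← Real.rpow_mul ht.1.le,
        show -(α * ε) * ρ = -(α * ρ * ε) by ring]
    calc ‖f (u t)‖ ≤ c * ‖u t‖ ^ ρ := h1
      _ ≤ c * (C ^ ρ * t ^ (-(α * ρ * ε))) := by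
          rw [← h3]; exact mul_le_mul_of_nonneg_left h2 hc.le
      _ = c * C ^ ρ * t ^ (-(α * ρ * ε)) := by ring
  have hfc : Continuous f := fcont ρ c hρ f hf
  have huA : ∀ t ∈ Ioo (0:ℝ) τs, ContinuousAt u t :=
    fun t ht => huc.continuousAt (isOpen_Ioo.mem_nhds ht)
  set Φ : ℝ → ℝ → V := fun t σ => t • R (t - t * σ) (f (u (t * σ))) with hΦ
  set L : Filter ℝ := 𝓝[Ioo (0:ℝ) τs] τs with hL
  have hLid : Tendsto (fun t : ℝ => t) L (𝓝 τs) :=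
    (tendsto_id).mono_right nhdsWithin_le_nhds
  -- change of variables
  have hchg : ∀ t : ℝ, t ≠ 0 →
      (∫ σ in (0:ℝ)..1, Φ t σ) = ∫ s in (0:ℝ)..t, R (t - s) (f (u s)) := by
    intro t ht
    have h1 : (∫ σ in (0:ℝ)..1, R (t - t * σ) (f (u (t * σ))))
        = t⁻¹ • ∫ s in (t * (0:ℝ))..(t * 1), R (t - s) (f (u s)) :=
      intervalIntegral.integral_comp_mul_left (fun s : ℝ => R (t - s) (f (u s))) ht
    calc (∫ σ in (0:ℝ)..1, Φ t σ)
        = t • ∫ σ in (0:ℝ)..1, R (t - t * σ) (f (u (t * σ))) := by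
          simp only [hΦ]; rw [← intervalIntegral.integral_smul]
      _ = t • (t⁻¹ • ∫ s in (t * (0:ℝ))..(t * 1), R (t - s) (f (u s))) := by rw [h1]
      _ = ∫ s in (0:ℝ)..t, R (t - s) (f (u s)) := by
          rw [smul_smul, mul_inv_cancel₀ ht, one_smul, mul_zero, mul_one]
  -- pointwise limit
  have hptw : ∀ σ ∈ Ioo (0:ℝ) 1, Tendsto (fun t => Φ t σ) L (𝓝 (Φ τs σ)) := by
    intro σ hσ
    have h1 : Tendsto (fun t : ℝ => t - t * σ) L (𝓝 (τs - τs * σ)) :=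
      hLid.sub (hLid.mul_const σ)
    have hpos : 0 < τs - τs * σ := by nlinarith [hσ.1, hσ.2]
    have hmem : τs * σ ∈ Ioo (0:ℝ) τs :=
      ⟨mul_pos hτs hσ.1, mul_lt_of_lt_one_right hτs hσ.2⟩
    have h3 : Tendsto (fun t : ℝ => f (u (t * σ))) L (𝓝 (f (u (τs * σ)))) :=
      (hfc.continuousAt.tendsto).comp (((huA _ hmem).tendsto).comp (hLid.mul_const σ))
    simp only [hΦ]
    exact hLid.smul (Rjoint M _ R hRcont hRbound h1 hpos h3)
  -- continuity in σ
  have hmeasσ : ∀ t ∈ Ioc (0:ℝ) τs, ContinuousOn (fun σ => Φ t σ) (Ioo (0:ℝ) 1) := by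
    intro t ht σ₀ hσ₀
    apply ContinuousAt.continuousWithinAt
    have h1 : Tendsto (fun σ : ℝ => t - t * σ) (𝓝 σ₀) (𝓝 (t - t * σ₀)) :=
      (continuous_const.sub (continuous_mul_left t)).tendsto σ₀
    have hpos : 0 < t - t * σ₀ := by nlinarith [ht.1, hσ₀.1, hσ₀.2]
    have hmem : t * σ₀ ∈ Ioo (0:ℝ) τs :=
      ⟨mul_pos ht.1 hσ₀.1, lt_of_lt_of_le (mul_lt_of_lt_one_right ht.1 hσ₀.2) ht.2⟩
    have h3 : Tendsto (fun σ : ℝ => f (u (t * σ))) (𝓝 σ₀) (𝓝 (f (u (t * σ₀)))) :=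
      (hfc.continuousAt.tendsto).comp
        (((huA _ hmem).tendsto).comp ((continuous_mul_left t).tendsto σ₀))
    simp only [hΦ]
    exact (tendsto_const_nhds (x := t)).smul (Rjoint M _ R hRcont hRbound h1 hpos h3)
  -- the uniform bound
  set K : ℝ := τs * ((τs/2) ^ (α * (ρ - 1) * ε - 1)) * ((τs/2) ^ (-(α * ρ * ε)))
      * (M * (c * C ^ ρ)) with hK
  have hbound : ∀ t ∈ Ioc (τs/2) τs, ∀ σ ∈ Ioo (0:ℝ) 1,
      ‖Φ t σ‖ ≤ K * ((1 - σ) ^ (α * (ρ - 1) * ε - 1) * σ ^ (-(α * ρ * ε))) := by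
    intro t ht σ hσ
    have ht0 : 0 < t := lt_trans (half_pos hτs) ht.1
    have h1σ : 0 < 1 - σ := by linarith [hσ.2]
    have hts : 0 < t - t * σ := by nlinarith
    have htσ : t * σ ∈ Ioo (0:ℝ) τs :=
      ⟨mul_pos ht0 hσ.1, lt_of_lt_of_le (mul_lt_of_lt_one_right ht0 hσ.2) ht.2⟩
    have e2 : ‖R (t - t * σ) (f (u (t * σ)))‖
        ≤ M * (t - t * σ) ^ (α * (ρ - 1) * ε - 1) * ‖f (u (t * σ))‖ :=
      hRbound _ hts _
    have e3 : ‖f (u (t * σ))‖ ≤ c * C ^ ρ * (t * σ) ^ (-(α * ρ * ε)) := hfu _ htσ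
    have e4 : (t - t * σ) ^ (α * (ρ - 1) * ε - 1)
        = t ^ (α * (ρ - 1) * ε - 1) * (1 - σ) ^ (α * (ρ - 1) * ε - 1) := by
      rw [show t - t * σ = t * (1 - σ) by ring, Real.mul_rpow ht0.le h1σ.le]
    have e5 : (t * σ) ^ (-(α * ρ * ε)) = t ^ (-(α * ρ * ε)) * σ ^ (-(α * ρ * ε)) :=
      Real.mul_rpow ht0.le hσ.1.le
    have p1 : t ^ (α * (ρ - 1) * ε - 1) ≤ (τs/2) ^ (α * (ρ - 1) * ε - 1) :=
      Real.rpow_le_rpow_of_nonpos (half_pos hτs) ht.1.le hθ.le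
    have p2 : t ^ (-(α * ρ * ε)) ≤ (τs/2) ^ (-(α * ρ * ε)) :=
      Real.rpow_le_rpow_of_nonpos (half_pos hτs) ht.1.le (by linarith)
    have hAnn : 0 ≤ M * ((1 - σ) ^ (α * (ρ - 1) * ε - 1)) * (c * C ^ ρ)
        * (σ ^ (-(α * ρ * ε))) :=
      mul_nonneg (mul_nonneg (mul_nonneg hM.le (Real.rpow_nonneg h1σ.le _))
        (mul_nonneg hc.le hCρ)) (Real.rpow_nonneg hσ.1.le _)
    have htpart : t * t ^ (α * (ρ - 1) * ε - 1) * t ^ (-(α * ρ * ε))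
        ≤ τs * (τs/2) ^ (α * (ρ - 1) * ε - 1) * (τs/2) ^ (-(α * ρ * ε)) := by
      apply mul_le_mul _ p2 (Real.rpow_nonneg ht0.le _)
      · positivity
      · exact mul_le_mul ht.2 p1 (Real.rpow_nonneg ht0.le _) hτs.le
    calc ‖Φ t σ‖ = t * ‖R (t - t * σ) (f (u (t * σ)))‖ := by
          simp only [hΦ]; rw [norm_smul, Real.norm_eq_abs, abs_of_pos ht0]
      _ ≤ t * (M * (t - t * σ) ^ (α * (ρ - 1) * ε - 1) * ‖f (u (t * σ))‖) :=
          mul_le_mul_of_nonneg_left e2 ht0.le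
      _ ≤ t * (M * (t - t * σ) ^ (α * (ρ - 1) * ε - 1)
            * (c * C ^ ρ * (t * σ) ^ (-(α * ρ * ε)))) := by
          apply mul_le_mul_of_nonneg_left _ ht0.le
          apply mul_le_mul_of_nonneg_left e3
          have : 0 ≤ (t - t * σ) ^ (α * (ρ - 1) * ε - 1) := Real.rpow_nonneg hts.le _
          positivity
      _ = (t * t ^ (α * (ρ - 1) * ε - 1) * t ^ (-(α * ρ * ε)))
            * (M * ((1 - σ) ^ (α * (ρ - 1) * ε - 1)) * (c * C ^ ρ)
              * (σ ^ (-(α * ρ * ε)))) := by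
          rw [e4, e5]; ring
      _ ≤ (τs * (τs/2) ^ (α * (ρ - 1) * ε - 1) * (τs/2) ^ (-(α * ρ * ε)))
            * (M * ((1 - σ) ^ (α * (ρ - 1) * ε - 1)) * (c * C ^ ρ)
              * (σ ^ (-(α * ρ * ε)))) :=
          mul_le_mul_of_nonneg_right htpart hAnn
      _ = K * ((1 - σ) ^ (α * (ρ - 1) * ε - 1) * σ ^ (-(α * ρ * ε))) := by
          rw [hK]; ring
  -- integrable bound
  have hKint : Integrable
      (fun σ => K * ((1 - σ) ^ (α * (ρ - 1) * ε - 1) * σ ^ (-(α * ρ * ε))))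
      (volume.restrict (Ioo (0:ℝ) 1)) := by
    have h1 : IntegrableOn
        (fun σ : ℝ => (1 - σ) ^ (α * (ρ - 1) * ε - 1) * σ ^ (-(α * ρ * ε)))
        (Ioc (0:ℝ) 1) volume :=
      (intervalIntegrable_iff_integrableOn_Ioc_of_le zero_le_one).mp hBint
    exact (h1.mono_set Ioo_subset_Ioc_self).const_mul K
  -- dominated convergence
  have hDCT : Tendsto (fun t => ∫ σ in Ioo (0:ℝ) 1, Φ t σ) L
      (𝓝 (∫ σ in Ioo (0:ℝ) 1, Φ τs σ)) := by
    refine tendsto_integral_filter_of_dominated_convergence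
      (fun σ => K * ((1 - σ) ^ (α * (ρ - 1) * ε - 1) * σ ^ (-(α * ρ * ε))))
      ?_ ?_ hKint ?_
    · filter_upwards [self_mem_nhdsWithin] with t ht
      exact (hmeasσ t ⟨ht.1, ht.2.le⟩).aestronglyMeasurable measurableSet_Ioo
    · have hev : Ioi (τs/2) ∈ L := nhdsWithin_le_nhds (Ioi_mem_nhds (half_lt_self hτs))
      filter_upwards [self_mem_nhdsWithin, hev] with t ht1 ht2
      filter_upwards [ae_restrict_mem measurableSet_Ioo] with σ hσ
      exact hbound t ⟨ht2, ht1.2.le⟩ σ hσ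
    · filter_upwards [ae_restrict_mem measurableSet_Ioo] with σ hσ
      exact hptw σ hσ
  have hIoo : ∀ t : ℝ, (∫ σ in (0:ℝ)..1, Φ t σ) = ∫ σ in Ioo (0:ℝ) 1, Φ t σ := by
    intro t
    rw [intervalIntegral.integral_of_le zero_le_one, integral_Ioc_eq_integral_Ioo]
  set J : V := ∫ σ in Ioo (0:ℝ) 1, Φ τs σ with hJdef
  have hFt : Tendsto (fun t => ∫ s in (0:ℝ)..t, R (t - s) (f (u s))) L (𝓝 J) := by
    apply hDCT.congr'
    filter_upwards [self_mem_nhdsWithin] with t ht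
    rw [← hIoo t, hchg t ht.1.ne']
  have hgt : Tendsto g L (𝓝 (g τs)) :=
    (hg τs ⟨hτs, le_refl τs⟩).mono_left (nhdsWithin_mono τs Ioo_subset_Ioc_self)
  have hulim : Tendsto u L (𝓝 (g τs + J)) := by
    apply (hgt.add hFt).congr'
    filter_upwards [self_mem_nhdsWithin] with t ht
    exact (humild t ht).2.symm
  -- integrability at the endpoint
  have hΦτs_int : IntervalIntegrable (fun σ => Φ τs σ) volume 0 1 := by
    rw [intervalIntegrable_iff_integrableOn_Ioc_of_le zero_le_one]
    have hOoo : IntegrableOn (fun σ => Φ τs σ) (Ioo (0:ℝ) 1) volume := by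
      apply hKint.mono'
        ((hmeasσ τs ⟨hτs, le_refl τs⟩).aestronglyMeasurable measurableSet_Ioo)
      filter_upwards [ae_restrict_mem measurableSet_Ioo] with σ hσ
      exact hbound τs ⟨half_lt_self hτs, le_refl τs⟩ σ hσ
    exact hOoo.congr_set_ae Ioo_ae_eq_Ioc.symm
  have hGint : IntervalIntegrable (fun s => R (τs - s) (f (u s))) volume 0 τs := by
    have h1 : IntervalIntegrable (fun s => Φ τs (τs⁻¹ * s)) volume (0 / τs⁻¹) (1 / τs⁻¹) :=
      hΦτs_int.comp_mul_left (c := τs⁻¹)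
    have h2 : ∀ s : ℝ, Φ τs (τs⁻¹ * s) = τs • R (τs - s) (f (u s)) := by
      intro s
      simp only [hΦ]
      rw [show τs * (τs⁻¹ * s) = s by field_simp]
    simp only [h2, zero_div, one_div, inv_inv] at h1
    have h3 := h1.smul τs⁻¹
    have h4 : (fun s => τs⁻¹ • (τs • R (τs - s) (f (u s))))
        = fun s => R (τs - s) (f (u s)) := by
      funext s
      rw [smul_smul, inv_mul_cancel₀ hτs.ne', one_smul]
    simpa [Pi.smul_def, h4] using h3
  have hJ : (∫ s in (0:ℝ)..τs, R (τs - s) (f (u s))) = J := by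
    rw [← hchg τs hτs.ne', hIoo τs]
  -- assemble
  refine ⟨g τs + J, hulim, ?_, ?_⟩
  · -- continuity of the extension
    intro t ht
    by_cases htt : t = τs
    · subst htt
      rw [ContinuousWithinAt]
      have hvτ : (if t = t then g t + J else u t) = g t + J := if_pos rfl
      simp only [if_pos rfl]
      have hsplit : (𝓝[Ioc (0:ℝ) t] t) = (𝓝[Ioo (0:ℝ) t] t) ⊔ (𝓝[{t}] t) := by
        rw [← nhdsWithin_union, Ioo_union_right ht.1]
      rw [hsplit, tendsto_sup]
      constructor
      · apply hulim.congr'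
        filter_upwards [self_mem_nhdsWithin] with s hs
        exact (if_neg hs.2.ne).symm
      · rw [nhdsWithin_singleton]
        have := tendsto_pure_nhds (fun s => if s = t then g t + J else u s) t
        simpa using this
    · have htoo : t ∈ Ioo 0 τs := ⟨ht.1, lt_of_le_of_ne ht.2 htt⟩
      have hev : (fun s => if s = τs then g τs + J else u s) =ᶠ[𝓝 t] u := by
        filter_upwards [isOpen_Ioo.mem_nhds htoo] with s hs
        exact if_neg hs.2.ne
      exact ((huA t htoo).congr hev.symm).continuousWithinAt
  · -- the integral equation on Ioc
    intro t ht
    have hne : ∀ᵐ s : ℝ ∂volume, s ≠ τs := by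
      rw [ae_iff]
      have hset : {s : ℝ | ¬s ≠ τs} = {τs} := by ext s; simp
      rw [hset]
      exact measure_singleton τs
    have hvae : (fun s => R (t - s) (f ((fun r => if r = τs then g τs + J else u r) s)))
        =ᵐ[volume] (fun s => R (t - s) (f (u s))) := by
      filter_upwards [hne] with s hs
      simp only [if_neg hs]
    have hIu : IntervalIntegrable (fun s => R (t - s) (f (u s))) volume 0 t := by
      by_cases htt : t = τs
      · subst htt; exact hGint
      · exact (humild t ⟨ht.1, lt_of_le_of_ne ht.2 htt⟩).1
    refine ⟨hIu.congr_ae_global hvae, ?_⟩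
    have hieq : (∫ s in (0:ℝ)..t,
          R (t - s) (f ((fun r => if r = τs then g τs + J else u r) s)))
        = ∫ s in (0:ℝ)..t, R (t - s) (f (u s)) :=
      intervalIntegral.integral_congr_ae (hvae.mono fun s hs _ => hs)
    by_cases htt : t = τs
    · subst htt
      rw [hieq, hJ]
      simp
    · have htoo : t ∈ Ioo 0 τs := ⟨ht.1, lt_of_le_of_ne ht.2 htt⟩
      simp only [if_neg htt]
      rw [hieq]
      exact (humild t htoo).2
end

section
/- Assume the abstract setting described in the context. Let μ > 0 satisfy M·c·μ^{ρ−1}·B ≤ 1/4, and let g : (0,∞) → V be continuous with t^{αε}‖g(t)‖_V ≤ (3/4)μ for all t > 0. Then there exists exactly one continuous u : (0,∞) → V such that sup_{t>0} t^{αε}‖u(t)‖_V ≤ μ and u is a mild solution with forcing g on (0,∞). -/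
open MeasureTheory Set Filter Topology intervalIntegral
open scoped ENNReal
open scoped BoundedContinuousFunction

section Aux

variable {V W : Type*} [NormedAddCommGroup V] [NormedSpace ℝ V] [CompleteSpace V]
  [NormedAddCommGroup W] [NormedSpace ℝ W] [CompleteSpace W]

/-- Joint continuity of `(τ, w) ↦ R τ w` at points with `τ > 0`. -/
lemma aux_joint {γ M : ℝ} (hγ1 : γ < 1) (hM : 0 ≤ M)
    {R : ℝ → W →L[ℝ] V}
    (hRcont : ∀ w : W, ContinuousOn (fun t => R t w) (Ioi (0:ℝ)))
    (hRbound : ∀ t > (0:ℝ), ∀ w : W, ‖R t w‖ ≤ M * t ^ (γ - 1) * ‖w‖)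
    {τ₀ : ℝ} (hτ₀ : 0 < τ₀) (w₀ : W) :
    ContinuousAt (fun p : ℝ × W => R p.1 p.2) (τ₀, w₀) := by
  have h2 : Tendsto (fun p : ℝ × W => R p.1 w₀) (𝓝 (τ₀, w₀)) (𝓝 (R τ₀ w₀)) := by
    have hc : ContinuousAt (fun t : ℝ => R t w₀) τ₀ :=
      (hRcont w₀).continuousAt (Ioi_mem_nhds hτ₀)
    exact hc.comp (continuousAt_fst (p := (τ₀, w₀)))
  have hev : ∀ᶠ p : ℝ × W in 𝓝 (τ₀, w₀), τ₀ / 2 < p.1 := by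
    have h : ∀ᶠ x : ℝ in 𝓝 τ₀, τ₀ / 2 < x := eventually_gt_nhds (by linarith)
    exact (continuous_fst.tendsto (τ₀, w₀)).eventually h
  have h1 : Tendsto (fun p : ℝ × W => R p.1 (p.2 - w₀)) (𝓝 (τ₀, w₀)) (𝓝 0) := by
    apply squeeze_zero_norm' (a := fun p : ℝ × W => M * (τ₀ / 2) ^ (γ - 1) * ‖p.2 - w₀‖)
    · filter_upwards [hev] with p hp
      have hp0 : 0 < p.1 := lt_trans (by linarith) hp
      refine (hRbound p.1 hp0 _).trans ?_
      have h3 : p.1 ^ (γ - 1) ≤ (τ₀ / 2) ^ (γ - 1) :=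
        Real.rpow_le_rpow_of_nonpos (by linarith) hp.le (by linarith)
      exact mul_le_mul_of_nonneg_right (mul_le_mul_of_nonneg_left h3 hM) (norm_nonneg _)
    · have h4 : Tendsto (fun p : ℝ × W => p.2 - w₀) (𝓝 (τ₀, w₀)) (𝓝 (w₀ - w₀)) :=
        (continuous_snd.tendsto _).sub tendsto_const_nhds
      rw [sub_self] at h4
      have h5 := (h4.norm).const_mul (M * (τ₀ / 2) ^ (γ - 1))
      simpa using h5
  have h6 := h1.add h2
  rw [zero_add] at h6
  have heq : ∀ p : ℝ × W, R p.1 (p.2 - w₀) + R p.1 w₀ = R p.1 p.2 := by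
    intro p; rw [map_sub]; abel
  exact h6.congr heq

/-- Scaling of the Beta-type kernel integral. -/
lemma aux_kernel {γ β Bv : ℝ}
    (hBint : IntervalIntegrable (fun s => (1 - s) ^ (γ - 1) * s ^ (-β)) volume 0 1)
    (hB : Bv = ∫ s in (0:ℝ)..1, (1 - s) ^ (γ - 1) * s ^ (-β))
    {t : ℝ} (ht : 0 < t) :
    IntervalIntegrable (fun s => (t - s) ^ (γ - 1) * s ^ (-β)) volume 0 t ∧
      (∫ s in (0:ℝ)..t, (t - s) ^ (γ - 1) * s ^ (-β)) = t ^ (γ - β) * Bv := by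
  have hEq : ∀ σ ∈ Icc (0:ℝ) 1,
      (t - t * σ) ^ (γ - 1) * (t * σ) ^ (-β)
        = t ^ (γ - 1 - β) * ((1 - σ) ^ (γ - 1) * σ ^ (-β)) := by
    intro σ hσ
    have h1σ : (0:ℝ) ≤ 1 - σ := by linarith [hσ.2]
    have e : t - t * σ = t * (1 - σ) := by ring
    rw [e, Real.mul_rpow ht.le h1σ, Real.mul_rpow ht.le hσ.1,
        show γ - 1 - β = γ - 1 + -β by ring, Real.rpow_add ht]
    ring
  have h1 : IntervalIntegrable (fun σ => (t - t * σ) ^ (γ - 1) * (t * σ) ^ (-β)) volume 0 1 := by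
    rw [intervalIntegrable_iff_integrableOn_Ioc_of_le zero_le_one] at hBint ⊢
    exact MeasureTheory.IntegrableOn.congr_fun (hBint.const_mul (t ^ (γ - 1 - β)))
      (fun σ hσ => (hEq σ (Ioc_subset_Icc_self hσ)).symm) measurableSet_Ioc
  have h2 : IntervalIntegrable (fun s => (t - s) ^ (γ - 1) * s ^ (-β)) volume 0 t := by
    have h3 := h1.comp_mul_left (c := t⁻¹)
    simp only [zero_div, one_div, inv_inv, mul_inv_cancel_left₀ ht.ne'] at h3
    exact h3
  have h4 : (∫ s in (0:ℝ)..t, (t - s) ^ (γ - 1) * s ^ (-β))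
      = t • ∫ σ in (0:ℝ)..1, (t - t * σ) ^ (γ - 1) * (t * σ) ^ (-β) := by
    have h := intervalIntegral.smul_integral_comp_mul_left
      (f := fun s => (t - s) ^ (γ - 1) * s ^ (-β)) (a := 0) (b := 1) t
    simp only [mul_zero, mul_one] at h
    exact h.symm
  have h5 : (∫ σ in (0:ℝ)..1, (t - t * σ) ^ (γ - 1) * (t * σ) ^ (-β))
      = t ^ (γ - 1 - β) * Bv := by
    have hEq' : EqOn (fun σ => (t - t * σ) ^ (γ - 1) * (t * σ) ^ (-β))
        (fun σ => t ^ (γ - 1 - β) * ((1 - σ) ^ (γ - 1) * σ ^ (-β))) (uIcc (0:ℝ) 1) := by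
      rw [uIcc_of_le zero_le_one]; exact hEq
    rw [intervalIntegral.integral_congr hEq', intervalIntegral.integral_const_mul, ← hB]
  refine ⟨h2, ?_⟩
  rw [h4, h5, smul_eq_mul, ← mul_assoc,
    show γ - β = 1 + (γ - 1 - β) by ring, Real.rpow_add ht, Real.rpow_one]

/-- The basic estimate: integrability of `s ↦ R(t-s) φ(s)` and the norm bound. -/
lemma aux_est {γ β Bv M : ℝ} (hγ1 : γ < 1) (hM : 0 < M)
    {R : ℝ → W →L[ℝ] V}
    (hRcont : ∀ w : W, ContinuousOn (fun t => R t w) (Ioi (0:ℝ)))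
    (hRbound : ∀ t > (0:ℝ), ∀ w : W, ‖R t w‖ ≤ M * t ^ (γ - 1) * ‖w‖)
    (hBint : IntervalIntegrable (fun s => (1 - s) ^ (γ - 1) * s ^ (-β)) volume 0 1)
    (hB : Bv = ∫ s in (0:ℝ)..1, (1 - s) ^ (γ - 1) * s ^ (-β))
    {C : ℝ} (hC : 0 ≤ C) {φ : ℝ → W} (hφc : ContinuousOn φ (Ioi 0))
    (hφb : ∀ s > (0:ℝ), ‖φ s‖ ≤ C * s ^ (-β))
    {t : ℝ} (ht : 0 < t) :
    IntervalIntegrable (fun s => R (t - s) (φ s)) volume 0 t ∧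
      ‖∫ s in (0:ℝ)..t, R (t - s) (φ s)‖ ≤ M * C * Bv * t ^ (γ - β) := by
  obtain ⟨hker, hkval⟩ := aux_kernel hBint hB ht
  have hBv0 : 0 ≤ Bv := by
    rw [hB]
    apply intervalIntegral.integral_nonneg zero_le_one
    intro s hs
    exact mul_nonneg (Real.rpow_nonneg (by linarith [hs.2]) _) (Real.rpow_nonneg hs.1 _)
  have hcont : ContinuousOn (fun s => R (t - s) (φ s)) (Ioo 0 t) := by
    intro s hs
    have h1 : ContinuousAt (fun s : ℝ => ((t - s, φ s) : ℝ × W)) s := by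
      refine ContinuousAt.prodMk ?_ ?_
      · exact (continuous_const.sub continuous_id).continuousAt
      · exact hφc.continuousAt (Ioi_mem_nhds hs.1)
    have h2 := aux_joint hγ1 hM.le hRcont hRbound (sub_pos.2 hs.2) (φ s)
    have h3 : ContinuousAt (fun s : ℝ => R (t - s) (φ s)) s :=
      ContinuousAt.comp (g := fun p : ℝ × W => R p.1 p.2) (x := s) h2 h1
    exact h3.continuousWithinAt
  have hmeasIoo : AEStronglyMeasurable (fun s => R (t - s) (φ s))
      (volume.restrict (Ioo 0 t)) :=
    hcont.aestronglyMeasurable measurableSet_Ioo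
  have hbnd : ∀ s ∈ Ioo (0:ℝ) t,
      ‖R (t - s) (φ s)‖ ≤ M * C * ((t - s) ^ (γ - 1) * s ^ (-β)) := by
    intro s hs
    have h1 := hRbound (t - s) (sub_pos.2 hs.2) (φ s)
    have h2 : ‖φ s‖ ≤ C * s ^ (-β) := hφb s hs.1
    calc ‖R (t - s) (φ s)‖ ≤ M * (t - s) ^ (γ - 1) * ‖φ s‖ := h1
      _ ≤ M * (t - s) ^ (γ - 1) * (C * s ^ (-β)) :=
          mul_le_mul_of_nonneg_left h2
            (mul_nonneg hM.le (Real.rpow_nonneg (by linarith [hs.2]) _))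
      _ = M * C * ((t - s) ^ (γ - 1) * s ^ (-β)) := by ring
  have hDIoo : IntegrableOn (fun s => M * C * ((t - s) ^ (γ - 1) * s ^ (-β))) (Ioo 0 t) := by
    have hker' := hker
    rw [intervalIntegrable_iff_integrableOn_Ioc_of_le ht.le] at hker'
    exact (hker'.mono_set Ioo_subset_Ioc_self).const_mul _
  have hint : IntegrableOn (fun s => R (t - s) (φ s)) (Ioo 0 t) := by
    refine Integrable.mono' hDIoo hmeasIoo ?_
    rw [ae_restrict_iff' measurableSet_Ioo]
    exact Eventually.of_forall hbnd
  have hii : IntervalIntegrable (fun s => R (t - s) (φ s)) volume 0 t := by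
    rw [intervalIntegrable_iff_integrableOn_Ioc_of_le ht.le,
      integrableOn_Ioc_iff_integrableOn_Ioo]
    exact hint
  refine ⟨hii, ?_⟩
  have hDii : IntervalIntegrable (fun s => M * C * ((t - s) ^ (γ - 1) * s ^ (-β)))
      volume 0 t := hker.const_mul _
  have hnorm := intervalIntegral.norm_integral_le_abs_of_norm_le (μ := volume)
      (f := fun s => R (t - s) (φ s))
      (g := fun s => M * C * ((t - s) ^ (γ - 1) * s ^ (-β))) (a := 0) (b := t) ?_ hDii
  · rw [intervalIntegral.integral_const_mul, hkval] at hnorm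
    have habs : |M * C * (t ^ (γ - β) * Bv)| = M * C * (t ^ (γ - β) * Bv) :=
      abs_of_nonneg (mul_nonneg (mul_nonneg hM.le hC)
        (mul_nonneg (Real.rpow_nonneg ht.le _) hBv0))
    rw [habs] at hnorm
    calc ‖∫ s in (0:ℝ)..t, R (t - s) (φ s)‖ ≤ M * C * (t ^ (γ - β) * Bv) := hnorm
      _ = M * C * Bv * t ^ (γ - β) := by ring
  · rw [uIoc_of_le ht.le, ← restrict_Ioo_eq_restrict_Ioc,
      ae_restrict_iff' measurableSet_Ioo]
    exact Eventually.of_forall hbnd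

/-- Continuity in `t` of the integral `∫₀^t R(t-s) φ(s) ds` on `(0,∞)`. -/
lemma aux_cont {γ β M : ℝ} (hγ1 : γ < 1) (hβ0 : 0 < β) (hM : 0 < M)
    {R : ℝ → W →L[ℝ] V}
    (hRcont : ∀ w : W, ContinuousOn (fun t => R t w) (Ioi (0:ℝ)))
    (hRbound : ∀ t > (0:ℝ), ∀ w : W, ‖R t w‖ ≤ M * t ^ (γ - 1) * ‖w‖)
    (hBint : IntervalIntegrable (fun s => (1 - s) ^ (γ - 1) * s ^ (-β)) volume 0 1)
    {C : ℝ} (hC : 0 ≤ C) {φ : ℝ → W} (hφc : ContinuousOn φ (Ioi 0))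
    (hφb : ∀ s > (0:ℝ), ‖φ s‖ ≤ C * s ^ (-β)) :
    ContinuousOn (fun t => ∫ s in (0:ℝ)..t, R (t - s) (φ s)) (Ioi 0) := by
  have hae : ∀ᵐ σ : ℝ ∂(volume : Measure ℝ), σ ≠ 1 := by
    rw [ae_iff]
    have e : {a : ℝ | ¬a ≠ 1} = {(1:ℝ)} := by ext x; simp
    rw [e]
    exact measure_singleton 1
  have key : ∀ t : ℝ, (∫ s in (0:ℝ)..t, R (t - s) (φ s))
      = t • ∫ σ in (0:ℝ)..1, R (t - t * σ) (φ (t * σ)) := by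
    intro t
    have h := intervalIntegral.smul_integral_comp_mul_left
      (f := fun s => R (t - s) (φ s)) (a := 0) (b := 1) t
    simp only [mul_zero, mul_one] at h
    exact h.symm
  intro t₀ ht₀
  have ht₀' : (0:ℝ) < t₀ := ht₀
  have hhalf : (0:ℝ) < t₀ / 2 := by linarith
  refine ContinuousAt.continuousWithinAt ?_
  have hJ : ContinuousAt (fun t => ∫ σ in (0:ℝ)..1, R (t - t * σ) (φ (t * σ))) t₀ := by
    apply intervalIntegral.continuousAt_of_dominated_interval
      (bound := fun σ => M * C * (t₀ / 2) ^ (γ - 1 - β) * ((1 - σ) ^ (γ - 1) * σ ^ (-β)))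
    · filter_upwards [Ioi_mem_nhds ht₀'] with t ht
      have ht' : (0:ℝ) < t := ht
      rw [uIoc_of_le zero_le_one, ← restrict_Ioo_eq_restrict_Ioc]
      apply ContinuousOn.aestronglyMeasurable ?_ measurableSet_Ioo
      intro σ hσ
      have hts : 0 < t * σ := mul_pos ht' hσ.1
      have htσ : 0 < t - t * σ := by nlinarith [mul_pos ht' (sub_pos.2 hσ.2)]
      have h1 : ContinuousAt (fun σ : ℝ => ((t - t * σ, φ (t * σ)) : ℝ × W)) σ := by
        refine ContinuousAt.prodMk ?_ ?_
        · exact (continuous_const.sub (continuous_const.mul continuous_id)).continuousAt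
        · exact ContinuousAt.comp (x := σ) (hφc.continuousAt (Ioi_mem_nhds hts))
            ((continuous_const.mul continuous_id).continuousAt)
      have h2 := aux_joint hγ1 hM.le hRcont hRbound htσ (φ (t * σ))
      have h3 : ContinuousAt (fun σ : ℝ => R (t - t * σ) (φ (t * σ))) σ :=
        ContinuousAt.comp (g := fun p : ℝ × W => R p.1 p.2) (x := σ) h2 h1
      exact h3.continuousWithinAt
    · filter_upwards [eventually_gt_nhds (show t₀ / 2 < t₀ by linarith)] with t htt
      have ht' : (0:ℝ) < t := lt_trans hhalf htt
      filter_upwards [hae] with σ hσ1 hσ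
      rw [uIoc_of_le zero_le_one] at hσ
      have hσo : σ ∈ Ioo (0:ℝ) 1 := ⟨hσ.1, lt_of_le_of_ne hσ.2 hσ1⟩
      have h1σ : (0:ℝ) < 1 - σ := by linarith [hσo.2]
      have hts : 0 < t * σ := mul_pos ht' hσo.1
      have htσ : 0 < t - t * σ := by nlinarith [mul_pos ht' h1σ]
      calc ‖R (t - t * σ) (φ (t * σ))‖
          ≤ M * (t - t * σ) ^ (γ - 1) * ‖φ (t * σ)‖ := hRbound _ htσ _
        _ ≤ M * (t - t * σ) ^ (γ - 1) * (C * (t * σ) ^ (-β)) :=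
            mul_le_mul_of_nonneg_left (hφb _ hts)
              (mul_nonneg hM.le (Real.rpow_nonneg htσ.le _))
        _ = M * C * t ^ (γ - 1 - β) * ((1 - σ) ^ (γ - 1) * σ ^ (-β)) := by
            rw [show t - t * σ = t * (1 - σ) by ring, Real.mul_rpow ht'.le h1σ.le,
              Real.mul_rpow ht'.le hσo.1.le,
              show γ - 1 - β = γ - 1 + -β by ring, Real.rpow_add ht']
            ring
        _ ≤ M * C * (t₀ / 2) ^ (γ - 1 - β) * ((1 - σ) ^ (γ - 1) * σ ^ (-β)) := by
            have h3 : t ^ (γ - 1 - β) ≤ (t₀ / 2) ^ (γ - 1 - β) :=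
              Real.rpow_le_rpow_of_nonpos hhalf htt.le (by linarith)
            exact mul_le_mul_of_nonneg_right
              (mul_le_mul_of_nonneg_left h3 (mul_nonneg hM.le hC))
              (mul_nonneg (Real.rpow_nonneg h1σ.le _) (Real.rpow_nonneg hσo.1.le _))
    · exact hBint.const_mul _
    · filter_upwards [hae] with σ hσ1 hσ
      rw [uIoc_of_le zero_le_one] at hσ
      have hσo : σ ∈ Ioo (0:ℝ) 1 := ⟨hσ.1, lt_of_le_of_ne hσ.2 hσ1⟩
      have h1σ : (0:ℝ) < 1 - σ := by linarith [hσo.2]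
      have h1 : ContinuousAt (fun t : ℝ => ((t - t * σ, φ (t * σ)) : ℝ × W)) t₀ := by
        refine ContinuousAt.prodMk ?_ ?_
        · exact (continuous_id.sub (continuous_id.mul continuous_const)).continuousAt
        · exact ContinuousAt.comp (x := t₀)
            (hφc.continuousAt (Ioi_mem_nhds (mul_pos ht₀' hσo.1)))
            ((continuous_id.mul continuous_const).continuousAt)
      have h2 := aux_joint hγ1 hM.le hRcont hRbound
        (show 0 < t₀ - t₀ * σ by nlinarith [mul_pos ht₀' h1σ]) (φ (t₀ * σ))
      have h3 : ContinuousAt (fun t : ℝ => R (t - t * σ) (φ (t * σ))) t₀ :=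
        ContinuousAt.comp (g := fun p : ℝ × W => R p.1 p.2) (x := t₀) h2 h1
      exact h3
  have hsm : ContinuousAt (fun t : ℝ => t • ∫ σ in (0:ℝ)..1, R (t - t * σ) (φ (t * σ))) t₀ :=
    continuousAt_id.smul hJ
  exact hsm.congr (Eventually.of_forall fun t => (key t).symm)

lemma aux_f_cont {ρ c : ℝ} (hρ : 1 < ρ) (hc : 0 < c) {f : V → W}
    (hf : ∀ x y : V, ‖f x - f y‖ ≤ c * (‖x‖ ^ (ρ - 1) + ‖y‖ ^ (ρ - 1)) * ‖x - y‖) :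
    Continuous f := by
  rw [continuous_iff_continuousAt]
  intro y
  rw [ContinuousAt, ← tendsto_sub_nhds_zero_iff]
  apply squeeze_zero_norm'
    (a := fun x => c * ((‖y‖ + 1) ^ (ρ - 1) + ‖y‖ ^ (ρ - 1)) * ‖x - y‖)
  · filter_upwards [Metric.ball_mem_nhds y one_pos] with x hx
    rw [Metric.mem_ball, dist_eq_norm] at hx
    have hnx : ‖x‖ ≤ ‖y‖ + 1 := by
      have h := norm_sub_norm_le x y
      linarith
    refine (hf x y).trans ?_
    have h1 : ‖x‖ ^ (ρ - 1) ≤ (‖y‖ + 1) ^ (ρ - 1) :=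
      Real.rpow_le_rpow (norm_nonneg x) hnx (by linarith)
    exact mul_le_mul_of_nonneg_right
      (mul_le_mul_of_nonneg_left (by linarith) hc.le) (norm_nonneg _)
  · have h : Tendsto (fun x : V => x - y) (𝓝 y) (𝓝 (y - y)) :=
      tendsto_id.sub tendsto_const_nhds
    rw [sub_self] at h
    simpa using (h.norm).const_mul (c * ((‖y‖ + 1) ^ (ρ - 1) + ‖y‖ ^ (ρ - 1)))

lemma aux_f_norm {ρ c : ℝ} (hρ : 1 < ρ) {f : V → W} (hf0 : f 0 = 0)
    (hf : ∀ x y : V, ‖f x - f y‖ ≤ c * (‖x‖ ^ (ρ - 1) + ‖y‖ ^ (ρ - 1)) * ‖x - y‖) (x : V) :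
    ‖f x‖ ≤ c * ‖x‖ ^ (ρ - 1) * ‖x‖ := by
  have h := hf x 0
  rw [hf0, sub_zero, sub_zero, norm_zero,
    Real.zero_rpow (ne_of_gt (by linarith : (0:ℝ) < ρ - 1)), add_zero] at h
  exact h

end Aux

/-- **Fixed-point core of Theorem 1.2 (global existence for small data).**
Under the abstract setting, if `M c μ^{ρ-1} B ≤ 1/4` and `g : (0,∞) → V` is continuous with
`t^{αε}‖g t‖ ≤ (3/4)μ` for all `t > 0`, there is exactly one continuous `u : ℝ → V` with
`sup_{t>0} t^{αε}‖u t‖ ≤ μ` which is a mild solution with forcing `g` on `(0,∞)`. -/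
theorem global_fixed_point
    {V W : Type*} [NormedAddCommGroup V] [NormedSpace ℝ V] [CompleteSpace V]
    [NormedAddCommGroup W] [NormedSpace ℝ W] [CompleteSpace W]
    (ρ α ε M c B : ℝ)
    (hρ : 1 < ρ) (hα : 1 < α) (hε : 0 < ε) (hαρε : α * ρ * ε < 1)
    (hM : 0 < M) (hc : 0 < c)
    (R : ℝ → W →L[ℝ] V)
    (hRcont : ∀ w : W, ContinuousOn (fun t => R t w) (Ioi (0:ℝ)))
    (hRbound : ∀ t > (0:ℝ), ∀ w : W, ‖R t w‖ ≤ M * t ^ (α * (ρ - 1) * ε - 1) * ‖w‖)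
    (f : V → W) (hf0 : f 0 = 0)
    (hf : ∀ x y : V, ‖f x - f y‖ ≤ c * (‖x‖ ^ (ρ - 1) + ‖y‖ ^ (ρ - 1)) * ‖x - y‖)
    (hBint : IntervalIntegrable
      (fun s => (1 - s) ^ (α * (ρ - 1) * ε - 1) * s ^ (-(α * ρ * ε))) volume 0 1)
    (hB : B = ∫ s in (0:ℝ)..1, (1 - s) ^ (α * (ρ - 1) * ε - 1) * s ^ (-(α * ρ * ε)))
    (μ : ℝ) (hμ : 0 < μ) (hsmall : M * c * μ ^ (ρ - 1) * B ≤ 1 / 4)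
    (g : ℝ → V) (hg : ContinuousOn g (Ioi 0))
    (hgbdd : ∀ t > (0:ℝ), t ^ (α * ε) * ‖g t‖ ≤ 3 / 4 * μ) :
    ∃ u : ℝ → V,
      (IsMildSolutionOn R f g u (Ioi 0) ∧
        ∀ t > (0:ℝ), t ^ (α * ε) * ‖u t‖ ≤ μ) ∧
      ∀ v : ℝ → V,
        (IsMildSolutionOn R f g v (Ioi 0) ∧
          ∀ t > (0:ℝ), t ^ (α * ε) * ‖v t‖ ≤ μ) →
        EqOn v u (Ioi 0) := by
  have hα0 : (0:ℝ) < α := by linarith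
  have hρ1 : (0:ℝ) < ρ - 1 := by linarith
  have hαε : (0:ℝ) < α * ε := mul_pos hα0 hε
  set γ := α * (ρ - 1) * ε with hγdef
  set β := α * ρ * ε with hβdef
  have hβ0 : 0 < β := by rw [hβdef]; positivity
  have hγβ : γ - β = -(α * ε) := by rw [hγdef, hβdef]; ring
  have hγ1 : γ < 1 := by
    have : γ = β - α * ε := by rw [hγdef, hβdef]; ring
    rw [this]; linarith [hαρε]
  have hB0 : 0 ≤ B := by
    rw [hB]
    apply intervalIntegral.integral_nonneg zero_le_one
    intro s hs
    exact mul_nonneg (Real.rpow_nonneg (by linarith [hs.2]) _) (Real.rpow_nonneg hs.1 _)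
  have hfc : Continuous f := aux_f_cont hρ hc hf
  have hfn : ∀ x : V, ‖f x‖ ≤ c * ‖x‖ ^ (ρ - 1) * ‖x‖ := aux_f_norm hρ hf0 hf
  -- the unfolding of a bounded continuous function on `(0,∞)` to a function on `ℝ`
  obtain ⟨uOf, uOf_pos⟩ : ∃ uOf : (Ioi (0:ℝ) →ᵇ V) → ℝ → V,
      ∀ (h : Ioi (0:ℝ) →ᵇ V) (t : ℝ) (ht : 0 < t),
        uOf h t = t ^ (-(α * ε)) • h ⟨t, ht⟩ :=
    ⟨fun h t => if ht : 0 < t then t ^ (-(α * ε)) • h ⟨t, ht⟩ else 0,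
     fun h t ht => dif_pos ht⟩
  have uOf_cont : ∀ h, ContinuousOn (uOf h) (Ioi 0) := by
    intro h
    rw [continuousOn_iff_continuous_restrict]
    have e : (Ioi (0:ℝ)).restrict (uOf h) = fun x : Ioi (0:ℝ) => (x:ℝ) ^ (-(α * ε)) • h x := by
      funext x
      exact uOf_pos h x x.2
    rw [show (Ioi (0:ℝ)).domRestrict (uOf h) = _ from e]
    have hrp : Continuous fun x : Ioi (0:ℝ) => (x:ℝ) ^ (-(α * ε)) := by
      rw [continuous_iff_continuousAt]
      intro x
      exact (Real.continuousAt_rpow_const _ _ (Or.inl (ne_of_gt x.2))).comp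
        continuous_subtype_val.continuousAt
    exact hrp.smul h.continuous
  have uOf_bdd : ∀ (h : Ioi (0:ℝ) →ᵇ V) (K : ℝ), ‖h‖ ≤ K →
      ∀ t, 0 < t → ‖uOf h t‖ ≤ K * t ^ (-(α * ε)) := by
    intro h K hK t ht
    rw [uOf_pos h t ht, norm_smul, Real.norm_eq_abs,
      abs_of_nonneg (Real.rpow_nonneg ht.le _), mul_comm K _]
    exact mul_le_mul_of_nonneg_left ((h.norm_coe_le_norm _).trans hK)
      (Real.rpow_nonneg ht.le _)
  -- bound for `f ∘ uOf h`
  have hφb : ∀ (h : Ioi (0:ℝ) →ᵇ V) (K : ℝ), 0 ≤ K → ‖h‖ ≤ K →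
      ∀ s, 0 < s → ‖f (uOf h s)‖ ≤ c * K ^ (ρ - 1) * K * s ^ (-β) := by
    intro h K hK hhK s hs
    have h1 : ‖uOf h s‖ ≤ K * s ^ (-(α * ε)) := uOf_bdd h K hhK s hs
    have h3 : ‖uOf h s‖ ^ (ρ - 1) ≤ (K * s ^ (-(α * ε))) ^ (ρ - 1) :=
      Real.rpow_le_rpow (norm_nonneg _) h1 (by linarith)
    have h4 : (K * s ^ (-(α * ε))) ^ (ρ - 1)
        = K ^ (ρ - 1) * s ^ (-(α * ε) * (ρ - 1)) := by
      rw [Real.mul_rpow hK (Real.rpow_nonneg hs.le _), ← Real.rpow_mul hs.le]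
    calc ‖f (uOf h s)‖ ≤ c * ‖uOf h s‖ ^ (ρ - 1) * ‖uOf h s‖ := hfn _
      _ ≤ c * ((K * s ^ (-(α * ε))) ^ (ρ - 1)) * (K * s ^ (-(α * ε))) := by
          apply mul_le_mul (mul_le_mul_of_nonneg_left h3 hc.le) h1 (norm_nonneg _)
          exact mul_nonneg hc.le (Real.rpow_nonneg
            (mul_nonneg hK (Real.rpow_nonneg hs.le _)) _)
      _ = c * K ^ (ρ - 1) * K * (s ^ (-(α * ε) * (ρ - 1)) * s ^ (-(α * ε))) := by
          rw [h4]; ring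
      _ = c * K ^ (ρ - 1) * K * s ^ (-β) := by
          rw [← Real.rpow_add hs, show -(α * ε) * (ρ - 1) + -(α * ε) = -β by
            rw [hβdef]; ring]
  have hCnn : ∀ (h : Ioi (0:ℝ) →ᵇ V), 0 ≤ c * ‖h‖ ^ (ρ - 1) * ‖h‖ := fun h =>
    mul_nonneg (mul_nonneg hc.le (Real.rpow_nonneg (norm_nonneg _) _)) (norm_nonneg _)
  -- estimate applied with constant coming from a norm bound K
  have hEstK : ∀ (h : Ioi (0:ℝ) →ᵇ V) (K : ℝ), 0 ≤ K → ‖h‖ ≤ K → ∀ t : ℝ, 0 < t →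
      IntervalIntegrable (fun s => R (t - s) (f (uOf h s))) volume 0 t ∧
      ‖∫ s in (0:ℝ)..t, R (t - s) (f (uOf h s))‖
        ≤ M * (c * K ^ (ρ - 1) * K) * B * t ^ (γ - β) := by
    intro h K hK hhK t ht
    exact aux_est hγ1 hM hRcont hRbound hBint hB
      (mul_nonneg (mul_nonneg hc.le (Real.rpow_nonneg hK _)) hK)
      (hfc.comp_continuousOn (uOf_cont h)) (hφb h K hK hhK) ht
  -- pointwise bound of the rescaled map
  have hbound_pt : ∀ (h : Ioi (0:ℝ) →ᵇ V) (K : ℝ), 0 ≤ K → ‖h‖ ≤ K →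
      ∀ x : Ioi (0:ℝ),
      ‖(x:ℝ) ^ (α * ε) • (g x + ∫ s in (0:ℝ)..(x:ℝ), R ((x:ℝ) - s) (f (uOf h s)))‖
        ≤ 3 / 4 * μ + M * (c * K ^ (ρ - 1) * K) * B := by
    intro h K hK hhK x
    have hx : (0:ℝ) < x := x.2
    have hest := (hEstK h K hK hhK x hx).2
    rw [norm_smul, Real.norm_eq_abs, abs_of_nonneg (Real.rpow_nonneg hx.le _)]
    have h1 := norm_add_le (g (x:ℝ)) (∫ s in (0:ℝ)..(x:ℝ), R ((x:ℝ) - s) (f (uOf h s)))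
    have h2 : (x:ℝ) ^ (α * ε) * ‖g (x:ℝ)‖ ≤ 3 / 4 * μ := hgbdd _ hx
    have h3 : (x:ℝ) ^ (α * ε) *
        ‖∫ s in (0:ℝ)..(x:ℝ), R ((x:ℝ) - s) (f (uOf h s))‖
        ≤ (x:ℝ) ^ (α * ε) * (M * (c * K ^ (ρ - 1) * K) * B * (x:ℝ) ^ (γ - β)) :=
      mul_le_mul_of_nonneg_left hest (Real.rpow_nonneg hx.le _)
    have h4 : (x:ℝ) ^ (α * ε) * (M * (c * K ^ (ρ - 1) * K) * B * (x:ℝ) ^ (γ - β))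
        = M * (c * K ^ (ρ - 1) * K) * B := by
      rw [show (x:ℝ) ^ (α * ε) * (M * (c * K ^ (ρ - 1) * K) * B * (x:ℝ) ^ (γ - β))
          = M * (c * K ^ (ρ - 1) * K) * B * ((x:ℝ) ^ (α * ε) * (x:ℝ) ^ (γ - β)) by ring,
        hγβ, ← Real.rpow_add hx, add_neg_cancel, Real.rpow_zero, mul_one]
    have h5 := mul_le_mul_of_nonneg_left h1 (Real.rpow_nonneg hx.le (α * ε))
    rw [mul_add] at h5
    linarith [h3, h4 ▸ h3]
  -- continuity of the rescaled map
  have hTcont : ∀ h : Ioi (0:ℝ) →ᵇ V, Continuous fun x : Ioi (0:ℝ) =>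
      (x:ℝ) ^ (α * ε) • (g x + ∫ s in (0:ℝ)..(x:ℝ), R ((x:ℝ) - s) (f (uOf h s))) := by
    intro h
    have h1 : ContinuousOn (fun t : ℝ =>
        t ^ (α * ε) • (g t + ∫ s in (0:ℝ)..t, R (t - s) (f (uOf h s)))) (Ioi 0) := by
      apply ContinuousOn.smul
      · intro x hx
        exact (Real.continuousAt_rpow_const _ _
          (Or.inl (ne_of_gt (mem_Ioi.mp hx)))).continuousWithinAt
      · exact hg.add (aux_cont hγ1 hβ0 hM hRcont hRbound hBint (hCnn h)
          (hfc.comp_continuousOn (uOf_cont h)) (hφb h ‖h‖ (norm_nonneg h) le_rfl))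
    rw [continuousOn_iff_continuous_restrict] at h1
    exact h1
  -- construct the map T
  obtain ⟨T, hT⟩ : ∃ T : (Ioi (0:ℝ) →ᵇ V) → (Ioi (0:ℝ) →ᵇ V),
      ∀ (h : Ioi (0:ℝ) →ᵇ V) (t : ℝ) (ht : 0 < t),
        T h ⟨t, ht⟩ = t ^ (α * ε) • (g t + ∫ s in (0:ℝ)..t, R (t - s) (f (uOf h s))) :=
    ⟨fun h => BoundedContinuousFunction.ofNormedAddCommGroup _ (hTcont h)
        (3 / 4 * μ + M * (c * ‖h‖ ^ (ρ - 1) * ‖h‖) * B)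
        (hbound_pt h ‖h‖ (norm_nonneg h) le_rfl),
     fun h t ht => rfl⟩
  -- T maps the closed ball into itself
  have hsmall' : M * (c * μ ^ (ρ - 1) * μ) * B ≤ 1 / 4 * μ := by
    have h1 : M * (c * μ ^ (ρ - 1) * μ) * B = (M * c * μ ^ (ρ - 1) * B) * μ := by ring
    rw [h1]
    nlinarith [mul_le_mul_of_nonneg_right hsmall hμ.le]
  have hmaps : MapsTo T (Metric.closedBall 0 μ) (Metric.closedBall 0 μ) := by
    intro h hh
    rw [Metric.mem_closedBall, dist_zero_right] at hh ⊢
    rw [BoundedContinuousFunction.norm_le hμ.le]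
    rintro ⟨t, ht⟩
    rw [hT h t ht]
    refine (hbound_pt h μ hμ.le hh ⟨t, ht⟩).trans ?_
    linarith [hsmall']
  -- contraction estimate
  have hcontr : ∀ h₁ h₂ : Ioi (0:ℝ) →ᵇ V, ‖h₁‖ ≤ μ → ‖h₂‖ ≤ μ →
      dist (T h₁) (T h₂) ≤ 1 / 2 * dist h₁ h₂ := by
    intro h₁ h₂ hh₁ hh₂
    have hD0 : 0 ≤ dist h₁ h₂ := dist_nonneg
    rw [BoundedContinuousFunction.dist_le (by linarith)]
    rintro ⟨t, ht⟩
    have ht0 : (0:ℝ) < t := ht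
    rw [hT h₁ t ht, hT h₂ t ht, dist_eq_norm]
    -- bound for the difference of nonlinearities
    have hψb : ∀ s, 0 < s → ‖f (uOf h₁ s) - f (uOf h₂ s)‖
        ≤ 2 * c * μ ^ (ρ - 1) * dist h₁ h₂ * s ^ (-β) := by
      intro s hs
      have hu1 : ‖uOf h₁ s‖ ≤ μ * s ^ (-(α * ε)) := uOf_bdd h₁ μ hh₁ s hs
      have hu2 : ‖uOf h₂ s‖ ≤ μ * s ^ (-(α * ε)) := uOf_bdd h₂ μ hh₂ s hs
      have hd : ‖uOf h₁ s - uOf h₂ s‖ ≤ dist h₁ h₂ * s ^ (-(α * ε)) := by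
        rw [uOf_pos h₁ s hs, uOf_pos h₂ s hs, ← smul_sub, norm_smul, Real.norm_eq_abs,
          abs_of_nonneg (Real.rpow_nonneg hs.le _), mul_comm (dist h₁ h₂) _]
        apply mul_le_mul_of_nonneg_left _ (Real.rpow_nonneg hs.le _)
        rw [← dist_eq_norm]
        exact BoundedContinuousFunction.dist_coe_le_dist _
      have hr1 : ‖uOf h₁ s‖ ^ (ρ - 1) ≤ μ ^ (ρ - 1) * s ^ (-(α * ε) * (ρ - 1)) := by
        calc ‖uOf h₁ s‖ ^ (ρ - 1) ≤ (μ * s ^ (-(α * ε))) ^ (ρ - 1) :=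
              Real.rpow_le_rpow (norm_nonneg _) hu1 (by linarith)
          _ = μ ^ (ρ - 1) * s ^ (-(α * ε) * (ρ - 1)) := by
              rw [Real.mul_rpow hμ.le (Real.rpow_nonneg hs.le _), ← Real.rpow_mul hs.le]
      have hr2 : ‖uOf h₂ s‖ ^ (ρ - 1) ≤ μ ^ (ρ - 1) * s ^ (-(α * ε) * (ρ - 1)) := by
        calc ‖uOf h₂ s‖ ^ (ρ - 1) ≤ (μ * s ^ (-(α * ε))) ^ (ρ - 1) :=
              Real.rpow_le_rpow (norm_nonneg _) hu2 (by linarith)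
          _ = μ ^ (ρ - 1) * s ^ (-(α * ε) * (ρ - 1)) := by
              rw [Real.mul_rpow hμ.le (Real.rpow_nonneg hs.le _), ← Real.rpow_mul hs.le]
      calc ‖f (uOf h₁ s) - f (uOf h₂ s)‖
          ≤ c * (‖uOf h₁ s‖ ^ (ρ - 1) + ‖uOf h₂ s‖ ^ (ρ - 1)) * ‖uOf h₁ s - uOf h₂ s‖ :=
            hf _ _
        _ ≤ c * (μ ^ (ρ - 1) * s ^ (-(α * ε) * (ρ - 1))
              + μ ^ (ρ - 1) * s ^ (-(α * ε) * (ρ - 1)))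
            * (dist h₁ h₂ * s ^ (-(α * ε))) := by
            apply mul_le_mul (mul_le_mul_of_nonneg_left (add_le_add hr1 hr2) hc.le) hd
              (norm_nonneg _)
            exact mul_nonneg hc.le (by positivity)
        _ = 2 * c * μ ^ (ρ - 1) * dist h₁ h₂
            * (s ^ (-(α * ε) * (ρ - 1)) * s ^ (-(α * ε))) := by ring
        _ = 2 * c * μ ^ (ρ - 1) * dist h₁ h₂ * s ^ (-β) := by
            rw [← Real.rpow_add hs, show -(α * ε) * (ρ - 1) + -(α * ε) = -β by
              rw [hβdef]; ring]
    have hψc : ContinuousOn (fun s => f (uOf h₁ s) - f (uOf h₂ s)) (Ioi (0:ℝ)) :=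
      (hfc.comp_continuousOn (uOf_cont h₁)).sub (hfc.comp_continuousOn (uOf_cont h₂))
    have hψC : 0 ≤ 2 * c * μ ^ (ρ - 1) * dist h₁ h₂ := by positivity
    have hest := aux_est hγ1 hM hRcont hRbound hBint hB hψC hψc hψb ht0
    have hint₁ := (hEstK h₁ μ hμ.le hh₁ t ht0).1
    have hint₂ := (hEstK h₂ μ hμ.le hh₂ t ht0).1
    have e1 : t ^ (α * ε) • (g t + ∫ s in (0:ℝ)..t, R (t - s) (f (uOf h₁ s)))
        - t ^ (α * ε) • (g t + ∫ s in (0:ℝ)..t, R (t - s) (f (uOf h₂ s)))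
        = t ^ (α * ε) • ((∫ s in (0:ℝ)..t, R (t - s) (f (uOf h₁ s)))
            - ∫ s in (0:ℝ)..t, R (t - s) (f (uOf h₂ s))) := by
      rw [← smul_sub]
      congr 1
      abel
    have e2 : (∫ s in (0:ℝ)..t, R (t - s) (f (uOf h₁ s)))
        - (∫ s in (0:ℝ)..t, R (t - s) (f (uOf h₂ s)))
        = ∫ s in (0:ℝ)..t, R (t - s) (f (uOf h₁ s) - f (uOf h₂ s)) := by
      rw [← intervalIntegral.integral_sub hint₁ hint₂]
      congr 1
      funext s
      rw [map_sub]
    rw [e1, e2, norm_smul, Real.norm_eq_abs, abs_of_nonneg (Real.rpow_nonneg ht0.le _)]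
    have h5 := mul_le_mul_of_nonneg_left hest.2 (Real.rpow_nonneg ht0.le (α * ε))
    have h6 : t ^ (α * ε) * (M * (2 * c * μ ^ (ρ - 1) * dist h₁ h₂) * B * t ^ (γ - β))
        = M * (2 * c * μ ^ (ρ - 1) * dist h₁ h₂) * B := by
      rw [show t ^ (α * ε) * (M * (2 * c * μ ^ (ρ - 1) * dist h₁ h₂) * B * t ^ (γ - β))
          = M * (2 * c * μ ^ (ρ - 1) * dist h₁ h₂) * B * (t ^ (α * ε) * t ^ (γ - β)) by
            ring,
        hγβ, ← Real.rpow_add ht0, add_neg_cancel, Real.rpow_zero, mul_one]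
    have h7 : M * (2 * c * μ ^ (ρ - 1) * dist h₁ h₂) * B
        = 2 * (M * c * μ ^ (ρ - 1) * B) * dist h₁ h₂ := by ring
    have h8 : 2 * (M * c * μ ^ (ρ - 1) * B) * dist h₁ h₂ ≤ 2 * (1 / 4) * dist h₁ h₂ :=
      mul_le_mul_of_nonneg_right (mul_le_mul_of_nonneg_left hsmall (by norm_num)) hD0
    linarith [h5, h6 ▸ h5]
  -- the fixed point
  have hK : IsComplete (Metric.closedBall (0 : Ioi (0:ℝ) →ᵇ V) μ) :=
    Metric.isClosed_closedBall.isComplete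
  have hcw : ContractingWith (1/2 : NNReal) (hmaps.restrict T _ _) := by
    constructor
    · rw [← NNReal.coe_lt_coe]
      norm_num
    · apply LipschitzWith.of_dist_le_mul
      rintro ⟨h₁, hh₁⟩ ⟨h₂, hh₂⟩
      rw [Subtype.dist_eq, Subtype.dist_eq, MapsTo.val_restrict_apply,
        MapsTo.val_restrict_apply]
      have e : ((1/2 : NNReal) : ℝ) = 1/2 := by norm_num
      rw [e]
      rw [Metric.mem_closedBall, dist_zero_right] at hh₁ hh₂
      exact hcontr h₁ h₂ hh₁ hh₂
  obtain ⟨hstar, hmem, hfix, -, -⟩ :=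
    hcw.exists_fixedPoint' hK hmaps (Metric.mem_closedBall_self hμ.le) (edist_ne_top _ _)
  have hstarn : ‖hstar‖ ≤ μ := by
    rw [Metric.mem_closedBall, dist_zero_right] at hmem
    exact hmem
  have hfix' : T hstar = hstar := hfix
  -- the solution
  have hub : ∀ t, 0 < t → t ^ (α * ε) * ‖uOf hstar t‖ ≤ μ := by
    intro t ht
    have h1 : ‖uOf hstar t‖ ≤ μ * t ^ (-(α * ε)) := uOf_bdd hstar μ hstarn t ht
    calc t ^ (α * ε) * ‖uOf hstar t‖ ≤ t ^ (α * ε) * (μ * t ^ (-(α * ε))) :=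
          mul_le_mul_of_nonneg_left h1 (Real.rpow_nonneg ht.le _)
      _ = μ * (t ^ (α * ε) * t ^ (-(α * ε))) := by ring
      _ = μ := by rw [← Real.rpow_add ht, add_neg_cancel, Real.rpow_zero, mul_one]
  have hueq : ∀ t, ∀ ht : (0:ℝ) < t,
      uOf hstar t = g t + ∫ s in (0:ℝ)..t, R (t - s) (f (uOf hstar s)) := by
    intro t ht
    have h2 := hT hstar t ht
    rw [hfix'] at h2
    rw [uOf_pos hstar t ht, h2, smul_smul, ← Real.rpow_add ht, neg_add_cancel,
      Real.rpow_zero, one_smul]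
  refine ⟨uOf hstar, ⟨⟨uOf_cont hstar, fun t ht =>
    ⟨(hEstK hstar μ hμ.le hstarn t (mem_Ioi.mp ht)).1, hueq t (mem_Ioi.mp ht)⟩⟩,
    fun t ht => hub t ht⟩, ?_⟩
  -- uniqueness
  rintro v ⟨⟨hvcont, hveq⟩, hvbdd⟩
  have hvb : ∀ x : Ioi (0:ℝ), ‖(x:ℝ) ^ (α * ε) • v x‖ ≤ μ := by
    intro x
    rw [norm_smul, Real.norm_eq_abs, abs_of_nonneg (Real.rpow_nonneg (le_of_lt x.2) _)]
    exact hvbdd x x.2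
  have hvC : Continuous fun x : Ioi (0:ℝ) => (x:ℝ) ^ (α * ε) • v x := by
    have h1 : ContinuousOn (fun t : ℝ => t ^ (α * ε) • v t) (Ioi 0) := by
      apply ContinuousOn.smul _ hvcont
      intro x hx
      exact (Real.continuousAt_rpow_const _ _
        (Or.inl (ne_of_gt (mem_Ioi.mp hx)))).continuousWithinAt
    rw [continuousOn_iff_continuous_restrict] at h1
    exact h1
  obtain ⟨hv, hv_app⟩ : ∃ hv : Ioi (0:ℝ) →ᵇ V, ∀ (t : ℝ) (ht : 0 < t),
      hv ⟨t, ht⟩ = t ^ (α * ε) • v t :=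
    ⟨BoundedContinuousFunction.ofNormedAddCommGroup _ hvC μ hvb, fun t ht => rfl⟩
  have hvnorm : ‖hv‖ ≤ μ := by
    rw [BoundedContinuousFunction.norm_le hμ.le]
    rintro ⟨t, ht⟩
    rw [hv_app t ht]
    exact hvb ⟨t, ht⟩
  have huv : ∀ s, ∀ hs : (0:ℝ) < s, uOf hv s = v s := by
    intro s hs
    rw [uOf_pos hv s hs, hv_app s hs, smul_smul, ← Real.rpow_add hs, neg_add_cancel,
      Real.rpow_zero, one_smul]
  have hfixv : T hv = hv := by
    apply BoundedContinuousFunction.ext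
    rintro ⟨t, ht⟩
    have ht0 : (0:ℝ) < t := ht
    rw [hT hv t ht0, hv_app t ht0]
    have e : (∫ s in (0:ℝ)..t, R (t - s) (f (uOf hv s)))
        = ∫ s in (0:ℝ)..t, R (t - s) (f (v s)) := by
      rw [intervalIntegral.integral_of_le ht0.le, intervalIntegral.integral_of_le ht0.le]
      apply setIntegral_congr_fun measurableSet_Ioc
      intro s hs
      show R (t - s) (f (uOf hv s)) = R (t - s) (f (v s))
      rw [huv s hs.1]
    rw [e, (hveq t ht).2]
  have hveqstar : hv = hstar := by
    have h1 := hcontr hv hstar hvnorm hstarn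
    rw [hfixv, hfix'] at h1
    have h2 : dist hv hstar = 0 := by
      have := dist_nonneg (x := hv) (y := hstar)
      linarith
    exact eq_of_dist_eq_zero h2
  intro t ht
  have ht0 : (0:ℝ) < t := ht
  rw [← huv t ht0, hveqstar]
end
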